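/- arXiv:2009.06562 — 8 statements merged into one kernel-verified Lean document; each statement's English description precedes it below -/
import Mathlib

section
/- Let f : ℝ^d → ℝ be differentiable and L̃-smooth with L̃ > 0, let r : ℝ^d → ℝ, and set F = f + r. Let 0 < η < 1/(2L̃), let x, g ∈ ℝ^d, and suppose x₊ minimizes y ↦ r(y) + ⟨g, y − x⟩ + (1/(2η))‖y − x‖² over ℝ^d. Then ‖x₊ − x‖² ≤ (2η/(1 − 2L̃η))·(F(x) − F(x₊)) + (η/(L̃ − 2L̃²η))·‖g − ∇f(x)‖². -/
open InnerProductSpace intervalIntegral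

lemma descent_lemma {d : ℕ} (f : EuclideanSpace ℝ (Fin d) → ℝ) (hf : Differentiable ℝ f)
    (Lt : ℝ) (hLt : 0 ≤ Lt)
    (hsmooth : ∀ x₁ x₂ : EuclideanSpace ℝ (Fin d),
      ‖gradient f x₁ - gradient f x₂‖ ≤ Lt * ‖x₁ - x₂‖)
    (x y : EuclideanSpace ℝ (Fin d)) :
    f y ≤ f x + (inner ℝ (gradient f x) (y - x) : ℝ) + Lt / 2 * ‖y - x‖ ^ 2 := by
  set v := y - x with hv
  -- continuity of gradient
  have hgl : LipschitzWith (Real.toNNReal Lt) (gradient f) := by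
    apply LipschitzWith.of_dist_le_mul
    intro a b
    rw [dist_eq_norm, dist_eq_norm]
    simpa [Real.coe_toNNReal _ hLt] using hsmooth a b
  have hgc : Continuous (gradient f) := hgl.continuous
  have hline : ∀ t : ℝ, HasDerivAt (fun t : ℝ => x + t • v) v t := by
    intro t
    simpa using ((hasDerivAt_id t).smul_const v).const_add x
  have hderiv : ∀ t : ℝ, HasDerivAt (fun t : ℝ => f (x + t • v))
      ((inner ℝ (gradient f (x + t • v)) v : ℝ)) t := by
    intro t
    have h1 : HasFDerivAt f (fderiv ℝ f (x + t • v)) (x + t • v) :=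
      (hf (x + t • v)).hasFDerivAt
    have h2 := h1.comp_hasDerivAt t (hline t)
    have h3 : fderiv ℝ f (x + t • v) v = (inner ℝ (gradient f (x + t • v)) v : ℝ) := by
      have := ((hf (x + t • v)).hasGradientAt).hasFDerivAt
      rw [this.fderiv]
      simp [toDual_apply_apply]
    rw [h3] at h2; exact h2
  have hcont : Continuous fun t : ℝ => (inner ℝ (gradient f (x + t • v)) v : ℝ) := by
    exact (hgc.comp (continuous_const.add (continuous_id.smul continuous_const))).inner continuous_const
  have hftc : (∫ t in (0:ℝ)..1, (inner ℝ (gradient f (x + t • v)) v : ℝ))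
      = f (x + (1:ℝ) • v) - f (x + (0:ℝ) • v) := by
    exact integral_eq_sub_of_hasDerivAt (fun t _ => hderiv t)
      (hcont.intervalIntegrable 0 1)
  have hxy : x + (1:ℝ) • v = y := by rw [hv]; abel_nf; module
  have hx0 : x + (0:ℝ) • v = x := by simp
  rw [hxy, hx0] at hftc
  have hbound : ∀ t ∈ Set.Icc (0:ℝ) 1,
      (inner ℝ (gradient f (x + t • v)) v : ℝ)
        ≤ (inner ℝ (gradient f x) v : ℝ) + Lt * t * ‖v‖ ^ 2 := by
    intro t ht
    have h1 : (inner ℝ (gradient f (x + t • v)) v : ℝ) - (inner ℝ (gradient f x) v : ℝ)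
        = (inner ℝ (gradient f (x + t • v) - gradient f x) v : ℝ) := by
      rw [inner_sub_left]
    have h2 : (inner ℝ (gradient f (x + t • v) - gradient f x) v : ℝ)
        ≤ ‖gradient f (x + t • v) - gradient f x‖ * ‖v‖ := real_inner_le_norm _ _
    have h3 : ‖gradient f (x + t • v) - gradient f x‖ ≤ Lt * (t * ‖v‖) := by
      have := hsmooth (x + t • v) x
      simpa [norm_smul, abs_of_nonneg ht.1] using this
    nlinarith [norm_nonneg v, norm_nonneg (gradient f (x + t • v) - gradient f x),
      mul_le_mul_of_nonneg_right h3 (norm_nonneg v)]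
  have hint : (∫ t in (0:ℝ)..1, (inner ℝ (gradient f (x + t • v)) v : ℝ))
      ≤ ∫ t in (0:ℝ)..1, ((inner ℝ (gradient f x) v : ℝ) + Lt * t * ‖v‖ ^ 2) := by
    apply integral_mono_on (by norm_num) (hcont.intervalIntegrable 0 1)
      ((continuous_const.add ((continuous_const.mul continuous_id).mul
        continuous_const)).intervalIntegrable 0 1)
    exact hbound
  have hrhs : (∫ t in (0:ℝ)..1, ((inner ℝ (gradient f x) v : ℝ) + Lt * t * ‖v‖ ^ 2))
      = (inner ℝ (gradient f x) v : ℝ) + Lt / 2 * ‖v‖ ^ 2 := by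
    have i1 : IntervalIntegrable (fun _ : ℝ => (inner ℝ (gradient f x) v : ℝ))
        MeasureTheory.volume 0 1 := (continuous_const.intervalIntegrable 0 1)
    have i2 : IntervalIntegrable (fun t : ℝ => Lt * t * ‖v‖ ^ 2)
        MeasureTheory.volume 0 1 :=
      (((continuous_const.mul continuous_id).mul continuous_const).intervalIntegrable 0 1)
    rw [integral_add i1 i2]
    simp only [integral_const, smul_eq_mul]
    have : (∫ t in (0:ℝ)..1, Lt * t * ‖v‖ ^ 2)
        = Lt * ‖v‖ ^ 2 * ∫ t in (0:ℝ)..1, t := by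
      rw [← integral_const_mul]
      congr 1; ext t; ring
    rw [this, integral_id]
    ring
  rw [hftc, hrhs] at hint
  linarith
/-- Lemma 4.1, distance bound. Let `f` be differentiable and `L̃`-smooth
(`L̃ > 0`), `F = f + r`, `0 < η < 1/(2L̃)`, and let `x₊ = prox_{ηr}(x − ηg)`, i.e. `x₊`
minimizes `y ↦ r y + ⟪g, y − x⟫ + (1/(2η))‖y − x‖²`. Then
`‖x₊ − x‖² ≤ (2η/(1 − 2L̃η))(F(x) − F(x₊)) + (η/(L̃ − 2L̃²η))‖g − ∇f(x)‖²`. -/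
theorem prox_update_distance_bound {d : ℕ}
    (f : EuclideanSpace ℝ (Fin d) → ℝ) (hf : Differentiable ℝ f)
    (Lt : ℝ) (hLt : 0 < Lt)
    (hsmooth : ∀ x₁ x₂ : EuclideanSpace ℝ (Fin d),
      ‖gradient f x₁ - gradient f x₂‖ ≤ Lt * ‖x₁ - x₂‖)
    (r : EuclideanSpace ℝ (Fin d) → ℝ)
    (F : EuclideanSpace ℝ (Fin d) → ℝ) (hF : F = fun x => f x + r x)
    (η : ℝ) (hη0 : 0 < η) (hη1 : η < 1 / (2 * Lt))
    (x g xplus : EuclideanSpace ℝ (Fin d))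
    (hmin : ∀ y : EuclideanSpace ℝ (Fin d),
      r xplus + (inner ℝ g (xplus - x) : ℝ) + (1 / (2 * η)) * ‖xplus - x‖ ^ 2
        ≤ r y + (inner ℝ g (y - x) : ℝ) + (1 / (2 * η)) * ‖y - x‖ ^ 2) :
    ‖xplus - x‖ ^ 2
      ≤ (2 * η / (1 - 2 * Lt * η)) * (F x - F xplus)
        + (η / (Lt - 2 * Lt ^ 2 * η)) * ‖g - gradient f x‖ ^ 2 := by
  have hmx := hmin x
  simp only [sub_self, inner_zero_right, norm_zero] at hmx
  -- hmx : r xplus + ⟪g, xplus - x⟫ + (1/(2η)) ‖xplus - x‖² ≤ r x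
  have hdesc := descent_lemma f hf Lt hLt.le hsmooth x xplus
  set D := ‖xplus - x‖ ^ 2 with hD
  set e := ‖g - gradient f x‖ with he
  have hD0 : 0 ≤ D := sq_nonneg _
  have he0 : 0 ≤ e := norm_nonneg _
  -- cross term bound
  have hcross : (inner ℝ (gradient f x) (xplus - x) : ℝ) - (inner ℝ g (xplus - x) : ℝ)
      ≤ e * ‖xplus - x‖ := by
    have h1 : (inner ℝ (gradient f x) (xplus - x) : ℝ) - (inner ℝ g (xplus - x) : ℝ)
        = (inner ℝ (gradient f x - g) (xplus - x) : ℝ) := by rw [inner_sub_left]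
    have h2 : (inner ℝ (gradient f x - g) (xplus - x) : ℝ)
        ≤ ‖gradient f x - g‖ * ‖xplus - x‖ := real_inner_le_norm _ _
    rw [h1, he, norm_sub_rev]
    exact h2
  have hyoung : e * ‖xplus - x‖ ≤ e ^ 2 / (2 * Lt) + Lt / 2 * D := by
    have hn := sq_nonneg (e - Lt * ‖xplus - x‖)
    have h1 : e * ‖xplus - x‖ ≤ (e ^ 2 + Lt ^ 2 * ‖xplus - x‖ ^ 2) / (2 * Lt) := by
      rw [le_div_iff₀ (by positivity : (0:ℝ) < 2 * Lt)]
      nlinarith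
    have h2 : (e ^ 2 + Lt ^ 2 * ‖xplus - x‖ ^ 2) / (2 * Lt)
        = e ^ 2 / (2 * Lt) + Lt / 2 * D := by
      rw [hD]; field_simp
    linarith [h1, h2.symm.le]
  have hc : 0 < 1 - 2 * Lt * η := by
    rw [lt_div_iff₀ (by positivity : (0:ℝ) < 2 * Lt)] at hη1
    nlinarith
  have hkey : (1 - 2 * Lt * η) / (2 * η) * D ≤ (F x - F xplus) + e ^ 2 / (2 * Lt) := by
    have hFx : F x = f x + r x := by rw [hF]
    have hFp : F xplus = f xplus + r xplus := by rw [hF]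
    have expand : (1 - 2 * Lt * η) / (2 * η) = 1 / (2 * η) - Lt := by
      field_simp
    rw [expand]
    nlinarith [hmx, hdesc, hcross, hyoung]
  set T := (2 * η / (1 - 2 * Lt * η)) * (F x - F xplus)
      + (η / (Lt - 2 * Lt ^ 2 * η)) * e ^ 2 with hT
  have hcT : (1 - 2 * Lt * η) / (2 * η) * T = (F x - F xplus) + e ^ 2 / (2 * Lt) := by
    rw [hT]
    have : Lt - 2 * Lt ^ 2 * η = Lt * (1 - 2 * Lt * η) := by ring
    rw [this]
    field_simp
  have hcpos : 0 < (1 - 2 * Lt * η) / (2 * η) := by positivity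
  have : (1 - 2 * Lt * η) / (2 * η) * D ≤ (1 - 2 * Lt * η) / (2 * η) * T := by
    rw [hcT]; exact hkey
  exact le_of_mul_le_mul_left this hcpos
end

section
/- (Convergence of ProxSGD-AS) Let F = f + r where f = (1/n)∑_{i=1}^n f_i, each f_i : ℝ^d → ℝ differentiable with L_i-Lipschitz gradient, L̃ = (1/n)∑_{i=1}^n L_i > 0, r : ℝ^d → ℝ, and suppose F attains a finite infimum F(x*). On a probability space with a filtration (F_t), let x_1 ∈ ℝ^d be deterministic and for t = 1,…,T let g_t be a square-integrable random vector with x_t F_t-measurable and E[g_t | F_t] = ∇f(x_t) almost surely, and let x_{t+1} minimize y ↦ r(y) + ⟨g_t, y − x_t⟩ + (1/(2η))‖y − x_t‖² over ℝ^d. If 0 < η < 1/(2L̃), then (1/T)∑_{t=1}^T E[dist(0, ∂̂F(x_{t+1}))²] ≤ (C₁/T)∑_{t=1}^T E[‖∇f(x_t) − g_t‖²] + (C₂/T)·(F(x_1) − F(x*)), where C₁ = (1 + 4L̃η − 2L̃²η²)/(L̃η − 2L̃²η²) and C₂ = (2 + 4L̃η + 4L̃²η²)/(η − 2L̃η²).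 -/
open MeasureTheory Filter Finset

open InnerProductSpace

local notation "⟪" a ", " b "⟫" => @inner ℝ _ _ a b

section Aux

lemma telescope_sum {M : Type*} [AddCommGroup M] (φ : ℕ → M) (k : ℕ) :
    ∑ s ∈ Finset.Icc 1 k, (φ s - φ (s + 1)) = φ 1 - φ (k + 1) := by
  induction k with
  | zero => simp
  | succ k ih =>
    rw [Finset.sum_Icc_succ_top (by omega : 1 ≤ k + 1), ih]
    abel

variable {E : Type*} [NormedAddCommGroup E] [InnerProductSpace ℝ E] [CompleteSpace E]

lemma line_hasDerivAt (f : E → ℝ) (hf : Differentiable ℝ f) (x v : E) (s : ℝ) :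
    HasDerivAt (fun s : ℝ => f (x + s • v)) ⟪gradient f (x + s • v), v⟫ s := by
  have h1 : HasDerivAt (fun s : ℝ => x + s • v) v s := by
    simpa using ((hasDerivAt_id s).smul_const v).const_add x
  have h2 := (hf (x + s • v)).hasGradientAt.hasFDerivAt
  have h3 := h2.comp_hasDerivAt s h1
  simpa [InnerProductSpace.toDual_apply_apply, Function.comp_def] using h3

lemma descent_lemma_s3 (f : E → ℝ) (hf : Differentiable ℝ f) (L : ℝ)
    (hlip : ∀ p q, ‖gradient f p - gradient f q‖ ≤ L * ‖p - q‖) (x y : E) :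
    f y ≤ f x + ⟪gradient f x, y - x⟫ + L / 2 * ‖y - x‖ ^ 2 := by
  set v := y - x with hv
  set φ : ℝ → ℝ := fun s => f (x + s • v) - s * ⟪gradient f x, v⟫ - s ^ 2 * (L / 2 * ‖v‖ ^ 2)
    with hφ
  have hφ' : ∀ s : ℝ, HasDerivAt φ
      (⟪gradient f (x + s • v), v⟫ - ⟪gradient f x, v⟫ - (2 * s) * (L / 2 * ‖v‖ ^ 2)) s := by
    intro s
    have h1 := line_hasDerivAt f hf x v s
    have h2 : HasDerivAt (fun s : ℝ => s * ⟪gradient f x, v⟫) ⟪gradient f x, v⟫ s :=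
      hasDerivAt_mul_const _
    have h3 : HasDerivAt (fun s : ℝ => s ^ 2 * (L / 2 * ‖v‖ ^ 2))
        ((2 * s ^ 1) * (L / 2 * ‖v‖ ^ 2)) s := (hasDerivAt_pow 2 s).mul_const _
    simpa [hφ, Pi.sub_def] using (h1.sub h2).sub h3
  have hmono : AntitoneOn φ (Set.Icc (0:ℝ) 1) := by
    apply antitoneOn_of_deriv_nonpos (convex_Icc 0 1)
    · exact (Differentiable.continuous (fun s => (hφ' s).differentiableAt)).continuousOn
    · intro s _
      exact (hφ' s).differentiableAt.differentiableWithinAt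
    · intro s hs
      rw [interior_Icc] at hs
      rw [(hφ' s).deriv]
      have h4 : ⟪gradient f (x + s • v) - gradient f x, v⟫
          ≤ ‖gradient f (x + s • v) - gradient f x‖ * ‖v‖ := real_inner_le_norm _ _
      have h5 : ‖gradient f (x + s • v) - gradient f x‖ ≤ L * (s * ‖v‖) := by
        have := hlip (x + s • v) x
        simpa [norm_smul, abs_of_pos hs.1, mul_assoc] using this
      have h6 : ⟪gradient f (x + s • v) - gradient f x, v⟫
          = ⟪gradient f (x + s • v), v⟫ - ⟪gradient f x, v⟫ := inner_sub_left _ _ _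
      have h7 : ‖gradient f (x + s • v) - gradient f x‖ * ‖v‖ ≤ L * (s * ‖v‖) * ‖v‖ :=
        mul_le_mul_of_nonneg_right h5 (norm_nonneg _)
      have h8 : (0:ℝ) ≤ ‖v‖ := norm_nonneg _
      nlinarith [sq_nonneg ‖v‖]
  have h01 := hmono (Set.mem_Icc.mpr ⟨le_refl 0, zero_le_one⟩)
    (Set.mem_Icc.mpr ⟨zero_le_one, le_refl 1⟩) zero_le_one
  have e0 : φ 0 = f x := by simp [hφ]
  have e1 : φ 1 = f y - ⟪gradient f x, v⟫ - L / 2 * ‖v‖ ^ 2 := by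
    simp [hφ, hv]
  rw [e0, e1] at h01
  linarith
lemma gradient_avg {n : ℕ} (f : Fin n → E → ℝ) (hdiff : ∀ i, Differentiable ℝ (f i))
    (c : ℝ) (p : E) :
    HasGradientAt (fun x => c * ∑ i, f i x) (c • ∑ i, gradient (f i) p) p := by
  have h1 : HasFDerivAt (fun x => ∑ i, f i x) (∑ i, fderiv ℝ (f i) p) p :=
    HasFDerivAt.fun_sum (fun i _ => (hdiff i p).hasFDerivAt)
  have h2 := h1.const_mul c
  have h3 := h2.hasGradientAt
  have h4 : (toDual ℝ E).symm (c • ∑ i, fderiv ℝ (f i) p) = c • ∑ i, gradient (f i) p := by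
    simp [gradient, _root_.map_smul, _root_.map_sum]
  rwa [h4] at h3
end Aux


/-- The Fréchet subdifferential of `F` at `x`. -/
noncomputable def frechetSubdiff {E : Type*} [NormedAddCommGroup E] [InnerProductSpace ℝ E]
    (F : E → ℝ) (x : E) : Set E :=
  {v | 0 ≤ liminf (fun y => (F y - F x - (inner ℝ v (y - x) : ℝ)) / ‖y - x‖)
        (nhdsWithin x {x}ᶜ)}

section Aux2

lemma liminf_nonneg_aux {α : Type*} {l : Filter α} {u m : α → ℝ}
    (hminor : ∀ᶠ y in l, m y ≤ u y) (hm : Tendsto m l (nhds 0)) : 0 ≤ liminf u l := by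
  rw [Filter.liminf_eq]
  set S := {a : ℝ | ∀ᶠ n in l, a ≤ u n} with hS
  have hmem : ∀ ε : ℝ, 0 < ε → -ε ∈ S := by
    intro ε hε
    have h1 : ∀ᶠ z in nhds (0:ℝ), -ε ≤ z := eventually_ge_nhds (by linarith)
    filter_upwards [hm.eventually h1, hminor] with y h2 h3
    linarith
  by_cases hb : BddAbove S
  · by_contra h0
    push_neg at h0
    have h1 := le_csSup hb (hmem (-(sSup S) / 2) (by linarith))
    linarith
  · rw [Real.sSup_of_not_bddAbove hb]
variable {E : Type*} [NormedAddCommGroup E] [InnerProductSpace ℝ E] [CompleteSpace E]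

lemma mem_frechetSubdiff_step (favg r : E → ℝ) (hfd : Differentiable ℝ favg)
    (gv xo xn : E) (η : ℝ) (hη : 0 < η)
    (hup : ∀ y, r xn + ⟪gv, xn - xo⟫ + 1 / (2 * η) * ‖xn - xo‖ ^ 2
            ≤ r y + ⟪gv, y - xo⟫ + 1 / (2 * η) * ‖y - xo‖ ^ 2) :
    gradient favg xn - gv - (1 / η) • (xn - xo)
      ∈ frechetSubdiff (fun z => favg z + r z) xn := by
  set v := gradient favg xn - gv - (1 / η) • (xn - xo) with hv
  simp only [frechetSubdiff, Set.mem_setOf_eq]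
  apply liminf_nonneg_aux (m := fun y =>
    -(‖y - xn‖⁻¹ * ‖favg y - favg xn - ⟪gradient favg xn, y - xn⟫‖) - ‖y - xn‖ * (1 / (2 * η)))
  · filter_upwards [eventually_mem_nhdsWithin] with y hy
    have hyne : y ≠ xn := hy
    have hw : (0:ℝ) < ‖y - xn‖ := by
      rw [norm_pos_iff, sub_ne_zero]; exact hyne
    -- main pointwise inequality
    have key : favg y + r y - (favg xn + r xn) - ⟪v, y - xn⟫
        ≥ (favg y - favg xn - ⟪gradient favg xn, y - xn⟫) - ‖y - xn‖ ^ 2 * (1 / (2 * η)) := by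
      have h1 := hup y
      have e1 : ⟪v, y - xn⟫ = ⟪gradient favg xn, y - xn⟫ - ⟪gv, y - xn⟫
          - (1 / η) * ⟪xn - xo, y - xn⟫ := by
        rw [hv, inner_sub_left, inner_sub_left, real_inner_smul_left]
      have e2 : y - xo = (y - xn) + (xn - xo) := by abel
      have e3 : ‖y - xo‖ ^ 2 = ‖y - xn‖ ^ 2 + 2 * ⟪y - xn, xn - xo⟫ + ‖xn - xo‖ ^ 2 := by
        rw [e2, norm_add_sq_real]
      have e4 : ⟪gv, y - xo⟫ = ⟪gv, y - xn⟫ + ⟪gv, xn - xo⟫ := by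
        rw [e2, inner_add_right]
      have e5 : ⟪xn - xo, y - xn⟫ = ⟪y - xn, xn - xo⟫ := real_inner_comm _ _
      have hη' : (0:ℝ) < 2 * η := by linarith
      rw [e1, e5]
      rw [e3, e4] at h1
      have expand : 1 / (2 * η) * (‖y - xn‖ ^ 2 + 2 * ⟪y - xn, xn - xo⟫ + ‖xn - xo‖ ^ 2)
          = 1 / (2 * η) * ‖y - xn‖ ^ 2 + 1 / (2 * η) * (2 * ⟪y - xn, xn - xo⟫)
            + 1 / (2 * η) * ‖xn - xo‖ ^ 2 := by ring
      have hdiv : 1 / (2 * η) * (2 * ⟪y - xn, xn - xo⟫) = (1 / η) * ⟪y - xn, xn - xo⟫ := by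
        field_simp
      have hdiv2 : ‖y - xn‖ ^ 2 * (1 / (2 * η)) = 1 / (2 * η) * ‖y - xn‖ ^ 2 := by ring
      nlinarith [h1]
    -- divide by the norm
    set R := favg y - favg xn - ⟪gradient favg xn, y - xn⟫ with hR
    have h2 : (R - ‖y - xn‖ ^ 2 * (1 / (2 * η))) / ‖y - xn‖
        ≤ (favg y + r y - (favg xn + r xn) - ⟪v, y - xn⟫) / ‖y - xn‖ :=
      (div_le_div_iff_of_pos_right hw).mpr key
    have h3 : (R - ‖y - xn‖ ^ 2 * (1 / (2 * η))) / ‖y - xn‖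
        = R / ‖y - xn‖ - ‖y - xn‖ * (1 / (2 * η)) := by
      field_simp
    have h4 : -(‖y - xn‖⁻¹ * ‖R‖) ≤ R / ‖y - xn‖ := by
      rw [div_eq_inv_mul]
      have : -‖R‖ ≤ R := by
        rw [Real.norm_eq_abs]; exact neg_abs_le R
      nlinarith [inv_pos.mpr hw]
    calc -(‖y - xn‖⁻¹ * ‖R‖) - ‖y - xn‖ * (1 / (2 * η))
        ≤ R / ‖y - xn‖ - ‖y - xn‖ * (1 / (2 * η)) := by linarith
      _ = (R - ‖y - xn‖ ^ 2 * (1 / (2 * η))) / ‖y - xn‖ := h3.symm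
      _ ≤ _ := h2
  · have T1 : Tendsto (fun y => ‖y - xn‖⁻¹ *
        ‖favg y - favg xn - ⟪gradient favg xn, y - xn⟫‖) (nhds xn) (nhds 0) :=
      hasGradientAt_iff_tendsto.mp (hfd xn).hasGradientAt
    have T2 : Tendsto (fun y : E => ‖y - xn‖ * (1 / (2 * η))) (nhds xn) (nhds 0) := by
      have h : Continuous (fun y : E => ‖y - xn‖) :=
        (continuous_id.sub continuous_const).norm
      have := h.tendsto xn
      simp only [sub_self, norm_zero] at this
      simpa using this.mul_const (1 / (2 * η))
    have := (T1.neg.sub T2).mono_left (nhdsWithin_le_nhds (s := {xn}ᶜ))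
    simpa using this
lemma integral_le_of_nonneg_of_le {Ω : Type*} [MeasurableSpace Ω] {μ : Measure Ω}
    {f g : Ω → ℝ} (hg : Integrable g μ) (h0 : ∀ ω, 0 ≤ f ω) (h : ∀ ω, f ω ≤ g ω) :
    ∫ ω, f ω ∂μ ≤ ∫ ω, g ω ∂μ := by
  by_cases hf : Integrable f μ
  · exact integral_mono hf hg h
  · rw [integral_undef hf]
    exact integral_nonneg (fun ω => le_trans (h0 ω) (h ω))

end Aux2

set_option maxHeartbeats 2000000 in
/-- Theorem 4.2, convergence of ProxSGD-AS. `F = f + r`, with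
`f = (1/n)∑ᵢ fᵢ`, each `fᵢ` differentiable with `Lᵢ`-Lipschitz gradient,
`L̃ = (1/n)∑ᵢ Lᵢ > 0`, and `F` attaining a finite infimum `F(x*)`. On a probability space
with a filtration `𝓕ₜ`, the iterates satisfy: `x₁` deterministic; for `t = 1,…,T`, `gₜ` is a
square-integrable random vector with `xₜ` `𝓕ₜ`-measurable and `E[gₜ | 𝓕ₜ] = ∇f(xₜ)` a.s.;
and `x_{t+1}` minimizes `y ↦ r y + ⟪gₜ, y − xₜ⟫ + (1/(2η))‖y − xₜ‖²`. If `0 < η < 1/(2L̃)`,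
then the averaged expected squared subgradient distance is bounded by
`(C₁/T)∑ₜ E‖∇f(xₜ) − gₜ‖² + (C₂/T)(F(x₁) − F(x*))`. -/
theorem proxSGD_AS_convergence {d n : ℕ} (hn : 0 < n)
    {Ω : Type*} [m0 : MeasurableSpace Ω] (μ : Measure Ω) [IsProbabilityMeasure μ]
    (f : Fin n → EuclideanSpace ℝ (Fin d) → ℝ) (L : Fin n → ℝ)
    (hdiff : ∀ i, Differentiable ℝ (f i))
    (hlip : ∀ i, ∀ x₁ x₂ : EuclideanSpace ℝ (Fin d),
      ‖gradient (f i) x₁ - gradient (f i) x₂‖ ≤ L i * ‖x₁ - x₂‖)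
    (favg : EuclideanSpace ℝ (Fin d) → ℝ)
    (hfavg : favg = fun x => (1 / (n : ℝ)) * ∑ i, f i x)
    (Lt : ℝ) (hLt : Lt = (1 / (n : ℝ)) * ∑ i, L i) (hLtpos : 0 < Lt)
    (r : EuclideanSpace ℝ (Fin d) → ℝ)
    (F : EuclideanSpace ℝ (Fin d) → ℝ) (hF : F = fun x => favg x + r x)
    (xstar : EuclideanSpace ℝ (Fin d)) (hxstar : ∀ y, F xstar ≤ F y)
    (𝓕 : ℕ → MeasurableSpace Ω) (h𝓕 : ∀ t, 𝓕 t ≤ m0)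
    (T : ℕ) (hT : 0 < T)
    (x g : ℕ → Ω → EuclideanSpace ℝ (Fin d))
    (x₁ : EuclideanSpace ℝ (Fin d)) (hx1 : ∀ ω, x 1 ω = x₁)
    (hxmeas : ∀ t ∈ Finset.Icc 1 T, StronglyMeasurable[𝓕 t] (x t))
    (hg2 : ∀ t ∈ Finset.Icc 1 T, MemLp (g t) 2 μ)
    (hunbiased : ∀ t ∈ Finset.Icc 1 T,
      μ[g t | 𝓕 t] =ᵐ[μ] fun ω => gradient favg (x t ω))
    (η : ℝ) (hη0 : 0 < η) (hη1 : η < 1 / (2 * Lt))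
    (hupdate : ∀ t ∈ Finset.Icc 1 T, ∀ ω, ∀ y : EuclideanSpace ℝ (Fin d),
      r (x (t + 1) ω) + (inner ℝ (g t ω) (x (t + 1) ω - x t ω) : ℝ)
          + (1 / (2 * η)) * ‖x (t + 1) ω - x t ω‖ ^ 2
        ≤ r y + (inner ℝ (g t ω) (y - x t ω) : ℝ) + (1 / (2 * η)) * ‖y - x t ω‖ ^ 2) :
    (1 / (T : ℝ)) * ∑ t ∈ Finset.Icc 1 T,
        ∫ ω, Metric.infDist 0 (frechetSubdiff F (x (t + 1) ω)) ^ 2 ∂μ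
      ≤ ((1 + 4 * Lt * η - 2 * Lt ^ 2 * η ^ 2) / (Lt * η - 2 * Lt ^ 2 * η ^ 2) / T) *
          ∑ t ∈ Finset.Icc 1 T, ∫ ω, ‖gradient favg (x t ω) - g t ω‖ ^ 2 ∂μ
        + ((2 + 4 * Lt * η + 4 * Lt ^ 2 * η ^ 2) / (η - 2 * Lt * η ^ 2) / T) *
            (F x₁ - F xstar) := by
  classical
  -- basic numeric facts
  have hηne : η ≠ 0 := ne_of_gt hη0
  have h2a : 2 * Lt * η < 1 := by
    rw [lt_div_iff₀ (by positivity)] at hη1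
    linarith
  have h1m2a : 0 < 1 - 2 * Lt * η := by linarith
  have hapos : 0 < Lt * η := by positivity
  -- gradient facts
  have hfd : Differentiable ℝ favg := by
    rw [hfavg]
    intro p
    exact (gradient_avg f hdiff (1 / (n:ℝ)) p).differentiableAt
  have hgradeq : ∀ p, gradient favg p = (1 / (n:ℝ)) • ∑ i, gradient (f i) p := by
    intro p
    have h1 := (gradient_avg f hdiff (1 / (n:ℝ)) p)
    rw [hfavg]
    exact h1.gradient
  have hGlip : ∀ p q, ‖gradient favg p - gradient favg q‖ ≤ Lt * ‖p - q‖ := by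
    intro p q
    rw [hgradeq, hgradeq, ← smul_sub, ← Finset.sum_sub_distrib]
    rw [norm_smul]
    have h1 : ‖∑ i, (gradient (f i) p - gradient (f i) q)‖
        ≤ ∑ i, (L i * ‖p - q‖) :=
      (norm_sum_le _ _).trans (Finset.sum_le_sum (fun i _ => hlip i p q))
    have h2 : ‖(1 / (n:ℝ))‖ = 1 / (n:ℝ) := by
      rw [Real.norm_eq_abs, abs_of_pos (by positivity)]
    rw [h2]
    calc 1 / (n:ℝ) * ‖∑ i, (gradient (f i) p - gradient (f i) q)‖
        ≤ 1 / (n:ℝ) * ∑ i, (L i * ‖p - q‖) := by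
          apply mul_le_mul_of_nonneg_left h1 (by positivity)
      _ = Lt * ‖p - q‖ := by
          rw [hLt, ← Finset.sum_mul]
          ring
  -- descent inequality (cleared form)
  have hdesc : ∀ t ∈ Finset.Icc 1 T, ∀ ω,
      2*η*(F (x (t+1) ω)) ≤ 2*η*(F (x t ω))
        + 2*η*⟪gradient favg (x t ω) - g t ω, x (t+1) ω - x t ω⟫
        + (Lt*η - 1) * ‖x (t+1) ω - x t ω‖^2 := by
    intro t ht ω
    have hsm := descent_lemma_s3 favg hfd Lt hGlip (x t ω) (x (t+1) ω)
    have hup := hupdate t ht ω (x t ω)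
    simp only [sub_self, inner_zero_right, norm_zero] at hup
    have hup2 : ‖x (t+1) ω - x t ω‖^2
        ≤ (r (x t ω) - r (x (t+1) ω)
            - ⟪g t ω, x (t+1) ω - x t ω⟫) * (2*η) := by
      have e0 : (1:ℝ)/(2*η) * ‖x (t+1) ω - x t ω‖^2 = ‖x (t+1) ω - x t ω‖^2 / (2*η) := by
        ring
      have h5 : ‖x (t+1) ω - x t ω‖^2 / (2*η)
          ≤ r (x t ω) - r (x (t+1) ω) - ⟪g t ω, x (t+1) ω - x t ω⟫ := by
        rw [← e0]
        nlinarith [hup]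
      exact (div_le_iff₀ (by positivity : (0:ℝ) < 2*η)).mp h5
    have hsm2 := mul_le_mul_of_nonneg_left hsm (by positivity : (0:ℝ) ≤ 2*η)
    have hinner : ⟪gradient favg (x t ω) - g t ω, x (t+1) ω - x t ω⟫
        = ⟪gradient favg (x t ω), x (t+1) ω - x t ω⟫
          - ⟪g t ω, x (t+1) ω - x t ω⟫ := inner_sub_left _ _ _
    simp only [hF]
    nlinarith [hsm2, hup2, hinner]
  -- step-size bound
  have hD1 : ∀ t ∈ Finset.Icc 1 T, ∀ ω,
      Lt*(1 - 2*Lt*η) * ‖x (t+1) ω - x t ω‖^2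
        ≤ 2*η*Lt*(F (x t ω) - F (x (t+1) ω))
          + η * ‖gradient favg (x t ω) - g t ω‖^2 := by
    intro t ht ω
    have h1 := hdesc t ht ω
    have hip : ⟪gradient favg (x t ω) - g t ω, x (t+1) ω - x t ω⟫
        ≤ ‖gradient favg (x t ω) - g t ω‖ * ‖x (t+1) ω - x t ω‖ := real_inner_le_norm _ _
    have h2 : 2*Lt*(‖gradient favg (x t ω) - g t ω‖ * ‖x (t+1) ω - x t ω‖)
        ≤ ‖gradient favg (x t ω) - g t ω‖^2 + Lt^2*‖x (t+1) ω - x t ω‖^2 := by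
      nlinarith [sq_nonneg (‖gradient favg (x t ω) - g t ω‖ - Lt*‖x (t+1) ω - x t ω‖)]
    nlinarith [mul_le_mul_of_nonneg_left h1 hLtpos.le,
      mul_le_mul_of_nonneg_left hip (by positivity : (0:ℝ) ≤ 2*η*Lt),
      mul_le_mul_of_nonneg_left h2 hη0.le]
  -- subgradient membership
  have hvmem : ∀ t ∈ Finset.Icc 1 T, ∀ ω,
      gradient favg (x (t+1) ω) - g t ω - (1/η) • (x (t+1) ω - x t ω)
        ∈ frechetSubdiff F (x (t+1) ω) := by
    intro t ht ω
    rw [hF]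
    exact mem_frechetSubdiff_step favg r hfd (g t ω) (x t ω) (x (t+1) ω) η hη0
      (fun y => hupdate t ht ω y)
  have hdt : ∀ t ∈ Finset.Icc 1 T, ∀ ω,
      Metric.infDist 0 (frechetSubdiff F (x (t+1) ω)) ^ 2
        ≤ ‖gradient favg (x (t+1) ω) - g t ω - (1/η) • (x (t+1) ω - x t ω)‖^2 := by
    intro t ht ω
    have h1 := Metric.infDist_le_dist_of_mem (x := (0 : EuclideanSpace ℝ (Fin d))) (hvmem t ht ω)
    rw [dist_zero_left] at h1
    exact pow_le_pow_left₀ Metric.infDist_nonneg h1 2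
  -- bound on the subgradient norm (cleared form)
  have hvb : ∀ t ∈ Finset.Icc 1 T, ∀ ω,
      η^2*(1-2*Lt*η) * ‖gradient favg (x (t+1) ω) - g t ω
          - (1/η) • (x (t+1) ω - x t ω)‖^2
        ≤ η^2*(5-2*Lt*η) * ‖gradient favg (x t ω) - g t ω‖^2
          + 2*η*(1 + Lt*η + 2*Lt^2*η^2) * (F (x t ω) - F (x (t+1) ω)) := by
    intro t ht ω
    have hv_eq : gradient favg (x (t+1) ω) - g t ω - (1/η) • (x (t+1) ω - x t ω)
        = ((gradient favg (x (t+1) ω) - gradient favg (x t ω))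
            + (gradient favg (x t ω) - g t ω)) - (1/η) • (x (t+1) ω - x t ω) := by
      abel
    set u := gradient favg (x (t+1) ω) - gradient favg (x t ω) with hu_def
    set e := gradient favg (x t ω) - g t ω with he_def
    set Δ := x (t+1) ω - x t ω with hΔ_def
    have hu : ‖u‖ ≤ Lt * ‖Δ‖ := hGlip (x (t+1) ω) (x t ω)
    have hexp0 : ‖(u + e) - (1/η) • Δ‖^2
        = ‖u + e‖^2 - 2*((1/η) * ⟪u + e, Δ⟫) + (1/η)^2 * ‖Δ‖^2 := by
      rw [norm_sub_sq_real, real_inner_smul_right, norm_smul]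
      rw [Real.norm_eq_abs, abs_of_pos (by positivity : (0:ℝ) < 1/η)]
      ring
    have hsplit : ⟪u + e, Δ⟫ = ⟪u, Δ⟫ + ⟪e, Δ⟫ := inner_add_left _ _ _
    have hexp : η^2*(1-2*Lt*η) * ‖(u + e) - (1/η) • Δ‖^2
        = (1-2*Lt*η)*(η^2*‖u + e‖^2) - (2*η*(1-2*Lt*η))*⟪u, Δ⟫
          - (1-2*Lt*η)*(2*η*⟪e, Δ⟫) + (1-2*Lt*η)*‖Δ‖^2 := by
      rw [hexp0, hsplit]
      field_simp
      ring
    have hce : ‖u + e‖^2 ≤ 2*Lt^2*‖Δ‖^2 + 2*‖e‖^2 := by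
      rw [norm_add_sq_real]
      nlinarith [real_inner_le_norm u e, hu, norm_nonneg u, norm_nonneg e, norm_nonneg Δ,
        sq_nonneg (Lt*‖Δ‖ - ‖e‖), mul_le_mul_of_nonneg_right hu (norm_nonneg e),
        mul_self_le_mul_self (norm_nonneg u) hu]
    have hiu : -⟪u, Δ⟫ ≤ Lt * ‖Δ‖^2 := by
      have h4 := real_inner_le_norm (-u) Δ
      rw [inner_neg_left, norm_neg] at h4
      nlinarith [mul_le_mul_of_nonneg_right hu (norm_nonneg Δ)]
    have hde := hdesc t ht ω
    have hC : -(2*η*⟪e, Δ⟫) ≤ 2*η*(F (x t ω) - F (x (t+1) ω)) + (Lt*η - 1)*‖Δ‖^2 := by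
      rw [← hΔ_def] at hde
      linarith [hde]
    have hD1t := hD1 t ht ω
    rw [← hΔ_def, ← he_def] at hD1t
    rw [hv_eq]
    nlinarith [hexp,
      mul_le_mul_of_nonneg_left hce (by positivity : (0:ℝ) ≤ η^2*(1-2*Lt*η)),
      mul_le_mul_of_nonneg_left hiu (by positivity : (0:ℝ) ≤ 2*η*(1-2*Lt*η)),
      mul_le_mul_of_nonneg_left hC (by nlinarith : (0:ℝ) ≤ 1-2*Lt*η),
      mul_le_mul_of_nonneg_left hD1t (by positivity : (0:ℝ) ≤ η*(2*Lt*η+3))]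
  -- optimality gap
  set Gp := F x₁ - F xstar with hGp
  have hGpnn : (0:ℝ) ≤ Gp := sub_nonneg.mpr (hxstar x₁)
  -- pointwise master bound (cleared form)
  have hmaster0 : ∀ ω,
      η^2*(1-2*Lt*η) * ∑ t ∈ Finset.Icc 1 T,
          Metric.infDist 0 (frechetSubdiff F (x (t+1) ω)) ^ 2
        ≤ η^2*(5-2*Lt*η) * ∑ t ∈ Finset.Icc 1 T, ‖gradient favg (x t ω) - g t ω‖^2
          + 2*η*(1 + Lt*η + 2*Lt^2*η^2) * Gp := by
    intro ω
    have hper : ∀ t ∈ Finset.Icc 1 T,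
        η^2*(1-2*Lt*η) * Metric.infDist 0 (frechetSubdiff F (x (t+1) ω)) ^ 2
          ≤ η^2*(5-2*Lt*η) * ‖gradient favg (x t ω) - g t ω‖^2
            + 2*η*(1 + Lt*η + 2*Lt^2*η^2) * (F (x t ω) - F (x (t+1) ω)) := by
      intro t ht
      have h2 := hvb t ht ω
      nlinarith [mul_le_mul_of_nonneg_left (hdt t ht ω)
        (by positivity : (0:ℝ) ≤ η^2*(1-2*Lt*η))]
    have hsum := Finset.sum_le_sum hper
    rw [← Finset.mul_sum] at hsum
    have hsplit2 : ∑ t ∈ Finset.Icc 1 T,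
          (η^2*(5-2*Lt*η) * ‖gradient favg (x t ω) - g t ω‖^2
            + 2*η*(1 + Lt*η + 2*Lt^2*η^2) * (F (x t ω) - F (x (t+1) ω)))
        = η^2*(5-2*Lt*η) * ∑ t ∈ Finset.Icc 1 T, ‖gradient favg (x t ω) - g t ω‖^2
          + 2*η*(1 + Lt*η + 2*Lt^2*η^2) * (F (x 1 ω) - F (x (T+1) ω)) := by
      rw [Finset.sum_add_distrib, ← Finset.mul_sum, ← Finset.mul_sum,
        telescope_sum (fun s => F (x s ω)) T]
    rw [hsplit2] at hsum
    have hlast : F (x 1 ω) - F (x (T+1) ω) ≤ Gp := by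
      rw [hx1 ω, hGp]
      linarith [hxstar (x (T+1) ω)]
    nlinarith [hsum, mul_le_mul_of_nonneg_left hlast
      (by positivity : (0:ℝ) ≤ 2*η*(1+Lt*η+2*Lt^2*η^2))]
  have haLt1 : Lt*η < 1 := by linarith
  -- pointwise master bound with the statement's constants
  have hmaster : ∀ ω,
      ∑ t ∈ Finset.Icc 1 T, Metric.infDist 0 (frechetSubdiff F (x (t+1) ω)) ^ 2
        ≤ (1 + 4*Lt*η - 2*Lt^2*η^2) / (Lt*η - 2*Lt^2*η^2)
            * ∑ t ∈ Finset.Icc 1 T, ‖gradient favg (x t ω) - g t ω‖^2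
          + (2 + 4*Lt*η + 4*Lt^2*η^2) / (η - 2*Lt*η^2) * Gp := by
    intro ω
    have h0 := hmaster0 ω
    have hXnn : (0:ℝ) ≤ ∑ t ∈ Finset.Icc 1 T, ‖gradient favg (x t ω) - g t ω‖^2 := by
      positivity
    have hc1 : η^2*(5-2*Lt*η)
        ≤ η^2*(1-2*Lt*η) * ((1 + 4*Lt*η - 2*Lt^2*η^2) / (Lt*η - 2*Lt^2*η^2)) := by
      rw [← mul_div_assoc, le_div_iff₀ (by nlinarith : (0:ℝ) < Lt*η - 2*Lt^2*η^2)]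
      nlinarith [mul_nonneg (mul_nonneg (sq_nonneg η) h1m2a.le)
        (by linarith : (0:ℝ) ≤ 1 - Lt*η)]
    have hc2 : 2*η*(1 + Lt*η + 2*Lt^2*η^2)
        ≤ η^2*(1-2*Lt*η) * ((2 + 4*Lt*η + 4*Lt^2*η^2) / (η - 2*Lt*η^2)) := by
      rw [← mul_div_assoc, le_div_iff₀ (by nlinarith : (0:ℝ) < η - 2*Lt*η^2)]
      nlinarith [mul_nonneg (mul_nonneg (sq_nonneg η) h1m2a.le) hapos.le]
    have hpos : (0:ℝ) < η^2*(1-2*Lt*η) := by positivity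
    rw [← mul_le_mul_iff_right₀ hpos]
    calc η^2*(1-2*Lt*η) * ∑ t ∈ Finset.Icc 1 T,
            Metric.infDist 0 (frechetSubdiff F (x (t+1) ω)) ^ 2
        ≤ η^2*(5-2*Lt*η) * ∑ t ∈ Finset.Icc 1 T, ‖gradient favg (x t ω) - g t ω‖^2
            + 2*η*(1 + Lt*η + 2*Lt^2*η^2) * Gp := h0
      _ ≤ η^2*(1-2*Lt*η) * ((1 + 4*Lt*η - 2*Lt^2*η^2) / (Lt*η - 2*Lt^2*η^2)
              * ∑ t ∈ Finset.Icc 1 T, ‖gradient favg (x t ω) - g t ω‖^2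
            + (2 + 4*Lt*η + 4*Lt^2*η^2) / (η - 2*Lt*η^2) * Gp) := by
          nlinarith [mul_le_mul_of_nonneg_right hc1 hXnn,
            mul_le_mul_of_nonneg_right hc2 hGpnn]
  -- measurability facts
  have hgradlip : LipschitzWith (Real.toNNReal Lt) (gradient favg) := by
    apply LipschitzWith.of_dist_le_mul
    intro p q
    rw [dist_eq_norm, dist_eq_norm]
    calc ‖gradient favg p - gradient favg q‖ ≤ Lt * ‖p - q‖ := hGlip p q
      _ = (Real.toNNReal Lt : ℝ) * ‖p - q‖ := by
          rw [Real.coe_toNNReal _ hLtpos.le]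
  have hgradcont : Continuous (gradient favg) := hgradlip.continuous
  have hxm : ∀ t ∈ Finset.Icc 1 T, AEStronglyMeasurable (x t) μ := fun t ht =>
    ((hxmeas t ht).mono (h𝓕 t)).aestronglyMeasurable
  -- pointwise bound on step norms
  have hδb : ∀ s ∈ Finset.Icc 1 T, ∀ ω,
      ‖x (s+1) ω - x s ω‖^2
        ≤ (2*η*Lt*Gp + η * ∑ s' ∈ Finset.Icc 1 s, ‖gradient favg (x s' ω) - g s' ω‖^2)
            / (Lt*(1-2*Lt*η)) := by
    intro s hs ω
    obtain ⟨hs1, hsT⟩ := Finset.mem_Icc.mp hs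
    rw [le_div_iff₀ (mul_pos hLtpos h1m2a)]
    have hsub : Finset.Icc 1 s ⊆ Finset.Icc 1 T := Finset.Icc_subset_Icc_right hsT
    have hsum : ∑ s' ∈ Finset.Icc 1 s, (Lt*(1-2*Lt*η) * ‖x (s'+1) ω - x s' ω‖^2)
        ≤ ∑ s' ∈ Finset.Icc 1 s, (2*η*Lt*(F (x s' ω) - F (x (s'+1) ω))
            + η * ‖gradient favg (x s' ω) - g s' ω‖^2) :=
      Finset.sum_le_sum (fun s' hs' => hD1 s' (hsub hs') ω)
    have htel2 : ∑ s' ∈ Finset.Icc 1 s, (F (x s' ω) - F (x (s'+1) ω))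
        = F (x 1 ω) - F (x (s+1) ω) := telescope_sum (fun k => F (x k ω)) s
    have hsingle : Lt*(1-2*Lt*η) * ‖x (s+1) ω - x s ω‖^2
        ≤ ∑ s' ∈ Finset.Icc 1 s, (Lt*(1-2*Lt*η) * ‖x (s'+1) ω - x s' ω‖^2) :=
      Finset.single_le_sum (f := fun s' => Lt*(1-2*Lt*η) * ‖x (s'+1) ω - x s' ω‖^2)
        (fun i _ => by positivity) (Finset.mem_Icc.mpr ⟨hs1, le_refl s⟩)
    have hlast : F (x 1 ω) - F (x (s+1) ω) ≤ Gp := by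
      rw [hx1 ω, hGp]
      linarith [hxstar (x (s+1) ω)]
    rw [Finset.sum_add_distrib, ← Finset.mul_sum, ← Finset.mul_sum, ← Finset.mul_sum, htel2] at hsum
    rw [← Finset.mul_sum] at hsingle
    nlinarith [hsum, hsingle,
      mul_le_mul_of_nonneg_left hlast (by positivity : (0:ℝ) ≤ 2*η*Lt)]
  -- integrability of the error squares
  have hepInt : ∀ t ∈ Finset.Icc 1 T,
      Integrable (fun ω => ‖gradient favg (x t ω) - g t ω‖^2) μ := by
    intro t
    induction t using Nat.strong_induction_on with
    | _ t IH =>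
      intro ht
      obtain ⟨ht1, htT⟩ := Finset.mem_Icc.mp ht
      have hMx : MemLp (fun ω => x t ω - x₁) 2 μ := by
        have hxeq : (fun ω => x t ω - x₁)
            = fun ω => ∑ s ∈ Finset.Icc 1 (t-1), (x (s+1) ω - x s ω) := by
          funext ω
          have h1 := telescope_sum (fun k => x k ω) (t-1)
          have ht' : t - 1 + 1 = t := by omega
          rw [ht', hx1 ω] at h1
          have h2 : ∑ s ∈ Finset.Icc 1 (t-1), (x (s+1) ω - x s ω)
              = -∑ s ∈ Finset.Icc 1 (t-1), (x s ω - x (s+1) ω) := by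
            rw [← Finset.sum_neg_distrib]
            exact Finset.sum_congr rfl (fun s _ => by abel)
          rw [h2, h1]
          abel
        rw [hxeq]
        apply memLp_finsetSum
        intro s hsm
        obtain ⟨hs1, hst⟩ := Finset.mem_Icc.mp hsm
        have hsI : s ∈ Finset.Icc 1 T := Finset.mem_Icc.mpr ⟨hs1, by omega⟩
        have hs1I : s + 1 ∈ Finset.Icc 1 T := Finset.mem_Icc.mpr ⟨by omega, by omega⟩
        have hmeas : AEStronglyMeasurable (fun ω => x (s+1) ω - x s ω) μ :=
          (hxm (s+1) hs1I).sub (hxm s hsI)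
        apply (memLp_two_iff_integrable_sq_norm hmeas).mpr
        have hbint : Integrable (fun ω =>
            (2*η*Lt*Gp + η * ∑ s' ∈ Finset.Icc 1 s,
              ‖gradient favg (x s' ω) - g s' ω‖^2) / (Lt*(1-2*Lt*η))) μ := by
          apply Integrable.div_const
          apply (integrable_const (2*η*Lt*Gp)).add
          apply Integrable.const_mul
          apply integrable_finset_sum
          intro s' hs'
          obtain ⟨hs'1, hs's⟩ := Finset.mem_Icc.mp hs'
          exact IH s' (by omega) (Finset.mem_Icc.mpr ⟨hs'1, by omega⟩)
        apply Integrable.mono' hbint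
        · have : (fun ω => ‖x (s+1) ω - x s ω‖^2)
              = fun ω => ‖x (s+1) ω - x s ω‖ * ‖x (s+1) ω - x s ω‖ := by
            funext ω; ring
          rw [this]
          exact hmeas.norm.mul hmeas.norm
        · filter_upwards with ω
          rw [Real.norm_eq_abs, abs_of_nonneg (by positivity)]
          exact hδb s hsI ω
      have hgm : AEStronglyMeasurable (fun ω => gradient favg (x t ω)) μ :=
        hgradcont.comp_aestronglyMeasurable (hxm t ht)
      have hmg : MemLp (fun ω => gradient favg (x t ω)) 2 μ := by
        have h1 : MemLp (fun ω => gradient favg (x t ω) - gradient favg x₁) 2 μ := by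
          apply MemLp.of_le_mul hMx (hgm.sub aestronglyMeasurable_const) (c := Lt)
          filter_upwards with ω
          exact hGlip (x t ω) x₁
        have h2 := h1.add (memLp_const (μ := μ) (p := 2) (gradient favg x₁))
        have h3 : ((fun ω => gradient favg (x t ω) - gradient favg x₁)
            + fun _ => gradient favg x₁) = fun ω => gradient favg (x t ω) := by
          funext ω
          simp
        rwa [h3] at h2
      have hme : MemLp (fun ω => gradient favg (x t ω) - g t ω) 2 μ :=
        hmg.sub (hg2 t ht)
      exact (memLp_two_iff_integrable_sq_norm hme.aestronglyMeasurable).mp hme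
  -- integral assembly
  have hbndInt : Integrable (fun ω =>
      (1 + 4*Lt*η - 2*Lt^2*η^2) / (Lt*η - 2*Lt^2*η^2)
          * (∑ t ∈ Finset.Icc 1 T, ‖gradient favg (x t ω) - g t ω‖^2)
        + (2 + 4*Lt*η + 4*Lt^2*η^2) / (η - 2*Lt*η^2) * Gp) μ :=
    ((integrable_finset_sum _ (fun t ht => hepInt t ht)).const_mul _).add (integrable_const _)
  set M := (Finset.Icc 1 T).filter (fun t => Integrable
    (fun ω => Metric.infDist 0 (frechetSubdiff F (x (t+1) ω)) ^ 2) μ) with hM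
  have hMsub : M ⊆ Finset.Icc 1 T := Finset.filter_subset _ _
  have h1 : ∑ t ∈ Finset.Icc 1 T,
        ∫ ω, Metric.infDist 0 (frechetSubdiff F (x (t+1) ω)) ^ 2 ∂μ
      = ∑ t ∈ M, ∫ ω, Metric.infDist 0 (frechetSubdiff F (x (t+1) ω)) ^ 2 ∂μ := by
    refine (Finset.sum_subset hMsub ?_).symm
    intro t htI htM
    apply integral_undef
    intro hint
    exact htM (Finset.mem_filter.mpr ⟨htI, hint⟩)
  have h2 : ∑ t ∈ M, ∫ ω, Metric.infDist 0 (frechetSubdiff F (x (t+1) ω)) ^ 2 ∂μ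
      = ∫ ω, ∑ t ∈ M, Metric.infDist 0 (frechetSubdiff F (x (t+1) ω)) ^ 2 ∂μ :=
    (integral_finset_sum M (fun t htM => (Finset.mem_filter.mp htM).2)).symm
  have h3 : ∫ ω, (∑ t ∈ M, Metric.infDist 0 (frechetSubdiff F (x (t+1) ω)) ^ 2) ∂μ
      ≤ ∫ ω, ((1 + 4*Lt*η - 2*Lt^2*η^2) / (Lt*η - 2*Lt^2*η^2)
          * (∑ t ∈ Finset.Icc 1 T, ‖gradient favg (x t ω) - g t ω‖^2)
        + (2 + 4*Lt*η + 4*Lt^2*η^2) / (η - 2*Lt*η^2) * Gp) ∂μ := by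
    apply integral_mono (integrable_finset_sum M
      (fun t htM => (Finset.mem_filter.mp htM).2)) hbndInt
    intro ω
    calc ∑ t ∈ M, Metric.infDist 0 (frechetSubdiff F (x (t+1) ω)) ^ 2
        ≤ ∑ t ∈ Finset.Icc 1 T, Metric.infDist 0 (frechetSubdiff F (x (t+1) ω)) ^ 2 :=
          Finset.sum_le_sum_of_subset_of_nonneg hMsub (fun t _ _ => by positivity)
      _ ≤ _ := hmaster ω
  have h4 : ∫ ω, ((1 + 4*Lt*η - 2*Lt^2*η^2) / (Lt*η - 2*Lt^2*η^2)
          * (∑ t ∈ Finset.Icc 1 T, ‖gradient favg (x t ω) - g t ω‖^2)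
        + (2 + 4*Lt*η + 4*Lt^2*η^2) / (η - 2*Lt*η^2) * Gp) ∂μ
      = (1 + 4*Lt*η - 2*Lt^2*η^2) / (Lt*η - 2*Lt^2*η^2)
          * ∑ t ∈ Finset.Icc 1 T, ∫ ω, ‖gradient favg (x t ω) - g t ω‖^2 ∂μ
        + (2 + 4*Lt*η + 4*Lt^2*η^2) / (η - 2*Lt*η^2) * Gp := by
    rw [integral_add ((integrable_finset_sum _ (fun t ht => hepInt t ht)).const_mul _)
      (integrable_const _), integral_const_mul, integral_finset_sum _ (fun t ht => hepInt t ht),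
      integral_const]
    simp [measure_univ]
  have hfin : ∑ t ∈ Finset.Icc 1 T,
        ∫ ω, Metric.infDist 0 (frechetSubdiff F (x (t+1) ω)) ^ 2 ∂μ
      ≤ (1 + 4*Lt*η - 2*Lt^2*η^2) / (Lt*η - 2*Lt^2*η^2)
          * ∑ t ∈ Finset.Icc 1 T, ∫ ω, ‖gradient favg (x t ω) - g t ω‖^2 ∂μ
        + (2 + 4*Lt*η + 4*Lt^2*η^2) / (η - 2*Lt*η^2) * Gp := by
    rw [h1, h2, ← h4]
    exact h3
  have hTpos : (0:ℝ) < T := by exact_mod_cast hT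
  calc (1/(T:ℝ)) * ∑ t ∈ Finset.Icc 1 T,
          ∫ ω, Metric.infDist 0 (frechetSubdiff F (x (t+1) ω)) ^ 2 ∂μ
      ≤ (1/(T:ℝ)) * ((1 + 4*Lt*η - 2*Lt^2*η^2) / (Lt*η - 2*Lt^2*η^2)
          * ∑ t ∈ Finset.Icc 1 T, ∫ ω, ‖gradient favg (x t ω) - g t ω‖^2 ∂μ
        + (2 + 4*Lt*η + 4*Lt^2*η^2) / (η - 2*Lt*η^2) * Gp) :=
        mul_le_mul_of_nonneg_left hfin (by positivity)
    _ = (1 + 4*Lt*η - 2*Lt^2*η^2) / (Lt*η - 2*Lt^2*η^2) / T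
          * ∑ t ∈ Finset.Icc 1 T, ∫ ω, ‖gradient favg (x t ω) - g t ω‖^2 ∂μ
        + (2 + 4*Lt*η + 4*Lt^2*η^2) / (η - 2*Lt*η^2) / T * Gp := by
        ring
end

section
/- (Variance bound for the SARAH estimator, Lemma 5.2) Under the ProxSARAH-AS process — where V_0^{(j)} = ∇f(x_0^{(j)}), x_1^{(j)} = x_0^{(j)}, V_t^{(j)} = ∑_{i∈S_t^{(j)}} (1/(n p_i))(∇f_i(x_t^{(j)}) − ∇f_i(x_{t−1}^{(j)})) + V_{t−1}^{(j)} with S_t^{(j)} drawn independently of the past with inclusion probabilities p_i > 0 and pairwise probabilities P_{ij} satisfying P − ppᵀ ⪯ Diag(p∘v), and each f_i differentiable with L_i-Lipschitz gradient — it holds for every 1 ≤ t ≤ m and every epoch j that E[‖V_t^{(j)} − ∇f(x_t^{(j)})‖²] ≤ Q·∑_{k=1}^t E[‖x_k^{(j)} − x_{k−1}^{(j)}‖²], where Q = ∑_{i=1}^n v_i L_i²/(p_i n²) and f = (1/n)∑_{i=1}^n f_i. -/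
open MeasureTheory Filter Finset

lemma aux_id1 {n : ℕ} (q : Finset (Fin n) → ℝ) (w : Fin n → ℝ) :
    ∑ A : Finset (Fin n), q A * ∑ i ∈ A, w i
      = ∑ i, (∑ A ∈ Finset.univ.filter (fun A : Finset (Fin n) => i ∈ A), q A) * w i := by
  have h1 : ∀ A : Finset (Fin n), q A * ∑ i ∈ A, w i
      = ∑ i, (if i ∈ A then q A * w i else 0) := by
    intro A
    rw [Finset.sum_ite_mem, Finset.univ_inter, Finset.mul_sum]
  simp_rw [h1]
  rw [Finset.sum_comm]
  refine Finset.sum_congr rfl fun i _ => ?_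
  rw [Finset.sum_filter, Finset.sum_mul]
  exact Finset.sum_congr rfl fun A _ => by split_ifs <;> simp

lemma aux_id2 {n : ℕ} (q : Finset (Fin n) → ℝ) (w : Fin n → ℝ) :
    ∑ A : Finset (Fin n), q A * (∑ i ∈ A, w i) ^ 2
      = ∑ i, ∑ k, (∑ A ∈ Finset.univ.filter
          (fun A : Finset (Fin n) => i ∈ A ∧ k ∈ A), q A) * (w i * w k) := by
  have h1 : ∀ A : Finset (Fin n), q A * (∑ i ∈ A, w i) ^ 2
      = ∑ i, ∑ k, (if i ∈ A ∧ k ∈ A then q A * (w i * w k) else 0) := by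
    intro A
    calc q A * (∑ i ∈ A, w i) ^ 2
        = ∑ i ∈ A, ∑ k ∈ A, q A * (w i * w k) := by
          rw [sq, Finset.sum_mul_sum, Finset.mul_sum]
          exact Finset.sum_congr rfl fun i _ => by rw [Finset.mul_sum]
      _ = ∑ i, (if i ∈ A then ∑ k ∈ A, q A * (w i * w k) else 0) := by
          rw [Finset.sum_ite_mem, Finset.univ_inter]
      _ = ∑ i, ∑ k, (if i ∈ A ∧ k ∈ A then q A * (w i * w k) else 0) := by
          refine Finset.sum_congr rfl fun i _ => ?_
          by_cases hi : i ∈ A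
          · simp only [hi, if_true, true_and]
            rw [Finset.sum_ite_mem, Finset.univ_inter]
          · simp [hi]
  simp_rw [h1]
  rw [Finset.sum_comm]
  refine Finset.sum_congr rfl fun i _ => ?_
  rw [Finset.sum_comm]
  refine Finset.sum_congr rfl fun k _ => ?_
  rw [Finset.sum_filter, Finset.sum_mul]
  exact Finset.sum_congr rfl fun A _ => by split_ifs <;> simp

lemma aux_scalar {n : ℕ}
    (q : Finset (Fin n) → ℝ)
    (p : Fin n → ℝ)
    (hpq : ∀ i, p i = ∑ A ∈ Finset.univ.filter (fun A : Finset (Fin n) => i ∈ A), q A)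
    (P : Fin n → Fin n → ℝ)
    (hPq : ∀ i j, P i j =
      ∑ A ∈ Finset.univ.filter (fun A : Finset (Fin n) => i ∈ A ∧ j ∈ A), q A)
    (v : Fin n → ℝ)
    (hsamp : ∀ u : Fin n → ℝ,
      ∑ i, ∑ j, (P i j - p i * p j) * u i * u j ≤ ∑ i, p i * v i * u i ^ 2)
    (hq1 : ∑ A : Finset (Fin n), q A = 1)
    (u : Fin n → ℝ) (e : ℝ) :
    ∑ A : Finset (Fin n), q A * (∑ i ∈ A, u i + e) ^ 2
      ≤ (∑ i, p i * u i + e) ^ 2 + ∑ i, p i * v i * u i ^ 2 := by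
  have expand : ∀ A : Finset (Fin n), q A * (∑ i ∈ A, u i + e) ^ 2
      = q A * (∑ i ∈ A, u i) ^ 2 + 2 * e * (q A * ∑ i ∈ A, u i) + q A * e ^ 2 := by
    intro A; ring
  simp_rw [expand]
  rw [Finset.sum_add_distrib, Finset.sum_add_distrib, ← Finset.mul_sum, ← Finset.sum_mul,
    aux_id1, aux_id2, hq1]
  have h2 : ∑ i, (∑ A ∈ Finset.univ.filter (fun A : Finset (Fin n) => i ∈ A), q A) * u i
      = ∑ i, p i * u i := by
    refine Finset.sum_congr rfl fun i _ => ?_; rw [← hpq]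
  rw [h2]
  have h3 : ∑ i, ∑ k, (∑ A ∈ Finset.univ.filter
        (fun A : Finset (Fin n) => i ∈ A ∧ k ∈ A), q A) * (u i * u k)
      = ∑ i, ∑ k, P i k * (u i * u k) := by
    refine Finset.sum_congr rfl fun i _ => Finset.sum_congr rfl fun k _ => ?_
    rw [← hPq]
  rw [h3]
  have key : ∑ i, ∑ k, P i k * (u i * u k) ≤ (∑ i, p i * u i) ^ 2 + ∑ i, p i * v i * u i ^ 2 := by
    have hs := hsamp u
    have hsq : (∑ i, p i * u i) ^ 2 = ∑ i, ∑ k, p i * p k * (u i * u k) := by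
      rw [sq, Finset.sum_mul_sum]
      refine Finset.sum_congr rfl fun i _ => Finset.sum_congr rfl fun k _ => by ring
    have : ∑ i, ∑ k, P i k * (u i * u k) - ∑ i, ∑ k, p i * p k * (u i * u k)
        = ∑ i, ∑ k, (P i k - p i * p k) * u i * u k := by
      rw [← Finset.sum_sub_distrib]
      refine Finset.sum_congr rfl fun i _ => ?_
      rw [← Finset.sum_sub_distrib]
      refine Finset.sum_congr rfl fun k _ => by ring
    nlinarith [hs, this, hsq]
  linarith

lemma aux_hv {n : ℕ}
    (q : Finset (Fin n) → ℝ) (hq0 : ∀ A, 0 ≤ q A) (hq1 : ∑ A : Finset (Fin n), q A = 1)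
    (p : Fin n → ℝ) (hppos : ∀ i, 0 < p i)
    (hpq : ∀ i, p i = ∑ A ∈ Finset.univ.filter (fun A : Finset (Fin n) => i ∈ A), q A)
    (P : Fin n → Fin n → ℝ)
    (hPq : ∀ i j, P i j =
      ∑ A ∈ Finset.univ.filter (fun A : Finset (Fin n) => i ∈ A ∧ j ∈ A), q A)
    (v : Fin n → ℝ)
    (hsamp : ∀ u : Fin n → ℝ,
      ∑ i, ∑ j, (P i j - p i * p j) * u i * u j ≤ ∑ i, p i * v i * u i ^ 2) :
    ∀ i, 0 ≤ v i := by
  intro i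
  have hp1 : p i ≤ 1 := by
    rw [hpq i, ← hq1]
    exact Finset.sum_le_sum_of_subset_of_nonneg (Finset.filter_subset _ _)
      (fun A _ _ => hq0 A)
  have hPii : P i i = p i := by
    rw [hPq i i, hpq i]
    congr 1
    exact Finset.filter_congr fun A _ => by simp
  have hs := hsamp (fun k => if k = i then 1 else 0)
  simp only [ite_mul, one_mul, zero_mul, mul_ite, mul_one, mul_zero] at hs
  rw [Finset.sum_eq_single i (fun k _ hk => by
      rw [Finset.sum_eq_zero]; intro l _; simp [hk]) (by simp)] at hs
  rw [Finset.sum_eq_single i (fun l _ hl => by simp [hl]) (by simp)] at hs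
  simp only [if_pos rfl] at hs
  rw [Finset.sum_eq_single i (fun k _ hk => by simp [hk]) (by simp)] at hs
  simp only [if_pos rfl, one_pow] at hs
  simp only [if_pos trivial, if_true, one_pow] at hs
  rw [hPii] at hs
  have hpi := hppos i
  nlinarith

lemma aux_normsq {d : ℕ} (y : EuclideanSpace ℝ (Fin d)) : ‖y‖ ^ 2 = ∑ c, (y c) ^ 2 := by
  rw [EuclideanSpace.norm_eq, Real.sq_sqrt (by positivity)]
  exact Finset.sum_congr rfl fun c _ => by rw [Real.norm_eq_abs, sq_abs]

lemma aux_vec {d n : ℕ} (hn : 0 < n)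
    (q : Finset (Fin n) → ℝ) (hq1 : ∑ A : Finset (Fin n), q A = 1)
    (p : Fin n → ℝ) (hppos : ∀ i, 0 < p i)
    (hpq : ∀ i, p i = ∑ A ∈ Finset.univ.filter (fun A : Finset (Fin n) => i ∈ A), q A)
    (P : Fin n → Fin n → ℝ)
    (hPq : ∀ i j, P i j =
      ∑ A ∈ Finset.univ.filter (fun A : Finset (Fin n) => i ∈ A ∧ j ∈ A), q A)
    (v : Fin n → ℝ)
    (hsamp : ∀ u : Fin n → ℝ,
      ∑ i, ∑ j, (P i j - p i * p j) * u i * u j ≤ ∑ i, p i * v i * u i ^ 2)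
    (hv : ∀ i, 0 ≤ v i)
    (L : Fin n → ℝ) (Q : ℝ) (hQ : Q = ∑ i, v i * L i ^ 2 / (p i * (n : ℝ) ^ 2))
    (g : Fin n → EuclideanSpace ℝ (Fin d)) (e : EuclideanSpace ℝ (Fin d))
    (ndx : ℝ) (hndx : 0 ≤ ndx) (hg : ∀ i, ‖g i‖ ≤ L i * ndx) :
    ∑ A : Finset (Fin n), q A * ‖(∑ i ∈ A, (1 / ((n : ℝ) * p i)) • g i) + e‖ ^ 2
      ≤ ‖((1 / (n : ℝ)) • ∑ i, g i) + e‖ ^ 2 + Q * ndx ^ 2 := by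
  have hn' : (n : ℝ) ≠ 0 := Nat.cast_ne_zero.mpr hn.ne'
  -- coordinates
  have hYA : ∀ (A : Finset (Fin n)) (c : Fin d),
      ((∑ i ∈ A, (1 / ((n : ℝ) * p i)) • g i) + e) c
        = ∑ i ∈ A, (1 / ((n : ℝ) * p i)) * g i c + e c := by
    intro A c
    have : (∑ i ∈ A, (1 / ((n : ℝ) * p i)) • g i) c
        = ∑ i ∈ A, (1 / ((n : ℝ) * p i)) * g i c := by
      rw [WithLp.ofLp_sum, Finset.sum_apply c A]
      exact Finset.sum_congr rfl fun i _ => rfl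
    exact congrArg (· + e c) this
  have hD : ∀ c : Fin d,
      (((1 / (n : ℝ)) • ∑ i, g i) + e) c = ∑ i, p i * ((1 / ((n : ℝ) * p i)) * g i c) + e c := by
    intro c
    have h1 : ((1 / (n : ℝ)) • ∑ i, g i) c = (1 / (n : ℝ)) * (∑ i, g i) c := rfl
    have h2 : ((∑ i, g i : EuclideanSpace ℝ (Fin d))) c = ∑ i, g i c := by
      rw [WithLp.ofLp_sum, Finset.sum_apply]
    have h3 : ∀ i, p i * ((1 / ((n : ℝ) * p i)) * g i c) = (1 / (n : ℝ)) * g i c := by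
      intro i
      have := (hppos i).ne'
      field_simp
    calc (((1 / (n : ℝ)) • ∑ i, g i) + e) c = (1 / (n : ℝ)) * (∑ i, g i c) + e c := by
          rw [show (((1 / (n : ℝ)) • ∑ i, g i) + e) c
              = ((1 / (n : ℝ)) • ∑ i, g i) c + e c from rfl, h1, h2]
      _ = ∑ i, p i * ((1 / ((n : ℝ) * p i)) * g i c) + e c := by
          rw [Finset.mul_sum]
          congr 1
          exact Finset.sum_congr rfl fun i _ => (h3 i).symm
  calc ∑ A : Finset (Fin n), q A * ‖(∑ i ∈ A, (1 / ((n : ℝ) * p i)) • g i) + e‖ ^ 2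
      = ∑ c, ∑ A : Finset (Fin n),
          q A * (∑ i ∈ A, (1 / ((n : ℝ) * p i)) * g i c + e c) ^ 2 := by
        rw [Finset.sum_comm]
        refine Finset.sum_congr rfl fun A _ => ?_
        rw [aux_normsq, Finset.mul_sum]
        exact Finset.sum_congr rfl fun c _ => by rw [hYA]
    _ ≤ ∑ c, ((∑ i, p i * ((1 / ((n : ℝ) * p i)) * g i c) + e c) ^ 2
          + ∑ i, p i * v i * ((1 / ((n : ℝ) * p i)) * g i c) ^ 2) := by
        refine Finset.sum_le_sum fun c _ => ?_
        exact aux_scalar q p hpq P hPq v hsamp hq1 (fun i => (1 / ((n : ℝ) * p i)) * g i c) (e c)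
    _ = ‖((1 / (n : ℝ)) • ∑ i, g i) + e‖ ^ 2
          + ∑ i, (p i * v i * (1 / ((n : ℝ) * p i)) ^ 2) * ‖g i‖ ^ 2 := by
        rw [Finset.sum_add_distrib]
        congr 1
        · rw [aux_normsq]
          exact Finset.sum_congr rfl fun c _ => by rw [hD]
        · rw [Finset.sum_comm]
          refine Finset.sum_congr rfl fun i _ => ?_
          rw [aux_normsq, Finset.mul_sum]
          exact Finset.sum_congr rfl fun c _ => by ring
    _ ≤ ‖((1 / (n : ℝ)) • ∑ i, g i) + e‖ ^ 2 + Q * ndx ^ 2 := by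
        gcongr _ + ?_
        rw [hQ, Finset.sum_mul]
        refine Finset.sum_le_sum fun i _ => ?_
        have hpi := hppos i
        have hgi : ‖g i‖ ^ 2 ≤ L i ^ 2 * ndx ^ 2 := by
          have := pow_le_pow_left₀ (norm_nonneg (g i)) (hg i) 2
          calc ‖g i‖ ^ 2 ≤ (L i * ndx) ^ 2 := this
            _ = L i ^ 2 * ndx ^ 2 := by ring
        have hcoef : p i * v i * (1 / ((n : ℝ) * p i)) ^ 2 = v i / (p i * (n : ℝ) ^ 2) := by
          field_simp
        rw [hcoef]
        have hc0 : 0 ≤ v i / (p i * (n : ℝ) ^ 2) := div_nonneg (hv i) (by positivity)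
        calc v i / (p i * (n : ℝ) ^ 2) * ‖g i‖ ^ 2
            ≤ v i / (p i * (n : ℝ) ^ 2) * (L i ^ 2 * ndx ^ 2) := by
              exact mul_le_mul_of_nonneg_left hgi hc0
          _ = v i * L i ^ 2 / (p i * (n : ℝ) ^ 2) * ndx ^ 2 := by ring

lemma aux_grad {d n : ℕ} (hn : 0 < n)
    (f : Fin n → EuclideanSpace ℝ (Fin d) → ℝ)
    (hdiff : ∀ i, Differentiable ℝ (f i))
    (favg : EuclideanSpace ℝ (Fin d) → ℝ)
    (hfavg : favg = fun x => (1 / (n : ℝ)) * ∑ i, f i x) :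
    ∀ y, gradient favg y = (1 / (n : ℝ)) • ∑ i, gradient (f i) y := by
  intro y
  have hsum : HasFDerivAt (fun x => ∑ i, f i x) (∑ i, fderiv ℝ (f i) y) y :=
    HasFDerivAt.fun_sum fun i _ => ((hdiff i) y).hasFDerivAt
  have hd : HasFDerivAt favg ((1 / (n : ℝ)) • ∑ i, fderiv ℝ (f i) y) y := by
    rw [hfavg]
    exact hsum.const_mul _
  rw [gradient, hd.fderiv, LinearIsometryEquiv.map_smul, map_sum]
  rfl

lemma aux_cont {d n : ℕ} (f : Fin n → EuclideanSpace ℝ (Fin d) → ℝ) (L : Fin n → ℝ)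
    (hlip : ∀ i, ∀ x₁ x₂ : EuclideanSpace ℝ (Fin d),
      ‖gradient (f i) x₁ - gradient (f i) x₂‖ ≤ L i * ‖x₁ - x₂‖) :
    ∀ i, Continuous (gradient (f i)) := by
  intro i
  have : LipschitzWith (Real.toNNReal (L i)) (gradient (f i)) := by
    refine LipschitzWith.of_dist_le_mul fun x y => ?_
    rw [dist_eq_norm, dist_eq_norm]
    exact (hlip i x y).trans
      (mul_le_mul_of_nonneg_right (Real.le_coe_toNNReal _) (norm_nonneg _))
  exact this.continuous

/-- Lemma 5.2, variance bound for the SARAH estimator. Under the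
ProxSARAH-AS process — `V₀⁽ʲ⁾ = ∇f(x₀⁽ʲ⁾)`, `x₁⁽ʲ⁾ = x₀⁽ʲ⁾`,
`Vₜ⁽ʲ⁾ = ∑_{i∈Sₜ⁽ʲ⁾} (1/(n pᵢ))(∇fᵢ(xₜ⁽ʲ⁾) − ∇fᵢ(x_{t−1}⁽ʲ⁾)) + V_{t−1}⁽ʲ⁾` with
`Sₜ⁽ʲ⁾` drawn independently of the past with law `q`, inclusion probabilities `pᵢ > 0`,
pairwise probabilities `P` satisfying `P − ppᵀ ⪯ Diag(p∘v)`, and each `fᵢ` differentiable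
with `Lᵢ`-Lipschitz gradient — for every `1 ≤ t ≤ m` and every epoch `j`,
`E[‖Vₜ⁽ʲ⁾ − ∇f(xₜ⁽ʲ⁾)‖²] ≤ Q ∑_{k=1}^t E[‖xₖ⁽ʲ⁾ − x_{k−1}⁽ʲ⁾‖²]` where
`Q = ∑ᵢ vᵢLᵢ²/(pᵢn²)`. -/
theorem sarah_estimator_variance_bound {d n : ℕ} (hn : 0 < n)
    {Ω : Type*} [m0 : MeasurableSpace Ω] (μ : Measure Ω) [IsProbabilityMeasure μ]
    (f : Fin n → EuclideanSpace ℝ (Fin d) → ℝ) (L : Fin n → ℝ)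
    (hdiff : ∀ i, Differentiable ℝ (f i))
    (hlip : ∀ i, ∀ x₁ x₂ : EuclideanSpace ℝ (Fin d),
      ‖gradient (f i) x₁ - gradient (f i) x₂‖ ≤ L i * ‖x₁ - x₂‖)
    (favg : EuclideanSpace ℝ (Fin d) → ℝ)
    (hfavg : favg = fun x => (1 / (n : ℝ)) * ∑ i, f i x)
    (q : Finset (Fin n) → ℝ) (hq0 : ∀ A, 0 ≤ q A) (hq1 : ∑ A : Finset (Fin n), q A = 1)
    (p : Fin n → ℝ) (hppos : ∀ i, 0 < p i)
    (hpq : ∀ i, p i = ∑ A ∈ Finset.univ.filter (fun A : Finset (Fin n) => i ∈ A), q A)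
    (P : Fin n → Fin n → ℝ)
    (hPq : ∀ i j, P i j =
      ∑ A ∈ Finset.univ.filter (fun A : Finset (Fin n) => i ∈ A ∧ j ∈ A), q A)
    (v : Fin n → ℝ)
    (hsamp : ∀ u : Fin n → ℝ,
      ∑ i, ∑ j, (P i j - p i * p j) * u i * u j ≤ ∑ i, p i * v i * u i ^ 2)
    (J m : ℕ) (hJ : 0 < J) (hm : 0 < m)
    (x V : ℕ → ℕ → Ω → EuclideanSpace ℝ (Fin d))
    (S : ℕ → ℕ → Ω → Finset (Fin n))
    (hx10 : ∀ j ∈ Finset.Icc 1 J, ∀ ω, x j 1 ω = x j 0 ω)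
    (hV0 : ∀ j ∈ Finset.Icc 1 J, ∀ ω, V j 0 ω = gradient favg (x j 0 ω))
    (𝓖 : ℕ → ℕ → MeasurableSpace Ω) (h𝓖 : ∀ j t, 𝓖 j t ≤ m0)
    (hmeas : ∀ j ∈ Finset.Icc 1 J, ∀ t ∈ Finset.Icc 1 m,
      StronglyMeasurable[𝓖 j t] (x j t) ∧ StronglyMeasurable[𝓖 j t] (x j (t - 1)) ∧
        StronglyMeasurable[𝓖 j t] (V j (t - 1)))
    (hSmeas : ∀ j ∈ Finset.Icc 1 J, ∀ t ∈ Finset.Icc 1 m, ∀ A : Finset (Fin n),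
      MeasurableSet {ω | S j t ω = A})
    (hSlaw : ∀ j ∈ Finset.Icc 1 J, ∀ t ∈ Finset.Icc 1 m, ∀ A : Finset (Fin n),
      μ[({ω | S j t ω = A}).indicator (fun _ => (1 : ℝ)) | 𝓖 j t] =ᵐ[μ] fun _ => q A)
    (hVrec : ∀ j ∈ Finset.Icc 1 J, ∀ t ∈ Finset.Icc 1 m, ∀ ω,
      V j t ω = (∑ i ∈ S j t ω, (1 / ((n : ℝ) * p i)) •
          (gradient (f i) (x j t ω) - gradient (f i) (x j (t - 1) ω))) + V j (t - 1) ω)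
    (hL2 : ∀ j ∈ Finset.Icc 1 J, ∀ t ∈ Finset.Icc 0 m,
      MemLp (x j t) 2 μ ∧ MemLp (V j t) 2 μ)
    (Q : ℝ) (hQ : Q = ∑ i, v i * L i ^ 2 / (p i * (n : ℝ) ^ 2)) :
    ∀ j ∈ Finset.Icc 1 J, ∀ t ∈ Finset.Icc 1 m,
      ∫ ω, ‖V j t ω - gradient favg (x j t ω)‖ ^ 2 ∂μ
        ≤ Q * ∑ k ∈ Finset.Icc 1 t, ∫ ω, ‖x j k ω - x j (k - 1) ω‖ ^ 2 ∂μ := by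
  intro j hj
  have hv : ∀ i, 0 ≤ v i := aux_hv q hq0 hq1 p hppos hpq P hPq v hsamp
  have hgradG := aux_grad hn f hdiff favg hfavg
  have hcont := aux_cont f L hlip
  have hcontG : Continuous (gradient favg) := by
    have h1 : Continuous fun y => (1 / (n : ℝ)) • ∑ i, gradient (f i) y :=
      (continuous_finset_sum _ fun i _ => hcont i).fun_const_smul _
    exact h1.congr fun y => (hgradG y).symm
  have hmemgrad : ∀ (i : Fin n) (t' : ℕ), t' ∈ Finset.Icc 0 m →
      MemLp (fun ω => gradient (f i) (x j t' ω)) 2 μ := by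
    intro i t' ht'
    have hx2 := (hL2 j hj t' ht').1
    have haesm : AEStronglyMeasurable (fun ω => gradient (f i) (x j t' ω)) μ :=
      (hcont i).comp_aestronglyMeasurable hx2.aestronglyMeasurable
    refine MemLp.of_le ((memLp_const (‖gradient (f i) 0‖)).add
      (hx2.norm.const_mul |L i|)) haesm (Eventually.of_forall fun ω => ?_)
    have h1 : ‖gradient (f i) (x j t' ω)‖
        ≤ ‖gradient (f i) 0‖ + L i * ‖x j t' ω‖ := by
      have hl := hlip i (x j t' ω) 0
      rw [sub_zero] at hl
      calc ‖gradient (f i) (x j t' ω)‖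
          = ‖(gradient (f i) (x j t' ω) - gradient (f i) 0) + gradient (f i) 0‖ := by
            rw [sub_add_cancel]
        _ ≤ ‖gradient (f i) (x j t' ω) - gradient (f i) 0‖ + ‖gradient (f i) 0‖ :=
            norm_add_le _ _
        _ ≤ L i * ‖x j t' ω‖ + ‖gradient (f i) 0‖ := add_le_add_left hl _
        _ = ‖gradient (f i) 0‖ + L i * ‖x j t' ω‖ := by ring
    have h2 : ‖gradient (f i) 0‖ + L i * ‖x j t' ω‖
        ≤ ‖gradient (f i) 0‖ + |L i| * ‖x j t' ω‖ :=
      add_le_add_right (mul_le_mul_of_nonneg_right (le_abs_self _) (norm_nonneg _)) _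
    simp only [Pi.add_apply, Real.norm_eq_abs]
    exact (h1.trans h2).trans (le_abs_self _)
  have hmemG : ∀ t' ∈ Finset.Icc 0 m,
      MemLp (fun ω => gradient favg (x j t' ω)) 2 μ := by
    intro t' ht'
    have h1 : MemLp (fun ω => ∑ i, gradient (f i) (x j t' ω)) 2 μ :=
      memLp_finset_sum _ fun i _ => hmemgrad i t' ht'
    have h2 := h1.const_smul (1 / (n : ℝ))
    refine h2.ae_eq (Eventually.of_forall fun ω => ?_)
    simp only [Pi.smul_apply]
    exact (hgradG _).symm
  have hIntVG : ∀ t' ∈ Finset.Icc 0 m,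
      Integrable (fun ω => ‖V j t' ω - gradient favg (x j t' ω)‖ ^ 2) μ := by
    intro t' ht'
    exact ((hL2 j hj t' ht').2.sub (hmemG t' ht')).norm.integrable_sq
  have hIntdx : ∀ t' ∈ Finset.Icc 1 m,
      Integrable (fun ω => ‖x j t' ω - x j (t' - 1) ω‖ ^ 2) μ := by
    intro t' ht'
    obtain ⟨h1, h2⟩ := Finset.mem_Icc.mp ht'
    exact ((hL2 j hj t' (Finset.mem_Icc.mpr ⟨Nat.zero_le _, h2⟩)).1.sub
      (hL2 j hj (t' - 1) (Finset.mem_Icc.mpr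
        ⟨Nat.zero_le _, le_trans (Nat.sub_le _ _) h2⟩)).1).norm.integrable_sq
  have key : ∀ t ∈ Finset.Icc 1 m,
      ∫ ω, ‖V j t ω - gradient favg (x j t ω)‖ ^ 2 ∂μ
        ≤ ∫ ω, ‖V j (t - 1) ω - gradient favg (x j (t - 1) ω)‖ ^ 2 ∂μ
          + Q * ∫ ω, ‖x j t ω - x j (t - 1) ω‖ ^ 2 ∂μ := by
    intro t ht
    obtain ⟨ht1, htm⟩ := Finset.mem_Icc.mp ht
    have ht0 : t ∈ Finset.Icc 0 m := Finset.mem_Icc.mpr ⟨Nat.zero_le _, htm⟩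
    have ht10 : t - 1 ∈ Finset.Icc 0 m :=
      Finset.mem_Icc.mpr ⟨Nat.zero_le _, le_trans (Nat.sub_le _ _) htm⟩
    obtain ⟨hxt, hxt1, hVt1⟩ := hmeas j hj t ht
    set W : Finset (Fin n) → Ω → EuclideanSpace ℝ (Fin d) := fun A ω =>
      (∑ i ∈ A, (1 / ((n : ℝ) * p i)) •
        (gradient (f i) (x j t ω) - gradient (f i) (x j (t - 1) ω)))
        + (V j (t - 1) ω - gradient favg (x j t ω)) with hWdef
    have hpoint : ∀ ω, V j t ω - gradient favg (x j t ω) = W (S j t ω) ω := by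
      intro ω
      rw [hVrec j hj t ht ω]
      exact add_sub_assoc _ _ _
    have hWsm : ∀ A, StronglyMeasurable[𝓖 j t] (W A) := by
      intro A
      refine StronglyMeasurable.add ?_ (hVt1.sub (hcontG.comp_stronglyMeasurable hxt))
      refine Finset.stronglyMeasurable_fun_sum _ fun i _ => ?_
      exact (((hcont i).comp_stronglyMeasurable hxt).sub
        ((hcont i).comp_stronglyMeasurable hxt1)).fun_const_smul _
    have hWmem : ∀ A, MemLp (W A) 2 μ := by
      intro A
      refine MemLp.add ?_ ((hL2 j hj (t - 1) ht10).2.sub (hmemG t ht0))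
      refine memLp_finset_sum _ fun i _ => ?_
      exact ((hmemgrad i t ht0).sub (hmemgrad i (t - 1) ht10)).const_smul (1 / ((n : ℝ) * p i))
    have hWint : ∀ A, Integrable (fun ω => ‖W A ω‖ ^ 2) μ := fun A =>
      (hWmem A).norm.integrable_sq
    have hindint : ∀ A : Finset (Fin n),
        Integrable (({ω | S j t ω = A}).indicator (fun _ => (1 : ℝ))) μ := fun A =>
      (integrable_const 1).indicator (hSmeas j hj t ht A)
    have hprodint : ∀ A : Finset (Fin n),
        Integrable (fun ω =>
          ({ω' | S j t ω' = A}).indicator (fun _ => (1 : ℝ)) ω * ‖W A ω‖ ^ 2) μ := by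
      intro A
      refine Integrable.bdd_mul (c := 1) (hWint A) ((stronglyMeasurable_const.indicator
        (hSmeas j hj t ht A)).aestronglyMeasurable) (Eventually.of_forall fun ω => ?_)
      rw [Real.norm_eq_abs]
      by_cases h : ω ∈ {ω' | S j t ω' = A}
      · rw [Set.indicator_of_mem h]; norm_num
      · rw [Set.indicator_of_notMem h]; norm_num
    have hpull : ∀ A : Finset (Fin n),
        ∫ ω, ({ω' | S j t ω' = A}).indicator (fun _ => (1 : ℝ)) ω * ‖W A ω‖ ^ 2 ∂μ
          = q A * ∫ ω, ‖W A ω‖ ^ 2 ∂μ := by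
      intro A
      have hsm2 : StronglyMeasurable[𝓖 j t] (fun ω => ‖W A ω‖ ^ 2) := (hWsm A).norm.pow 2
      have hint2 : Integrable ((fun ω => ‖W A ω‖ ^ 2) *
          ({ω' | S j t ω' = A}).indicator (fun _ => (1 : ℝ))) μ :=
        (hprodint A).congr (Eventually.of_forall fun ω => mul_comm _ _)
      have hce := condExp_mul_of_stronglyMeasurable_left hsm2 hint2 (hindint A)
      have hlaw := hSlaw j hj t ht A
      calc ∫ ω, ({ω' | S j t ω' = A}).indicator (fun _ => (1 : ℝ)) ω * ‖W A ω‖ ^ 2 ∂μ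
          = ∫ ω, ((fun ω => ‖W A ω‖ ^ 2) *
              ({ω' | S j t ω' = A}).indicator (fun _ => (1 : ℝ))) ω ∂μ :=
            integral_congr_ae (Eventually.of_forall fun ω => mul_comm _ _)
        _ = ∫ ω, (μ[(fun ω => ‖W A ω‖ ^ 2) *
              ({ω' | S j t ω' = A}).indicator (fun _ => (1 : ℝ)) | 𝓖 j t]) ω ∂μ :=
            (integral_condExp (h𝓖 j t)).symm
        _ = ∫ ω, ‖W A ω‖ ^ 2 * q A ∂μ := by
            refine integral_congr_ae ?_
            filter_upwards [hce, hlaw] with ω h1 h2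
            rw [h1, Pi.mul_apply, h2]
        _ = q A * ∫ ω, ‖W A ω‖ ^ 2 ∂μ := by rw [integral_mul_const]; ring
    calc ∫ ω, ‖V j t ω - gradient favg (x j t ω)‖ ^ 2 ∂μ
        = ∫ ω, ∑ A : Finset (Fin n),
            ({ω' | S j t ω' = A}).indicator (fun _ => (1 : ℝ)) ω * ‖W A ω‖ ^ 2 ∂μ := by
          refine integral_congr_ae (Eventually.of_forall fun ω => ?_)
          show ‖V j t ω - gradient favg (x j t ω)‖ ^ 2
            = ∑ A : Finset (Fin n),
              ({ω' | S j t ω' = A}).indicator (fun _ => (1 : ℝ)) ω * ‖W A ω‖ ^ 2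
          rw [hpoint ω]
          rw [Finset.sum_eq_single (S j t ω)]
          · rw [Set.indicator_of_mem (show ω ∈ {ω' | S j t ω' = S j t ω} from rfl), one_mul]
          · intro A _ hA
            rw [Set.indicator_of_notMem (fun h => hA ((Set.mem_setOf_eq ▸ h).symm)), zero_mul]
          · intro h; exact absurd (Finset.mem_univ _) h
      _ = ∑ A : Finset (Fin n),
            ∫ ω, ({ω' | S j t ω' = A}).indicator (fun _ => (1 : ℝ)) ω * ‖W A ω‖ ^ 2 ∂μ :=
          integral_finset_sum _ fun A _ => hprodint A
      _ = ∑ A : Finset (Fin n), q A * ∫ ω, ‖W A ω‖ ^ 2 ∂μ :=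
          Finset.sum_congr rfl fun A _ => hpull A
      _ = ∫ ω, ∑ A : Finset (Fin n), q A * ‖W A ω‖ ^ 2 ∂μ := by
          rw [integral_finset_sum _ fun A _ => (hWint A).const_mul (q A)]
          exact Finset.sum_congr rfl fun A _ => (integral_const_mul _ _).symm
      _ ≤ ∫ ω, (‖V j (t - 1) ω - gradient favg (x j (t - 1) ω)‖ ^ 2
            + Q * ‖x j t ω - x j (t - 1) ω‖ ^ 2) ∂μ := by
          refine integral_mono (integrable_finset_sum _ fun A _ => (hWint A).const_mul (q A))
            ((hIntVG (t - 1) ht10).add ((hIntdx t ht).const_mul Q)) fun ω => ?_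
          have hvec := aux_vec hn q hq1 p hppos hpq P hPq v hsamp hv L Q hQ
            (fun i => gradient (f i) (x j t ω) - gradient (f i) (x j (t - 1) ω))
            (V j (t - 1) ω - gradient favg (x j t ω))
            (‖x j t ω - x j (t - 1) ω‖) (norm_nonneg _) (fun i => hlip i _ _)
          have hmean : ((1 / (n : ℝ)) •
              ∑ i, (gradient (f i) (x j t ω) - gradient (f i) (x j (t - 1) ω)))
              + (V j (t - 1) ω - gradient favg (x j t ω))
              = V j (t - 1) ω - gradient favg (x j (t - 1) ω) := by
            rw [Finset.sum_sub_distrib, smul_sub, ← hgradG, ← hgradG]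
            abel
          rw [hmean] at hvec
          exact hvec
      _ = ∫ ω, ‖V j (t - 1) ω - gradient favg (x j (t - 1) ω)‖ ^ 2 ∂μ
            + Q * ∫ ω, ‖x j t ω - x j (t - 1) ω‖ ^ 2 ∂μ := by
          rw [integral_add (hIntVG (t - 1) ht10) ((hIntdx t ht).const_mul Q),
            integral_const_mul]
  suffices H : ∀ t : ℕ, 1 ≤ t → t ≤ m →
      ∫ ω, ‖V j t ω - gradient favg (x j t ω)‖ ^ 2 ∂μ
        ≤ Q * ∑ k ∈ Finset.Icc 1 t, ∫ ω, ‖x j k ω - x j (k - 1) ω‖ ^ 2 ∂μ by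
    intro t ht
    obtain ⟨a, b⟩ := Finset.mem_Icc.mp ht
    exact H t a b
  intro t
  induction t with
  | zero => intro h; exact absurd h (by omega)
  | succ s ih =>
    intro _ hsm1
    have hstep := key (s + 1) (Finset.mem_Icc.mpr ⟨Nat.le_add_left 1 s, hsm1⟩)
    simp only [Nat.add_sub_cancel] at hstep
    rcases Nat.eq_zero_or_pos s with hs0 | hs0
    · subst hs0
      have h0 : ∫ ω, ‖V j 0 ω - gradient favg (x j 0 ω)‖ ^ 2 ∂μ = 0 := by
        have hz : (fun ω => ‖V j 0 ω - gradient favg (x j 0 ω)‖ ^ 2) = fun _ => (0 : ℝ) := by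
          funext ω
          rw [hV0 j hj ω, sub_self, norm_zero]
          norm_num
        rw [hz, integral_zero]
      rw [show Finset.Icc 1 1 = {1} from Finset.Icc_self 1, Finset.sum_singleton]
      norm_num
      linarith [hstep, h0]
    · have hIH := ih hs0 (le_trans (Nat.le_succ s) hsm1)
      rw [Finset.sum_Icc_succ_top (Nat.le_add_left 1 s), mul_add]
      simp only [Nat.add_sub_cancel]
      linarith [hIH, hstep]
end

section
/- (Lemma 5.4) Under the ProxSARAH-AS process within one epoch j — with f = (1/n)∑ f_i L̃-smooth (L̃ = (1/n)∑ L_i > 0), F = f + r, full-gradient initialization V_0^{(j)} = ∇f(x_0^{(j)}), x_1^{(j)} = x_0^{(j)}, recursive estimator V_t^{(j)} = ∑_{i∈S_t^{(j)}} (1/(n p_i))(∇f_i(x_t^{(j)}) − ∇f_i(x_{t−1}^{(j)})) + V_{t−1}^{(j)} with independent sampling subsets satisfying P − ppᵀ ⪯ Diag(p∘v), proximal updates x_{t+1}^{(j)} = argmin_y { r(y) + ⟨V_t^{(j)}, y − x_t^{(j)}⟩ + (1/(2η))‖y − x_t^{(j)}‖² }, and Q = ∑_{i=1}^n v_i L_i²/(p_i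 n²) — if (1/2)(1/η − 2L̃) − mQ/(2L̃) > 0, then ∑_{t=1}^m E[‖x_{t+1}^{(j)} − x_t^{(j)}‖²] ≤ E[F(x_0^{(j)}) − F(x_{m+1}^{(j)})] / ((1/2)(1/η − 2L̃) − mQ/(2L̃)). -/
open MeasureTheory Filter Finset
open scoped InnerProductSpace

section Aux

variable {E : Type*} [NormedAddCommGroup E] [InnerProductSpace ℝ E]

lemma young_inner' (a b : E) {c : ℝ} (hc : 0 < c) :
    ⟪a, b⟫_ℝ ≤ 1 / (2 * c) * ‖a‖ ^ 2 + c / 2 * ‖b‖ ^ 2 := by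
  have h := real_inner_le_norm a b
  have h2 : (0:ℝ) ≤ (‖a‖ - c * ‖b‖)^2 := sq_nonneg _
  have := norm_nonneg a; have := norm_nonneg b
  have hc' : (0:ℝ) < 2 * c := by linarith
  have h3 : ⟪a, b⟫_ℝ ≤ (‖a‖^2 + c^2*‖b‖^2)/(2*c) := by
    rw [le_div_iff₀ hc']; nlinarith
  calc ⟪a, b⟫_ℝ ≤ (‖a‖^2 + c^2*‖b‖^2)/(2*c) := h3
    _ = 1 / (2 * c) * ‖a‖ ^ 2 + c / 2 * ‖b‖ ^ 2 := by field_simp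

lemma continuous_of_lipbound {T : E → E} {C : ℝ}
    (h : ∀ a b, ‖T a - T b‖ ≤ C * ‖a - b‖) : Continuous T := by
  have h' : LipschitzWith (Real.toNNReal C) T := by
    apply LipschitzWith.of_dist_le_mul
    intro a b
    rw [dist_eq_norm, dist_eq_norm]
    calc ‖T a - T b‖ ≤ C * ‖a - b‖ := h a b
    _ ≤ (Real.toNNReal C) * ‖a - b‖ := by
        gcongr; exact Real.le_coe_toNNReal C
  exact h'.continuous

lemma descent_lemma_s12 {E : Type*} [NormedAddCommGroup E] [InnerProductSpace ℝ E]
    [CompleteSpace E]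
    (g : E → ℝ) (C : ℝ) (hC : 0 ≤ C) (hdiff : Differentiable ℝ g)
    (hlip : ∀ a b, ‖gradient g a - gradient g b‖ ≤ C * ‖a - b‖) (x y : E) :
    g y ≤ g x + ⟪gradient g x, y - x⟫_ℝ + C / 2 * ‖y - x‖ ^ 2 := by
  set v := y - x with hv
  have hline : ∀ t : ℝ, HasDerivAt (fun s : ℝ => g (x + s • v))
      (⟪gradient g (x + t • v), v⟫_ℝ) t := by
    intro t
    have h1 : HasDerivAt (fun s : ℝ => x + s • v) v t := by
      simpa using ((hasDerivAt_id t).smul_const v).const_add x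
    have h2 : HasFDerivAt g ((InnerProductSpace.toDual ℝ E) (gradient g (x + t • v)))
        (x + t • v) := (hdiff _).hasGradientAt
    simpa [Function.comp_def] using (h2.comp_hasDerivAt t h1)
  have hgcont : Continuous (gradient g) := continuous_of_lipbound hlip
  have hcont : Continuous (fun t : ℝ => ⟪gradient g (x + t • v), v⟫_ℝ) := by
    exact (hgcont.comp (by continuity)).inner continuous_const
  have hFTC : ∫ t in (0:ℝ)..1, ⟪gradient g (x + t • v), v⟫_ℝ
      = g (x + (1:ℝ) • v) - g (x + (0:ℝ) • v) :=
    intervalIntegral.integral_eq_sub_of_hasDerivAt (fun t _ => hline t)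
      (hcont.intervalIntegrable 0 1)
  have hmono : ∫ t in (0:ℝ)..1, ⟪gradient g (x + t • v), v⟫_ℝ ≤
      ∫ t in (0:ℝ)..1, (⟪gradient g x, v⟫_ℝ + C * t * ‖v‖ ^ 2) := by
    apply intervalIntegral.integral_mono_on (by norm_num)
      (hcont.intervalIntegrable 0 1)
      (by apply Continuous.intervalIntegrable; continuity)
    intro t ht
    have heq : ⟪gradient g (x + t • v), v⟫_ℝ - ⟪gradient g x, v⟫_ℝ
        = ⟪gradient g (x + t • v) - gradient g x, v⟫_ℝ := by
      rw [inner_sub_left]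
    have hb : ⟪gradient g (x + t • v) - gradient g x, v⟫_ℝ ≤ C * t * ‖v‖ ^ 2 := by
      calc ⟪gradient g (x + t • v) - gradient g x, v⟫_ℝ
          ≤ ‖gradient g (x + t • v) - gradient g x‖ * ‖v‖ := real_inner_le_norm _ _
        _ ≤ (C * ‖(x + t • v) - x‖) * ‖v‖ := by
            gcongr; exact hlip _ _
        _ = C * t * ‖v‖ ^ 2 := by
            rw [add_sub_cancel_left, norm_smul, Real.norm_eq_abs, abs_of_nonneg ht.1]
            ring
    linarith
  have hval : ∫ t in (0:ℝ)..1, (⟪gradient g x, v⟫_ℝ + C * t * ‖v‖ ^ 2)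
      = ⟪gradient g x, v⟫_ℝ + C / 2 * ‖v‖ ^ 2 := by
    rw [intervalIntegral.integral_add (by apply Continuous.intervalIntegrable; continuity)
      (by apply Continuous.intervalIntegrable; continuity)]
    have h1 : ∫ t in (0:ℝ)..1, C * t * ‖v‖ ^ 2
        = (C * ‖v‖^2) * ∫ t in (0:ℝ)..1, t := by
      rw [← intervalIntegral.integral_const_mul]
      congr 1; ext t; ring
    rw [h1, integral_id]
    simp
    ring
  have : g y = g (x + (1:ℝ) • v) := by rw [hv]; simp
  have h0 : g x = g (x + (0:ℝ) • v) := by simp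
  linarith [hFTC, hmono, hval]

end Aux

section Aux2

variable {Ω : Type*} [m0 : MeasurableSpace Ω] {μ : Measure Ω}
variable {E : Type*} [NormedAddCommGroup E] [InnerProductSpace ℝ E]

lemma integrable_inner_of_memLp {f g : Ω → E} (hf : MemLp f 2 μ)
    (hg : MemLp g 2 μ) : Integrable (fun ω => ⟪f ω, g ω⟫_ℝ) μ := by
  have h := MeasureTheory.L2.integrable_inner (𝕜 := ℝ) (hf.toLp f) (hg.toLp g)
  refine h.congr ?_
  filter_upwards [hf.coeFn_toLp, hg.coeFn_toLp] with ω h1 h2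
  rw [h1, h2]

lemma integrable_norm_sq_of_memLp {f : Ω → E} (hf : MemLp f 2 μ) :
    Integrable (fun ω => ‖f ω‖ ^ 2) μ := by
  have h2 := hf.integrable_norm_rpow two_ne_zero ENNReal.ofNat_ne_top
  refine h2.congr ?_
  filter_upwards with ω
  rw [ENNReal.toReal_ofNat]
  rw [show ((2:ℝ):ℝ) = ((2:ℕ):ℝ) by norm_num, Real.rpow_natCast]

lemma memLp_comp_of_lipbound [IsFiniteMeasure μ] {T : E → E} {C : ℝ}
    (h : ∀ a b, ‖T a - T b‖ ≤ C * ‖a - b‖)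
    {X : Ω → E} (hX : MemLp X 2 μ) : MemLp (fun ω => T (X ω)) 2 μ := by
  have hTcont : Continuous T := continuous_of_lipbound h
  have haesm : AEStronglyMeasurable (fun ω => T (X ω)) μ :=
    hTcont.comp_aestronglyMeasurable hX.aestronglyMeasurable
  have hbound : MemLp (fun ω => ‖T 0‖ + |C| * ‖X ω‖) 2 μ :=
    (memLp_const (‖T 0‖)).add (hX.norm.const_mul |C|)
  refine hbound.of_le haesm ?_
  filter_upwards with ω
  have h1 : ‖T (X ω)‖ ≤ ‖T 0‖ + |C| * ‖X ω‖ := by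
    have h2 : ‖T (X ω) - T 0‖ ≤ C * ‖X ω - 0‖ := h _ _
    have h3 : C * ‖X ω‖ ≤ |C| * ‖X ω‖ := by
      gcongr ?_ * _; exact le_abs_self C
    have := norm_sub_norm_le (T (X ω)) (T 0)
    simp only [sub_zero] at h2
    linarith
  have hpos : (0:ℝ) ≤ ‖T 0‖ + |C| * ‖X ω‖ := by positivity
  rw [Real.norm_eq_abs, abs_of_nonneg hpos]
  exact h1

lemma integrable_indicator_mul {s : Set Ω} (hs : MeasurableSet[m0] s)
    {φ : Ω → ℝ} (hφ : Integrable φ μ) :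
    Integrable (fun ω => s.indicator (fun _ => (1:ℝ)) ω * φ ω) μ := by
  refine Integrable.mono' hφ.norm
    ((aestronglyMeasurable_const.indicator hs).mul hφ.aestronglyMeasurable) ?_
  filter_upwards with ω
  rw [Real.norm_eq_abs, abs_mul]
  rcases Set.indicator_eq_zero_or_self s (fun _ => (1:ℝ)) ω with h | h <;>
    rw [h] <;> simp [abs_nonneg, Real.norm_eq_abs]

lemma integral_indicator_mul_of_condexp [IsProbabilityMeasure μ]
    {𝓖 : MeasurableSpace Ω} (h𝓖 : 𝓖 ≤ m0) {s : Set Ω} (hs : MeasurableSet[m0] s) {c : ℝ}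
    (hc : μ[s.indicator (fun _ => (1:ℝ)) | 𝓖] =ᵐ[μ] fun _ => c)
    {φ : Ω → ℝ} (hφm : StronglyMeasurable[𝓖] φ) (hφi : Integrable φ μ) :
    ∫ ω, s.indicator (fun _ => (1:ℝ)) ω * φ ω ∂μ = c * ∫ ω, φ ω ∂μ := by
  haveI : SigmaFinite (μ.trim h𝓖) := inferInstance
  have hgi : Integrable (s.indicator (fun _ => (1:ℝ))) μ := by
    clear hc hφm this; clear h𝓖 𝓖
    exact (integrable_const (1:ℝ)).indicator hs
  have hprod : Integrable (φ * s.indicator (fun _ => (1:ℝ))) μ := by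
    refine Integrable.mono' hφi.norm
      ((hφm.mono h𝓖).aestronglyMeasurable.mul hgi.aestronglyMeasurable) ?_
    filter_upwards with ω
    simp only [Pi.mul_apply, Real.norm_eq_abs, abs_mul]
    rcases Set.indicator_eq_zero_or_self s (fun _ => (1:ℝ)) ω with h | h <;>
      rw [h] <;> simp [abs_nonneg]
  have hpull := condExp_mul_of_stronglyMeasurable_left hφm hprod hgi
  have h1 : ∫ ω, (φ * s.indicator fun _ => (1:ℝ)) ω ∂μ
      = ∫ ω, (μ[φ * s.indicator (fun _ => (1:ℝ))|𝓖]) ω ∂μ :=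
    (integral_condExp h𝓖).symm
  have h2 : ∫ ω, (μ[φ * s.indicator (fun _ => (1:ℝ))|𝓖]) ω ∂μ = ∫ ω, φ ω * c ∂μ := by
    refine integral_congr_ae (hpull.trans ?_)
    filter_upwards [hc] with ω hω
    simp only [Pi.mul_apply, hω]
  have h3 : ∫ ω, s.indicator (fun _ => (1:ℝ)) ω * φ ω ∂μ
      = ∫ ω, (φ * s.indicator fun _ => (1:ℝ)) ω ∂μ := by
    congr 1; ext ω; simp [mul_comm]
  rw [h3, h1, h2]
  rw [integral_mul_const]
  ring

end Aux2

lemma sampling_scalar {n : ℕ}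
    (q : Finset (Fin n) → ℝ) (hq1 : ∑ A : Finset (Fin n), q A = 1)
    (p : Fin n → ℝ)
    (hpq : ∀ i, p i = ∑ A ∈ Finset.univ.filter (fun A : Finset (Fin n) => i ∈ A), q A)
    (P : Fin n → Fin n → ℝ)
    (hPq : ∀ i j, P i j =
      ∑ A ∈ Finset.univ.filter (fun A : Finset (Fin n) => i ∈ A ∧ j ∈ A), q A)
    (u : Fin n → ℝ) :
    ∑ A : Finset (Fin n), q A * ((∑ i ∈ A, u i) - ∑ i, p i * u i) ^ 2
      = ∑ i, ∑ j, (P i j - p i * p j) * u i * u j := by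
  have e1 : ∀ i j : Fin n, ∑ A : Finset (Fin n),
      q A * ((if i ∈ A then u i else 0) * (if j ∈ A then u j else 0))
      = P i j * (u i * u j) := by
    intro i j
    rw [hPq i j, Finset.sum_filter, Finset.sum_mul]
    apply Finset.sum_congr rfl
    intro A _
    by_cases h1 : i ∈ A <;> by_cases h2 : j ∈ A <;> simp [h1, h2]
  have e2 : ∀ i : Fin n, ∑ A : Finset (Fin n), q A * (if i ∈ A then u i else 0)
      = p i * u i := by
    intro i
    rw [hpq i, Finset.sum_filter, Finset.sum_mul]
    apply Finset.sum_congr rfl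
    intro A _
    by_cases h1 : i ∈ A <;> simp [h1]
  have key : ∀ i j : Fin n, ∑ A : Finset (Fin n),
      q A * (((if i ∈ A then u i else 0) - p i * u i) *
             ((if j ∈ A then u j else 0) - p j * u j))
      = (P i j - p i * p j) * u i * u j := by
    intro i j
    have expand : ∀ A : Finset (Fin n),
        q A * (((if i ∈ A then u i else 0) - p i * u i) *
               ((if j ∈ A then u j else 0) - p j * u j))
        = q A * ((if i ∈ A then u i else 0) * (if j ∈ A then u j else 0))
          - (p j * u j) * (q A * (if i ∈ A then u i else 0))
          - (p i * u i) * (q A * (if j ∈ A then u j else 0))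
          + (p i * u i * (p j * u j)) * q A := by
      intro A; ring
    rw [Finset.sum_congr rfl (fun A _ => expand A), Finset.sum_add_distrib,
      Finset.sum_sub_distrib, Finset.sum_sub_distrib, ← Finset.mul_sum, ← Finset.mul_sum,
      ← Finset.mul_sum, e1, e2, e2, hq1]
    ring
  have hrepr : ∀ A : Finset (Fin n), (∑ i ∈ A, u i) - ∑ i, p i * u i
      = ∑ i, ((if i ∈ A then u i else 0) - p i * u i) := by
    intro A
    rw [Finset.sum_sub_distrib]
    congr 1
    rw [Finset.sum_ite_mem, Finset.univ_inter]
  calc ∑ A : Finset (Fin n), q A * ((∑ i ∈ A, u i) - ∑ i, p i * u i) ^ 2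
      = ∑ A : Finset (Fin n), ∑ i, ∑ j, q A * (((if i ∈ A then u i else 0) - p i * u i) *
          ((if j ∈ A then u j else 0) - p j * u j)) := by
        apply Finset.sum_congr rfl
        intro A _
        rw [hrepr A, sq, Finset.sum_mul_sum, Finset.mul_sum]
        apply Finset.sum_congr rfl
        intro i _
        rw [Finset.mul_sum]
    _ = ∑ i, ∑ j, ∑ A : Finset (Fin n), q A * (((if i ∈ A then u i else 0) - p i * u i) *
          ((if j ∈ A then u j else 0) - p j * u j)) := by
        rw [Finset.sum_comm]
        apply Finset.sum_congr rfl
        intro i _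
        rw [Finset.sum_comm]
    _ = ∑ i, ∑ j, (P i j - p i * p j) * u i * u j := by
        apply Finset.sum_congr rfl; intro i _
        apply Finset.sum_congr rfl; intro j _
        exact key i j

lemma sampling_variance_bound {d n : ℕ}
    (q : Finset (Fin n) → ℝ) (hq1 : ∑ A : Finset (Fin n), q A = 1)
    (p : Fin n → ℝ)
    (hpq : ∀ i, p i = ∑ A ∈ Finset.univ.filter (fun A : Finset (Fin n) => i ∈ A), q A)
    (P : Fin n → Fin n → ℝ)
    (hPq : ∀ i j, P i j =
      ∑ A ∈ Finset.univ.filter (fun A : Finset (Fin n) => i ∈ A ∧ j ∈ A), q A)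
    (v : Fin n → ℝ)
    (hsamp : ∀ u : Fin n → ℝ,
      ∑ i, ∑ j, (P i j - p i * p j) * u i * u j ≤ ∑ i, p i * v i * u i ^ 2)
    (w : Fin n → EuclideanSpace ℝ (Fin d)) :
    ∑ A : Finset (Fin n), q A * ‖(∑ i ∈ A, w i) - ∑ i, p i • w i‖ ^ 2
      ≤ ∑ i, p i * v i * ‖w i‖ ^ 2 := by
  have hnorm : ∀ z : EuclideanSpace ℝ (Fin d), ‖z‖ ^ 2 = ∑ k, (z k) ^ 2 := by
    intro z
    rw [EuclideanSpace.norm_eq, Real.sq_sqrt (by positivity)]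
    simp [Real.norm_eq_abs, sq_abs]
  have happly : ∀ (A : Finset (Fin n)) (k : Fin d),
      ((∑ i ∈ A, w i) - ∑ i, p i • w i) k = (∑ i ∈ A, w i k) - ∑ i, p i * w i k := by
    intro A k
    simp only [PiLp.sub_apply]
    congr 1
    · induction A using Finset.induction with
      | empty => simp
      | insert a s h ih => simp [Finset.sum_insert h, ih]
    · induction (Finset.univ : Finset (Fin n)) using Finset.induction with
      | empty => simp
      | insert a s h ih => simp [Finset.sum_insert h, ih]
  calc ∑ A : Finset (Fin n), q A * ‖(∑ i ∈ A, w i) - ∑ i, p i • w i‖ ^ 2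
      = ∑ k, ∑ A : Finset (Fin n), q A * ((∑ i ∈ A, w i k) - ∑ i, p i * w i k) ^ 2 := by
        rw [Finset.sum_comm]
        apply Finset.sum_congr rfl
        intro A _
        rw [hnorm, Finset.mul_sum]
        apply Finset.sum_congr rfl
        intro k _
        rw [happly A k]
    _ ≤ ∑ k : Fin d, ∑ i, p i * v i * (w i k) ^ 2 := by
        apply Finset.sum_le_sum
        intro k _
        rw [sampling_scalar q hq1 p hpq P hPq (fun i => w i k)]
        exact hsamp _
    _ = ∑ i, p i * v i * ‖w i‖ ^ 2 := by
        rw [Finset.sum_comm]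
        apply Finset.sum_congr rfl
        intro i _
        rw [hnorm, Finset.mul_sum]

set_option maxHeartbeats 2000000 in
/-- Lemma 5.4. Under the ProxSARAH-AS process within one epoch `j` —
with `f = (1/n)∑ᵢ fᵢ` `L̃`-smooth (`L̃ = (1/n)∑ᵢ Lᵢ > 0`), `F = f + r`, full-gradient
initialization `V₀⁽ʲ⁾ = ∇f(x₀⁽ʲ⁾)`, `x₁⁽ʲ⁾ = x₀⁽ʲ⁾`, the recursive estimator
`Vₜ⁽ʲ⁾ = ∑_{i∈Sₜ⁽ʲ⁾}(1/(n pᵢ))(∇fᵢ(xₜ⁽ʲ⁾) − ∇fᵢ(x_{t−1}⁽ʲ⁾)) + V_{t−1}⁽ʲ⁾` with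
subsets satisfying `P − ppᵀ ⪯ Diag(p∘v)` drawn independently of the past, proximal
updates, and `Q = ∑ᵢ vᵢLᵢ²/(pᵢn²)` — if `(1/2)(1/η − 2L̃) − mQ/(2L̃) > 0`, then
`∑_{t=1}^m E[‖x_{t+1}⁽ʲ⁾ − xₜ⁽ʲ⁾‖²]
  ≤ E[F(x₀⁽ʲ⁾) − F(x_{m+1}⁽ʲ⁾)] / ((1/2)(1/η − 2L̃) − mQ/(2L̃))`. -/
theorem sarah_iterate_distance_bound {d n : ℕ} (hn : 0 < n)
    {Ω : Type*} [m0 : MeasurableSpace Ω] (μ : Measure Ω) [IsProbabilityMeasure μ]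
    (f : Fin n → EuclideanSpace ℝ (Fin d) → ℝ) (L : Fin n → ℝ)
    (hdiff : ∀ i, Differentiable ℝ (f i))
    (hlip : ∀ i, ∀ x₁ x₂ : EuclideanSpace ℝ (Fin d),
      ‖gradient (f i) x₁ - gradient (f i) x₂‖ ≤ L i * ‖x₁ - x₂‖)
    (favg : EuclideanSpace ℝ (Fin d) → ℝ)
    (hfavg : favg = fun x => (1 / (n : ℝ)) * ∑ i, f i x)
    (Lt : ℝ) (hLt : Lt = (1 / (n : ℝ)) * ∑ i, L i) (hLtpos : 0 < Lt)
    (r : EuclideanSpace ℝ (Fin d) → ℝ)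
    (F : EuclideanSpace ℝ (Fin d) → ℝ) (hF : F = fun x => favg x + r x)
    (q : Finset (Fin n) → ℝ) (hq0 : ∀ A, 0 ≤ q A) (hq1 : ∑ A : Finset (Fin n), q A = 1)
    (p : Fin n → ℝ) (hppos : ∀ i, 0 < p i)
    (hpq : ∀ i, p i = ∑ A ∈ Finset.univ.filter (fun A : Finset (Fin n) => i ∈ A), q A)
    (P : Fin n → Fin n → ℝ)
    (hPq : ∀ i j, P i j =
      ∑ A ∈ Finset.univ.filter (fun A : Finset (Fin n) => i ∈ A ∧ j ∈ A), q A)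
    (v : Fin n → ℝ)
    (hsamp : ∀ u : Fin n → ℝ,
      ∑ i, ∑ j, (P i j - p i * p j) * u i * u j ≤ ∑ i, p i * v i * u i ^ 2)
    (J m : ℕ) (hJ : 0 < J) (hm : 0 < m)
    (x V : ℕ → ℕ → Ω → EuclideanSpace ℝ (Fin d))
    (S : ℕ → ℕ → Ω → Finset (Fin n))
    (hx10 : ∀ j ∈ Finset.Icc 1 J, ∀ ω, x j 1 ω = x j 0 ω)
    (hV0 : ∀ j ∈ Finset.Icc 1 J, ∀ ω, V j 0 ω = gradient favg (x j 0 ω))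
    (𝓖 : ℕ → ℕ → MeasurableSpace Ω) (h𝓖 : ∀ j t, 𝓖 j t ≤ m0)
    (hmeas : ∀ j ∈ Finset.Icc 1 J, ∀ t ∈ Finset.Icc 1 m,
      StronglyMeasurable[𝓖 j t] (x j t) ∧ StronglyMeasurable[𝓖 j t] (x j (t - 1)) ∧
        StronglyMeasurable[𝓖 j t] (V j (t - 1)))
    (hSmeas : ∀ j ∈ Finset.Icc 1 J, ∀ t ∈ Finset.Icc 1 m, ∀ A : Finset (Fin n),
      MeasurableSet {ω | S j t ω = A})
    (hSlaw : ∀ j ∈ Finset.Icc 1 J, ∀ t ∈ Finset.Icc 1 m, ∀ A : Finset (Fin n),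
      μ[({ω | S j t ω = A}).indicator (fun _ => (1 : ℝ)) | 𝓖 j t] =ᵐ[μ] fun _ => q A)
    (hVrec : ∀ j ∈ Finset.Icc 1 J, ∀ t ∈ Finset.Icc 1 m, ∀ ω,
      V j t ω = (∑ i ∈ S j t ω, (1 / ((n : ℝ) * p i)) •
          (gradient (f i) (x j t ω) - gradient (f i) (x j (t - 1) ω))) + V j (t - 1) ω)
    (hL2 : ∀ j ∈ Finset.Icc 1 J, ∀ t ∈ Finset.Icc 0 (m + 1),
      MemLp (x j t) 2 μ ∧ MemLp (V j t) 2 μ)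
    (hFint : ∀ j ∈ Finset.Icc 1 J, ∀ t ∈ Finset.Icc 0 (m + 1),
      Integrable (fun ω => F (x j t ω)) μ)
    (Q : ℝ) (hQ : Q = ∑ i, v i * L i ^ 2 / (p i * (n : ℝ) ^ 2))
    (η : ℝ) (hη : 0 < η)
    (hcond : 0 < (1 / 2) * (1 / η - 2 * Lt) - (m : ℝ) * Q / (2 * Lt))
    (hupdate : ∀ j ∈ Finset.Icc 1 J, ∀ t ∈ Finset.Icc 1 m, ∀ ω,
      ∀ y : EuclideanSpace ℝ (Fin d),
      r (x j (t + 1) ω) + (inner ℝ (V j t ω) (x j (t + 1) ω - x j t ω) : ℝ)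
          + (1 / (2 * η)) * ‖x j (t + 1) ω - x j t ω‖ ^ 2
        ≤ r y + (inner ℝ (V j t ω) (y - x j t ω) : ℝ)
          + (1 / (2 * η)) * ‖y - x j t ω‖ ^ 2) :
    ∀ j ∈ Finset.Icc 1 J,
      ∑ t ∈ Finset.Icc 1 m, ∫ ω, ‖x j (t + 1) ω - x j t ω‖ ^ 2 ∂μ
        ≤ (∫ ω, (F (x j 0 ω) - F (x j (m + 1) ω)) ∂μ)
            / ((1 / 2) * (1 / η - 2 * Lt) - (m : ℝ) * Q / (2 * Lt)) := by
  classical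
  intro j hj
  have hn0 : (0:ℝ) < (n:ℝ) := by exact_mod_cast hn
  set G : EuclideanSpace ℝ (Fin d) → EuclideanSpace ℝ (Fin d) :=
    fun z => (1 / (n:ℝ)) • ∑ i, gradient (f i) z with hGdef
  have hgrad : ∀ z, HasGradientAt favg (G z) z := by
    intro z
    rw [hasGradientAt_iff_hasFDerivAt]
    have h2 : HasFDerivAt (fun y => ∑ i, f i y)
        (∑ i, (InnerProductSpace.toDual ℝ (EuclideanSpace ℝ (Fin d))) (gradient (f i) z)) z :=
      HasFDerivAt.fun_sum (fun i _ => (hdiff i z).hasGradientAt)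
    have h3 := h2.const_mul (1 / (n:ℝ))
    have h4 : (InnerProductSpace.toDual ℝ (EuclideanSpace ℝ (Fin d))) (G z)
        = (1 / (n:ℝ)) • ∑ i, (InnerProductSpace.toDual ℝ (EuclideanSpace ℝ (Fin d)))
            (gradient (f i) z) := by
      simp only [hGdef, _root_.map_smul, map_sum]
    rw [hfavg, h4]
    exact h3
  have hgrad_eq : ∀ z, gradient favg z = G z := fun z => (hgrad z).gradient
  have hfavg_diff : Differentiable ℝ favg := fun z => (hgrad z).differentiableAt
  have hGlip : ∀ a b, ‖G a - G b‖ ≤ Lt * ‖a - b‖ := by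
    intro a b
    have h1 : G a - G b = (1 / (n:ℝ)) • ∑ i, (gradient (f i) a - gradient (f i) b) := by
      simp only [hGdef]
      rw [← smul_sub, ← Finset.sum_sub_distrib]
    rw [h1, norm_smul, Real.norm_eq_abs, abs_of_pos (by positivity)]
    calc (1/(n:ℝ)) * ‖∑ i, (gradient (f i) a - gradient (f i) b)‖
        ≤ (1/(n:ℝ)) * ∑ i, L i * ‖a - b‖ := by
          apply mul_le_mul_of_nonneg_left _ (by positivity)
          exact (norm_sum_le _ _).trans (Finset.sum_le_sum fun i _ => hlip i a b)
      _ = Lt * ‖a - b‖ := by rw [hLt, ← Finset.sum_mul]; ring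
  have hGcont : Continuous G := continuous_of_lipbound hGlip
  have hgradcont : ∀ i : Fin n, Continuous (gradient (f i)) :=
    fun i => continuous_of_lipbound (hlip i)
  have hmemX : ∀ t, t ≤ m + 1 → MemLp (x j t) 2 μ :=
    fun t ht => (hL2 j hj t (by simp [ht])).1
  have hmemV : ∀ t, t ≤ m + 1 → MemLp (V j t) 2 μ :=
    fun t ht => (hL2 j hj t (by simp [ht])).2
  have hmemσ : ∀ t, t ≤ m + 1 → MemLp (fun ω => G (x j t ω) - V j t ω) 2 μ :=
    fun t ht => (memLp_comp_of_lipbound hGlip (hmemX t ht)).sub (hmemV t ht)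
  set SS : ℕ → ℝ := fun t => ∫ ω, ‖G (x j t ω) - V j t ω‖ ^ 2 ∂μ with hSS
  set DD : ℕ → ℝ := fun t => ∫ ω, ‖x j (t+1) ω - x j t ω‖ ^ 2 ∂μ with hDD
  set Dtot : ℝ := ∑ t ∈ Finset.Icc 1 m, DD t with hDtotdef
  have hSS0nn : ∀ t, 0 ≤ SS t := fun t => integral_nonneg (fun ω => by positivity)
  have hDD0 : ∀ t, 0 ≤ DD t := fun t => integral_nonneg (fun ω => by positivity)
  have hDtot0 : 0 ≤ Dtot := Finset.sum_nonneg (fun t _ => hDD0 t)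
  have hp1 : ∀ i, p i ≤ 1 := by
    intro i
    rw [hpq i, ← hq1]
    exact Finset.sum_le_sum_of_subset_of_nonneg (Finset.filter_subset _ _)
      (fun A _ _ => hq0 A)
  have hv0 : ∀ i, 0 ≤ v i := by
    intro i
    have hPii : P i i = p i := by
      rw [hPq i i, hpq i]
      congr 1
      apply Finset.filter_congr
      intro A _
      simp
    have h := hsamp (fun k => if k = i then (1:ℝ) else 0)
    beta_reduce at h
    have hL : (∑ k, ∑ l, (P k l - p k * p l) * (if k = i then (1:ℝ) else 0)
        * (if l = i then (1:ℝ) else 0)) = P i i - p i * p i := by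
      rw [Finset.sum_eq_single i (fun b _ hb => by
            apply Finset.sum_eq_zero; intro l _; simp [hb])
          (fun h => absurd (Finset.mem_univ i) h)]
      rw [Finset.sum_eq_single i (fun b _ hb => by simp [hb])
          (fun h => absurd (Finset.mem_univ i) h)]
      simp
    have hR : (∑ k, p k * v k * (if k = i then (1:ℝ) else 0) ^ 2) = p i * v i := by
      rw [Finset.sum_eq_single i (fun b _ hb => by simp [hb])
          (fun h => absurd (Finset.mem_univ i) h)]
      simp
    rw [hL, hR, hPii] at h
    have hpi := hppos i
    have hpi1 := hp1 i
    nlinarith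
  have hQ0 : 0 ≤ Q := by
    rw [hQ]
    apply Finset.sum_nonneg
    intro i _
    have := hv0 i; have := hppos i
    positivity
  have hSS0 : SS 0 = 0 := by
    have hσ0 : ∀ ω, G (x j 0 ω) - V j 0 ω = 0 := by
      intro ω
      rw [hV0 j hj ω, hgrad_eq]
      simp
    rw [hSS]
    simp only [hσ0]
    simp
  have hrec : ∀ t, 1 ≤ t → t ≤ m →
      SS t ≤ SS (t-1) + Q * ∫ ω, ‖x j t ω - x j (t-1) ω‖ ^ 2 ∂μ := by
    intro t ht1 htm
    have htIcc : t ∈ Finset.Icc 1 m := Finset.mem_Icc.mpr ⟨ht1, htm⟩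
    have htm1 : t ≤ m + 1 := by omega
    have htm1' : t - 1 ≤ m + 1 := by omega
    obtain ⟨hxmt, hxmt', hVmt'⟩ := hmeas j hj t htIcc
    set g : Fin n → Ω → EuclideanSpace ℝ (Fin d) :=
      fun i ω => gradient (f i) (x j t ω) - gradient (f i) (x j (t-1) ω) with hgdef
    set B : Finset (Fin n) → Ω → EuclideanSpace ℝ (Fin d) :=
      fun A ω => (∑ i ∈ A, (1 / ((n:ℝ) * p i)) • g i ω)
        - (1/(n:ℝ)) • ∑ i, g i ω with hBdef
    set σp : Ω → EuclideanSpace ℝ (Fin d) :=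
      fun ω => G (x j (t-1) ω) - V j (t-1) ω with hσpdef
    set σc : Ω → EuclideanSpace ℝ (Fin d) :=
      fun ω => G (x j t ω) - V j t ω with hσcdef
    set Bs : Ω → EuclideanSpace ℝ (Fin d) := fun ω => σp ω - σc ω with hBsdef
    have hdecomp : ∀ ω, B (S j t ω) ω = Bs ω := by
      intro ω
      have hGdiff : G (x j t ω) - G (x j (t-1) ω) = (1/(n:ℝ)) • ∑ i, g i ω := by
        simp only [hGdef, hgdef]
        rw [← smul_sub, ← Finset.sum_sub_distrib]
      simp only [hBsdef, hσpdef, hσcdef, hBdef]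
      rw [hVrec j hj t htIcc ω]
      simp only [hgdef] at hGdiff ⊢
      rw [← hGdiff]
      abel
    have hmemg : ∀ i : Fin n, MemLp (g i) 2 μ := by
      intro i
      simp only [hgdef]
      exact (memLp_comp_of_lipbound (hlip i) (hmemX t htm1)).sub
        (memLp_comp_of_lipbound (hlip i) (hmemX (t-1) htm1'))
    have hmemB : ∀ A : Finset (Fin n), MemLp (B A) 2 μ := by
      intro A
      simp only [hBdef]
      apply MemLp.sub
      · exact memLp_finset_sum A (fun i _ => ((hmemg i).const_smul (1 / ((n:ℝ) * p i))))
      · exact (memLp_finset_sum Finset.univ (fun i _ => hmemg i)).const_smul (1/(n:ℝ))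
    have hmemσp : MemLp σp 2 μ := by
      simp only [hσpdef]; exact hmemσ (t-1) htm1'
    have hmemσc : MemLp σc 2 μ := by
      simp only [hσcdef]; exact hmemσ t htm1
    have hmemBs : MemLp Bs 2 μ := by
      simp only [hBsdef]; exact hmemσp.sub hmemσc
    have hSMσp : StronglyMeasurable[𝓖 j t] σp := by
      simp only [hσpdef]
      exact (hGcont.comp_stronglyMeasurable hxmt').sub hVmt'
    have hSMg : ∀ i, StronglyMeasurable[𝓖 j t] (g i) := by
      intro i
      simp only [hgdef]
      exact ((hgradcont i).comp_stronglyMeasurable hxmt).sub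
        ((hgradcont i).comp_stronglyMeasurable hxmt')
    have hSMB : ∀ A, StronglyMeasurable[𝓖 j t] (B A) := by
      intro A
      simp only [hBdef]
      apply StronglyMeasurable.sub
      · have h := Finset.stronglyMeasurable_sum (m := 𝓖 j t) A
          (fun i _ => (hSMg i).const_smul (1 / ((n:ℝ) * p i)))
        have he : (∑ i ∈ A, (1 / ((n:ℝ) * p i)) • g i)
            = fun ω => ∑ i ∈ A, (1 / ((n:ℝ) * p i)) • g i ω := by
          funext ω
          rw [Finset.sum_apply]
          rfl
        rw [← he]
        exact h
      · have h := (Finset.stronglyMeasurable_sum (m := 𝓖 j t) Finset.univ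
          (fun i _ => hSMg i)).const_smul (1/(n:ℝ))
        have he : ((1/(n:ℝ)) • ∑ i, g i) = fun ω => (1/(n:ℝ)) • ∑ i, g i ω := by
          funext ω
          rw [Pi.smul_apply, Finset.sum_apply]
        rw [← he]
        exact h
    have hSMσpB : ∀ A, StronglyMeasurable[𝓖 j t] (fun ω => ⟪σp ω, B A ω⟫_ℝ) :=
      fun A => hSMσp.inner (hSMB A)
    have hSMnB : ∀ A, StronglyMeasurable[𝓖 j t] (fun ω => ‖B A ω‖ ^ 2) := by
      intro A
      have he : (fun ω => ‖B A ω‖ ^ 2) = fun ω => ‖B A ω‖ * ‖B A ω‖ := by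
        funext ω; ring
      rw [he]
      exact (hSMB A).norm.mul (hSMB A).norm
    have hIσpB : ∀ A, Integrable (fun ω => ⟪σp ω, B A ω⟫_ℝ) μ :=
      fun A => integrable_inner_of_memLp hmemσp (hmemB A)
    have hInB : ∀ A, Integrable (fun ω => ‖B A ω‖ ^ 2) μ :=
      fun A => integrable_norm_sq_of_memLp (hmemB A)
    have hIinner : Integrable (fun ω => ⟪σp ω, Bs ω⟫_ℝ) μ :=
      integrable_inner_of_memLp hmemσp hmemBs
    have hIBs2 : Integrable (fun ω => ‖Bs ω‖ ^ 2) μ :=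
      integrable_norm_sq_of_memLp hmemBs
    have hIσp2 : Integrable (fun ω => ‖σp ω‖ ^ 2) μ :=
      integrable_norm_sq_of_memLp hmemσp
    have hSSsplit : SS t = SS (t-1) - 2 * (∫ ω, ⟪σp ω, Bs ω⟫_ℝ ∂μ)
        + ∫ ω, ‖Bs ω‖ ^ 2 ∂μ := by
      have hpt : ∀ ω, ‖G (x j t ω) - V j t ω‖ ^ 2
          = ‖σp ω‖ ^ 2 - 2*⟪σp ω, Bs ω⟫_ℝ + ‖Bs ω‖ ^ 2 := by
        intro ω
        have h1 : G (x j t ω) - V j t ω = σp ω - Bs ω := by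
          simp only [hBsdef, hσcdef]
          abel
        rw [h1, norm_sub_sq_real]
      have e1 : SS t = ∫ ω, (‖σp ω‖ ^ 2 - 2*⟪σp ω, Bs ω⟫_ℝ + ‖Bs ω‖ ^ 2) ∂μ := by
        simp only [hSS]
        exact integral_congr_ae (by filter_upwards with ω; rw [hpt ω])
      have hA' : Integrable (fun ω => ‖σp ω‖ ^ 2 - 2*⟪σp ω, Bs ω⟫_ℝ) μ :=
        hIσp2.sub (hIinner.const_mul 2)
      rw [e1, integral_add hA' hIBs2, integral_sub hIσp2 (hIinner.const_mul 2),
        integral_const_mul]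
    have hptsum : ∀ (H : Finset (Fin n) → Ω → ℝ) (ω : Ω),
        H (S j t ω) ω = ∑ A : Finset (Fin n),
          ({ω' | S j t ω' = A}.indicator (fun _ => (1:ℝ)) ω) * H A ω := by
      intro H ω
      rw [Finset.sum_eq_single (S j t ω)
        (fun A _ hA => by
          have hnm : ω ∉ {ω' | S j t ω' = A} := fun h => hA (Set.mem_setOf.mp h).symm
          rw [Set.indicator_of_notMem hnm, zero_mul])
        (fun h => absurd (Finset.mem_univ _) h)]
      rw [Set.indicator_of_mem
        (show ω ∈ {ω' | S j t ω' = S j t ω} from Set.mem_setOf.mpr rfl)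
        (fun _ => (1:ℝ)), one_mul]
    have hcross : (∫ ω, ⟪σp ω, Bs ω⟫_ℝ ∂μ) = 0 := by
      have h1 : (fun ω => ⟪σp ω, Bs ω⟫_ℝ) = fun ω => ∑ A : Finset (Fin n),
          ({ω' | S j t ω' = A}.indicator (fun _ => (1:ℝ)) ω) * ⟪σp ω, B A ω⟫_ℝ := by
        funext ω
        rw [← hdecomp ω]
        exact hptsum (fun A ω => ⟪σp ω, B A ω⟫_ℝ) ω
      rw [h1, integral_finset_sum Finset.univ
        (fun A _ => integrable_indicator_mul (hSmeas j hj t htIcc A) (hIσpB A))]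
      have h2 : ∀ A ∈ Finset.univ, (∫ ω,
            ({ω' | S j t ω' = A}.indicator (fun _ => (1:ℝ)) ω) * ⟪σp ω, B A ω⟫_ℝ ∂μ)
          = ∫ ω, q A * ⟪σp ω, B A ω⟫_ℝ ∂μ := by
        intro A _
        rw [integral_indicator_mul_of_condexp (h𝓖 j t) (hSmeas j hj t htIcc A)
          (hSlaw j hj t htIcc A) (hSMσpB A) (hIσpB A), integral_const_mul]
      rw [Finset.sum_congr rfl h2,
        ← integral_finset_sum Finset.univ (fun A _ => (hIσpB A).const_mul (q A))]
      have h5 : ∀ ω, ∑ A : Finset (Fin n), q A • B A ω = 0 := by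
        intro ω
        have hfirst : ∑ A : Finset (Fin n), q A • ∑ i ∈ A, (1/((n:ℝ)*p i)) • g i ω
            = (1/(n:ℝ)) • ∑ i, g i ω := by
          have hA : ∀ A : Finset (Fin n), (∑ i ∈ A, (1/((n:ℝ)*p i)) • g i ω)
              = ∑ i, if i ∈ A then (1/((n:ℝ)*p i)) • g i ω else 0 := by
            intro A
            rw [Finset.sum_ite_mem, Finset.univ_inter]
          simp only [hA, Finset.smul_sum]
          rw [Finset.sum_comm]
          have hi : ∀ i : Fin n, (∑ A : Finset (Fin n),
              q A • (if i ∈ A then (1/((n:ℝ)*p i)) • g i ω else 0))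
              = (1/(n:ℝ)) • g i ω := by
            intro i
            have hc : ∀ A : Finset (Fin n),
                q A • (if i ∈ A then (1/((n:ℝ)*p i)) • g i ω else 0)
                = if i ∈ A then (q A * (1/((n:ℝ)*p i))) • g i ω else 0 := by
              intro A
              by_cases h : i ∈ A <;> simp [h, smul_smul]
            rw [Finset.sum_congr rfl (fun A _ => hc A), ← Finset.sum_filter,
              ← Finset.sum_smul, ← Finset.sum_mul, ← hpq i]
            congr 1
            have hpne : p i ≠ 0 := ne_of_gt (hppos i)
            have hnne : (n:ℝ) ≠ 0 := ne_of_gt hn0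
            field_simp
          rw [Finset.sum_congr rfl (fun i _ => hi i), ← Finset.smul_sum]
        have hsecond : ∑ A : Finset (Fin n), q A • ((1/(n:ℝ)) • ∑ i, g i ω)
            = (1/(n:ℝ)) • ∑ i, g i ω := by
          rw [← Finset.sum_smul, hq1, one_smul]
        have hsplit : ∀ A : Finset (Fin n), q A • B A ω
            = q A • (∑ i ∈ A, (1/((n:ℝ)*p i)) • g i ω)
              - q A • ((1/(n:ℝ)) • ∑ i, g i ω) := by
          intro A
          simp only [hBdef]
          rw [smul_sub]
        rw [Finset.sum_congr rfl (fun A _ => hsplit A), Finset.sum_sub_distrib,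
          hfirst, hsecond, sub_self]
      have h4 : (fun ω => ∑ A : Finset (Fin n), q A * ⟪σp ω, B A ω⟫_ℝ)
          = fun _ => (0:ℝ) := by
        funext ω
        calc ∑ A : Finset (Fin n), q A * ⟪σp ω, B A ω⟫_ℝ
            = ⟪σp ω, ∑ A : Finset (Fin n), q A • B A ω⟫_ℝ := by
              rw [inner_sum]
              exact Finset.sum_congr rfl
                (fun A _ => (real_inner_smul_right _ _ _).symm)
          _ = 0 := by rw [h5 ω, inner_zero_right]
      rw [h4]
      simp
    have hIδ2 : Integrable (fun ω => ‖x j t ω - x j (t-1) ω‖ ^ 2) μ :=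
      integrable_norm_sq_of_memLp ((hmemX t htm1).sub (hmemX (t-1) htm1'))
    have hBs2bound : (∫ ω, ‖Bs ω‖ ^ 2 ∂μ)
        ≤ Q * ∫ ω, ‖x j t ω - x j (t-1) ω‖ ^ 2 ∂μ := by
      have h1 : (fun ω => ‖Bs ω‖ ^ 2) = fun ω => ∑ A : Finset (Fin n),
          ({ω' | S j t ω' = A}.indicator (fun _ => (1:ℝ)) ω) * ‖B A ω‖ ^ 2 := by
        funext ω
        rw [← hdecomp ω]
        exact hptsum (fun A ω => ‖B A ω‖ ^ 2) ω
      rw [h1, integral_finset_sum Finset.univ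
        (fun A _ => integrable_indicator_mul (hSmeas j hj t htIcc A) (hInB A))]
      have h2 : ∀ A ∈ Finset.univ, (∫ ω,
            ({ω' | S j t ω' = A}.indicator (fun _ => (1:ℝ)) ω) * ‖B A ω‖ ^ 2 ∂μ)
          = ∫ ω, q A * ‖B A ω‖ ^ 2 ∂μ := by
        intro A _
        rw [integral_indicator_mul_of_condexp (h𝓖 j t) (hSmeas j hj t htIcc A)
          (hSlaw j hj t htIcc A) (hSMnB A) (hInB A), integral_const_mul]
      rw [Finset.sum_congr rfl h2,
        ← integral_finset_sum Finset.univ (fun A _ => (hInB A).const_mul (q A))]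
      have hptw : ∀ ω, (∑ A : Finset (Fin n), q A * ‖B A ω‖ ^ 2)
          ≤ Q * ‖x j t ω - x j (t-1) ω‖ ^ 2 := by
        intro ω
        have hs := sampling_variance_bound q hq1 p hpq P hPq v hsamp
          (fun i => (1/((n:ℝ)*p i)) • g i ω)
        have hmean : (∑ i, p i • ((1/((n:ℝ)*p i)) • g i ω))
            = (1/(n:ℝ)) • ∑ i, g i ω := by
          have hc : ∀ i : Fin n, p i • ((1/((n:ℝ)*p i)) • g i ω)
              = (1/(n:ℝ)) • g i ω := by
            intro i
            rw [smul_smul]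
            congr 1
            have hpne : p i ≠ 0 := ne_of_gt (hppos i)
            have hnne : (n:ℝ) ≠ 0 := ne_of_gt hn0
            field_simp
          rw [Finset.sum_congr rfl (fun i _ => hc i), ← Finset.smul_sum]
        rw [hmean] at hs
        have hBform : ∀ A : Finset (Fin n),
            ((∑ i ∈ A, (1/((n:ℝ)*p i)) • g i ω) - (1/(n:ℝ)) • ∑ i, g i ω) = B A ω := by
          intro A
          simp only [hBdef]
        simp only [hBform] at hs
        refine hs.trans ?_
        rw [hQ, Finset.sum_mul]
        apply Finset.sum_le_sum
        intro i _
        have hgb : ‖g i ω‖ ^ 2 ≤ L i ^ 2 * ‖x j t ω - x j (t-1) ω‖ ^ 2 := by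
          have hl := hlip i (x j t ω) (x j (t-1) ω)
          have h0 : (0:ℝ) ≤ ‖g i ω‖ := norm_nonneg _
          have hgeq : ‖g i ω‖ = ‖gradient (f i) (x j t ω) - gradient (f i) (x j (t-1) ω)‖ := by
            simp only [hgdef]
          rw [hgeq]
          nlinarith [norm_nonneg (x j t ω - x j (t-1) ω), hgeq ▸ h0]
        have hvi := hv0 i
        have hpi := hppos i
        calc p i * v i * ‖(1/((n:ℝ)*p i)) • g i ω‖ ^ 2
            = (v i / (p i * (n:ℝ) ^ 2)) * ‖g i ω‖ ^ 2 := by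
              rw [norm_smul, Real.norm_eq_abs, abs_of_pos (by positivity), mul_pow]
              have hpne : p i ≠ 0 := ne_of_gt (hppos i)
              have hnne : (n:ℝ) ≠ 0 := ne_of_gt hn0
              field_simp
          _ ≤ (v i / (p i * (n:ℝ) ^ 2)) * (L i ^ 2 * ‖x j t ω - x j (t-1) ω‖ ^ 2) := by
              apply mul_le_mul_of_nonneg_left hgb (by positivity)
          _ = v i * L i ^ 2 / (p i * (n:ℝ) ^ 2) * ‖x j t ω - x j (t-1) ω‖ ^ 2 := by
              ring
      calc (∫ ω, ∑ A : Finset (Fin n), q A * ‖B A ω‖ ^ 2 ∂μ)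
          ≤ ∫ ω, Q * ‖x j t ω - x j (t-1) ω‖ ^ 2 ∂μ := by
            apply integral_mono (integrable_finset_sum Finset.univ
              (fun A _ => (hInB A).const_mul (q A))) (hIδ2.const_mul Q)
            intro ω
            exact hptw ω
        _ = Q * ∫ ω, ‖x j t ω - x j (t-1) ω‖ ^ 2 ∂μ := integral_const_mul _ _
    rw [hSSsplit, hcross, mul_zero, sub_zero]
    linarith [hBs2bound]
  have claimA : ∀ t, t ≤ m → SS t ≤ Q * Dtot := by
    have hpartial : ∀ t, t ≤ m →
        SS t ≤ Q * ∑ u ∈ Finset.Icc 2 t, ∫ ω, ‖x j u ω - x j (u-1) ω‖ ^ 2 ∂μ := by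
      intro t
      induction t with
      | zero => intro _; rw [hSS0]; simp
      | succ k ih =>
        intro hle
        have h1 := hrec (k+1) (by omega) hle
        rcases Nat.eq_zero_or_pos k with hk0 | hkpos
        · subst hk0
          have hzero : (∫ ω, ‖x j 1 ω - x j 0 ω‖ ^ 2 ∂μ) = 0 := by
            have hz : ∀ ω, ‖x j 1 ω - x j 0 ω‖ ^ 2 = (0:ℝ) := by
              intro ω; rw [hx10 j hj ω]; simp
            calc (∫ ω, ‖x j 1 ω - x j 0 ω‖ ^ 2 ∂μ) = ∫ _, (0:ℝ) ∂μ := by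
                  apply integral_congr_ae; filter_upwards with ω; rw [hz ω]
              _ = 0 := integral_zero _ _
          have h1' : SS 1 ≤ SS 0 + Q * ∫ ω, ‖x j 1 ω - x j 0 ω‖ ^ 2 ∂μ := h1
          rw [hSS0, hzero, mul_zero, add_zero] at h1'
          have hempty : Finset.Icc 2 1 = (∅ : Finset ℕ) := by
            apply Finset.Icc_eq_empty; omega
          rw [hempty, Finset.sum_empty, mul_zero]
          exact h1'
        · have h2 := ih (by omega)
          have hIcc : Finset.Icc 2 (k+1) = insert (k+1) (Finset.Icc 2 k) := by
            ext a
            simp only [Finset.mem_Icc, Finset.mem_insert]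
            omega
          rw [hIcc, Finset.sum_insert (by simp only [Finset.mem_Icc]; omega), mul_add]
          have h1' : SS (k+1) ≤ SS k + Q * ∫ ω, ‖x j (k+1) ω - x j k ω‖ ^ 2 ∂μ := by
            have hk1 : k + 1 - 1 = k := by omega
            rw [hk1] at h1
            exact h1
          have hterm : (∫ ω, ‖x j (k+1) ω - x j ((k+1)-1) ω‖ ^ 2 ∂μ)
              = ∫ ω, ‖x j (k+1) ω - x j k ω‖ ^ 2 ∂μ := by
            have hk1 : k + 1 - 1 = k := by omega
            rw [hk1]
          rw [hterm]
          linarith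
    intro t htm
    refine (hpartial t htm).trans (mul_le_mul_of_nonneg_left ?_ hQ0)
    rw [hDtotdef]
    have hrew : (∑ u ∈ Finset.Icc 2 t, ∫ ω, ‖x j u ω - x j (u-1) ω‖ ^ 2 ∂μ)
        = ∑ u ∈ Finset.Icc 1 (t-1), DD u := by
      apply Finset.sum_nbij' (fun u => u - 1) (fun u => u + 1)
      · intro a ha; simp only [Finset.mem_Icc] at *; omega
      · intro a ha; simp only [Finset.mem_Icc] at *; omega
      · intro a ha; simp only [Finset.mem_Icc] at ha; omega
      · intro a ha; omega
      · intro a ha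
        simp only [Finset.mem_Icc] at ha
        simp only [hDD]
        have h1 : a - 1 + 1 = a := by omega
        rw [h1]
    rw [hrew]
    apply Finset.sum_le_sum_of_subset_of_nonneg
    · apply Finset.Icc_subset_Icc le_rfl; omega
    · intro u _ _; exact hDD0 u
  have hdescent : ∀ t ∈ Finset.Icc 1 m,
      ((1:ℝ)/2) * (1/η - 2*Lt) * DD t ≤
        (∫ ω, F (x j t ω) ∂μ) - (∫ ω, F (x j (t+1) ω) ∂μ) + (1/(2*Lt)) * SS t := by
    intro t htIcc
    have htm : t ≤ m := (Finset.mem_Icc.mp htIcc).2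
    have hmem1 : t ≤ m + 1 := by omega
    have hmem2 : t + 1 ≤ m + 1 := by omega
    have hpt : ∀ ω, F (x j (t+1) ω) ≤ F (x j t ω)
        + (1/(2*Lt)) * ‖G (x j t ω) - V j t ω‖ ^ 2
        - (1/(2*η) - Lt) * ‖x j (t+1) ω - x j t ω‖ ^ 2 := by
      intro ω
      have hd := descent_lemma_s12 favg Lt (le_of_lt hLtpos) hfavg_diff
        (fun a b => by rw [hgrad_eq, hgrad_eq]; exact hGlip a b) (x j t ω) (x j (t+1) ω)
      rw [hgrad_eq] at hd
      have hu := hupdate j hj t htIcc ω (x j t ω)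
      rw [sub_self, inner_zero_right, norm_zero] at hu
      have hy := young_inner' (G (x j t ω) - V j t ω) (x j (t+1) ω - x j t ω) hLtpos
      have hsplit : ⟪G (x j t ω) - V j t ω, x j (t+1) ω - x j t ω⟫_ℝ
          = ⟪G (x j t ω), x j (t+1) ω - x j t ω⟫_ℝ
            - ⟪V j t ω, x j (t+1) ω - x j t ω⟫_ℝ := inner_sub_left _ _ _
      rw [hF]
      simp only []
      rw [hF] at *
      nlinarith [hd, hu, hy, hsplit]
    have hintF1 : Integrable (fun ω => F (x j t ω)) μ :=
      hFint j hj t (by simp only [Finset.mem_Icc]; omega)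
    have hintF2 : Integrable (fun ω => F (x j (t+1) ω)) μ :=
      hFint j hj (t+1) (by simp only [Finset.mem_Icc]; omega)
    have hintσ : Integrable (fun ω => ‖G (x j t ω) - V j t ω‖ ^ 2) μ :=
      integrable_norm_sq_of_memLp (hmemσ t hmem1)
    have hintΔ : Integrable (fun ω => ‖x j (t+1) ω - x j t ω‖ ^ 2) μ :=
      integrable_norm_sq_of_memLp ((hmemX (t+1) hmem2).sub (hmemX t hmem1))
    have hAB : Integrable (fun ω => F (x j t ω)
        + (1/(2*Lt)) * ‖G (x j t ω) - V j t ω‖ ^ 2) μ :=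
      hintF1.add (hintσ.const_mul (1/(2*Lt)))
    have hC : Integrable (fun ω => (1/(2*η) - Lt) * ‖x j (t+1) ω - x j t ω‖ ^ 2) μ :=
      hintΔ.const_mul (1/(2*η) - Lt)
    have hcomb : Integrable (fun ω => (F (x j t ω)
        + (1/(2*Lt)) * ‖G (x j t ω) - V j t ω‖ ^ 2)
        - (1/(2*η) - Lt) * ‖x j (t+1) ω - x j t ω‖ ^ 2) μ := hAB.sub hC
    have hpt' : ∀ ω, F (x j (t+1) ω) ≤ (F (x j t ω)
        + (1/(2*Lt)) * ‖G (x j t ω) - V j t ω‖ ^ 2)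
        - (1/(2*η) - Lt) * ‖x j (t+1) ω - x j t ω‖ ^ 2 := fun ω => hpt ω
    have hint := integral_mono hintF2 hcomb hpt'
    rw [integral_sub hAB hC, integral_add hintF1 (hintσ.const_mul (1/(2*Lt))),
      integral_const_mul, integral_const_mul] at hint
    have hSSt : SS t = ∫ ω, ‖G (x j t ω) - V j t ω‖ ^ 2 ∂μ := by simp only [hSS]
    have hDDt : DD t = ∫ ω, ‖x j (t+1) ω - x j t ω‖ ^ 2 ∂μ := by simp only [hDD]
    rw [hSSt, hDDt]
    have hr : ((1:ℝ)/2) * (1/η - 2*Lt) * (∫ ω, ‖x j (t+1) ω - x j t ω‖ ^ 2 ∂μ)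
        = (1/(2*η) - Lt) * (∫ ω, ‖x j (t+1) ω - x j t ω‖ ^ 2 ∂μ) := by ring
    rw [hr]
    linarith [hint]
  -- assemble
  have hsum : ((1:ℝ)/2) * (1/η - 2*Lt) * Dtot ≤
      ((∫ ω, F (x j 1 ω) ∂μ) - (∫ ω, F (x j (m+1) ω) ∂μ))
        + (1/(2*Lt)) * ((m:ℝ) * (Q * Dtot)) := by
    have h1 : ∑ t ∈ Finset.Icc 1 m, (((1:ℝ)/2) * (1/η - 2*Lt) * DD t)
        ≤ ∑ t ∈ Finset.Icc 1 m, ((∫ ω, F (x j t ω) ∂μ) - (∫ ω, F (x j (t+1) ω) ∂μ)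
            + (1/(2*Lt)) * SS t) := Finset.sum_le_sum hdescent
    rw [← Finset.mul_sum, Finset.sum_add_distrib] at h1
    have htel : ∀ (a : ℕ → ℝ) (N : ℕ),
        ∑ t ∈ Finset.Icc 1 N, (a t - a (t+1)) = a 1 - a (N+1) := by
      intro a N
      induction N with
      | zero => simp
      | succ k ih => rw [Finset.sum_Icc_succ_top (by omega), ih]; ring
    have htel' : ∑ t ∈ Finset.Icc 1 m,
        ((∫ ω, F (x j t ω) ∂μ) - (∫ ω, F (x j (t+1) ω) ∂μ))
        = (∫ ω, F (x j 1 ω) ∂μ) - (∫ ω, F (x j (m+1) ω) ∂μ) :=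
      htel (fun t => ∫ ω, F (x j t ω) ∂μ) m
    rw [htel'] at h1
    have h2 : ∑ t ∈ Finset.Icc 1 m, (1/(2*Lt)) * SS t
        ≤ (1/(2*Lt)) * ((m:ℝ) * (Q * Dtot)) := by
      rw [← Finset.mul_sum]
      apply mul_le_mul_of_nonneg_left _ (by positivity)
      have h3 : ∑ t ∈ Finset.Icc 1 m, SS t ≤ (Finset.Icc 1 m).card • (Q * Dtot) :=
        Finset.sum_le_card_nsmul _ _ _ (fun t ht => claimA t (Finset.mem_Icc.mp ht).2)
      rw [Nat.card_Icc, nsmul_eq_mul] at h3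
      have hc : ((m + 1 - 1 : ℕ) : ℝ) = (m:ℝ) := by norm_num
      rw [hc] at h3
      linarith [h3]
    have hDt : ∑ t ∈ Finset.Icc 1 m, DD t = Dtot := by rw [hDtotdef]
    rw [hDt] at h1
    linarith [h1, h2]
  have hx01 : (∫ ω, F (x j 1 ω) ∂μ) = ∫ ω, F (x j 0 ω) ∂μ := by
    apply integral_congr_ae
    filter_upwards with ω
    rw [hx10 j hj ω]
  have hRHS : (∫ ω, (F (x j 0 ω) - F (x j (m+1) ω)) ∂μ)
      = (∫ ω, F (x j 0 ω) ∂μ) - ∫ ω, F (x j (m+1) ω) ∂μ :=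
    integral_sub (hFint j hj 0 (by simp)) (hFint j hj (m+1) (by simp))
  have hgoalL : ∑ t ∈ Finset.Icc 1 m, ∫ ω, ‖x j (t + 1) ω - x j t ω‖ ^ 2 ∂μ = Dtot := by
    rw [hDtotdef]
  show Dtot ≤ _
  rw [hRHS, le_div_iff₀ hcond]
  have hring : ((m:ℝ) * Q / (2 * Lt)) * Dtot = (1/(2*Lt)) * ((m:ℝ) * (Q * Dtot)) := by
    ring
  nlinarith [hsum, hx01]
end

section
/- (Variance bound for the SPIDER estimator) Under the ProxSPIDER-AS process — where the epoch's initial estimator is V_0^{(j)} = ∑_{i∈S^{(j)}} (1/(n p'_i)) ∇f_i(x_0^{(j)}) with S^{(j)} a random subset with inclusion probabilities p'_i > 0 and pairwise probabilities P' satisfying P' − p'p'ᵀ ⪯ Diag(p'∘v'), and the inner recursion is V_t^{(j)} = ∑_{i∈S_t^{(j)}} (1/(n p_i))(∇f_i(x_t^{(j)}) − ∇f_i(x_{t−1}^{(j)})) + V_{t−1}^{(j)} with S_t^{(j)} drawn independently of the past with inclusion probabilities p_i > 0 and pairwise probabilities P satisfying P − ppᵀ ⪯ Diag(p∘v); each f_i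 is differentiable with L_i-Lipschitz gradient and ‖∇f_i(x)‖ ≤ G_i for all x — it holds for every 1 ≤ t ≤ m and every epoch j that E[‖V_t^{(j)} − ∇f(x_t^{(j)})‖²] ≤ Q·∑_{k=1}^t E[‖x_k^{(j)} − x_{k−1}^{(j)}‖²] + Q', where Q = ∑_{i=1}^n v_i L_i²/(p_i n²), Q' = ∑_{i=1}^n v'_i G_i²/(p'_i n²), and f = (1/n)∑_{i=1}^n f_i. -/
open MeasureTheory Filter Finset

lemma spider_samp_mean {n d : ℕ} (hn : 0 < n)
    (q : Finset (Fin n) → ℝ)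
    (p : Fin n → ℝ) (hppos : ∀ i, 0 < p i)
    (hpq : ∀ i, p i = ∑ A ∈ Finset.univ.filter (fun A : Finset (Fin n) => i ∈ A), q A)
    (w : Fin n → EuclideanSpace ℝ (Fin d)) :
    ∑ A : Finset (Fin n), q A • (∑ i ∈ A, (1 / ((n : ℝ) * p i)) • w i)
      = (1 / (n : ℝ)) • ∑ i, w i := by
  have hne : (n : ℝ) ≠ 0 := Nat.cast_ne_zero.2 hn.ne'
  calc ∑ A : Finset (Fin n), q A • (∑ i ∈ A, (1 / ((n : ℝ) * p i)) • w i)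
      = ∑ A : Finset (Fin n), ∑ i, (if i ∈ A then (q A * (1 / ((n : ℝ) * p i))) • w i else 0) := by
        refine Finset.sum_congr rfl fun A _ => ?_
        rw [Finset.smul_sum, ← Finset.sum_filter]
        simp only [Finset.filter_mem_eq_inter, Finset.univ_inter]
        refine Finset.sum_congr rfl fun i _ => by rw [smul_smul]
    _ = ∑ i, ∑ A : Finset (Fin n), (if i ∈ A then (q A * (1 / ((n : ℝ) * p i))) • w i else 0) :=
        Finset.sum_comm
    _ = ∑ i, (p i * (1 / ((n : ℝ) * p i))) • w i := by
        refine Finset.sum_congr rfl fun i _ => ?_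
        rw [← Finset.sum_filter, ← Finset.sum_smul, ← Finset.sum_mul, ← hpq]
    _ = (1 / (n : ℝ)) • ∑ i, w i := by
        rw [Finset.smul_sum]
        refine Finset.sum_congr rfl fun i _ => ?_
        congr 1
        have := (hppos i).ne'
        field_simp

lemma spider_inner_sum {n d : ℕ} (a : Fin n → EuclideanSpace ℝ (Fin d)) (A B : Finset (Fin n)) :
    (inner ℝ (∑ i ∈ A, a i) (∑ j ∈ B, a j) : ℝ) = ∑ i ∈ A, ∑ j ∈ B, inner ℝ (a i) (a j) := by
  rw [sum_inner]
  exact Finset.sum_congr rfl fun i _ => by rw [inner_sum]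

lemma spider_double_ite {n : ℕ} {M : Type*} [AddCommMonoid M] (A : Finset (Fin n))
    (c : Fin n → Fin n → M) :
    ∑ i ∈ A, ∑ j ∈ A, c i j = ∑ i, ∑ j, if i ∈ A ∧ j ∈ A then c i j else 0 := by
  have hout : ∀ (X : Fin n → M), ∑ i ∈ A, X i = ∑ i, if i ∈ A then X i else 0 := by
    intro X
    rw [← Finset.sum_filter, Finset.filter_mem_eq_inter, Finset.univ_inter]
  rw [hout]
  refine Finset.sum_congr rfl fun i _ => ?_
  by_cases hi : i ∈ A
  · simp only [hi, if_true, true_and]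
    exact hout _
  · simp [hi]

lemma spider_samp_var {n d : ℕ} (hn : 0 < n)
    (q : Finset (Fin n) → ℝ) (hq1 : ∑ A : Finset (Fin n), q A = 1)
    (p : Fin n → ℝ) (hppos : ∀ i, 0 < p i)
    (hpq : ∀ i, p i = ∑ A ∈ Finset.univ.filter (fun A : Finset (Fin n) => i ∈ A), q A)
    (P : Fin n → Fin n → ℝ)
    (hPq : ∀ i j, P i j =
      ∑ A ∈ Finset.univ.filter (fun A : Finset (Fin n) => i ∈ A ∧ j ∈ A), q A)
    (v : Fin n → ℝ)
    (hsamp : ∀ u : Fin n → ℝ,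
      ∑ i, ∑ j, (P i j - p i * p j) * u i * u j ≤ ∑ i, p i * v i * u i ^ 2)
    (w : Fin n → EuclideanSpace ℝ (Fin d)) :
    ∑ A : Finset (Fin n),
        q A * ‖(∑ i ∈ A, (1 / ((n : ℝ) * p i)) • w i) - (1 / (n : ℝ)) • ∑ i, w i‖ ^ 2
      ≤ ∑ i, v i * ‖w i‖ ^ 2 / (p i * (n : ℝ) ^ 2) := by
  have hne : (n : ℝ) ≠ 0 := Nat.cast_ne_zero.2 hn.ne'
  set a : Fin n → EuclideanSpace ℝ (Fin d) := fun i => (1 / ((n : ℝ) * p i)) • w i with ha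
  set z : EuclideanSpace ℝ (Fin d) := (1 / (n : ℝ)) • ∑ i, w i with hz
  have hzp : z = ∑ i, p i • a i := by
    rw [hz, Finset.smul_sum]
    refine Finset.sum_congr rfl fun i _ => ?_
    rw [ha, smul_smul]
    congr 1
    have := (hppos i).ne'
    field_simp
  have h1 : ∑ A : Finset (Fin n), q A * ‖∑ i ∈ A, a i‖ ^ 2
      = ∑ i, ∑ j, P i j * (inner ℝ (a i) (a j) : ℝ) := by
    calc ∑ A : Finset (Fin n), q A * ‖∑ i ∈ A, a i‖ ^ 2
        = ∑ A : Finset (Fin n), ∑ i, ∑ j,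
            (if i ∈ A ∧ j ∈ A then q A * (inner ℝ (a i) (a j) : ℝ) else 0) := by
          refine Finset.sum_congr rfl fun A _ => ?_
          rw [← real_inner_self_eq_norm_sq, spider_inner_sum, Finset.mul_sum]
          simp_rw [Finset.mul_sum]
          exact spider_double_ite A _
      _ = ∑ i, ∑ j, ∑ A : Finset (Fin n),
            (if i ∈ A ∧ j ∈ A then q A * (inner ℝ (a i) (a j) : ℝ) else 0) := by
          rw [Finset.sum_comm]
          exact Finset.sum_congr rfl fun i _ => Finset.sum_comm
      _ = ∑ i, ∑ j, P i j * (inner ℝ (a i) (a j) : ℝ) := by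
          refine Finset.sum_congr rfl fun i _ => Finset.sum_congr rfl fun j _ => ?_
          rw [hPq, ← Finset.sum_filter, Finset.sum_mul]
  have h2 : ∑ A : Finset (Fin n), q A • (∑ i ∈ A, a i) = z :=
    spider_samp_mean hn q p hppos hpq w
  have h3 : ‖z‖ ^ 2 = ∑ i, ∑ j, (p i * p j) * (inner ℝ (a i) (a j) : ℝ) := by
    rw [← real_inner_self_eq_norm_sq, hzp, spider_inner_sum (fun i => p i • a i)]
    refine Finset.sum_congr rfl fun i _ => Finset.sum_congr rfl fun j _ => ?_
    rw [real_inner_smul_left, real_inner_smul_right]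
    ring
  have key : ∑ A : Finset (Fin n), q A * ‖(∑ i ∈ A, a i) - z‖ ^ 2
      = ∑ i, ∑ j, (P i j - p i * p j) * (inner ℝ (a i) (a j) : ℝ) := by
    calc ∑ A : Finset (Fin n), q A * ‖(∑ i ∈ A, a i) - z‖ ^ 2
        = ∑ A : Finset (Fin n), (q A * ‖∑ i ∈ A, a i‖ ^ 2
            - 2 * (inner ℝ (q A • (∑ i ∈ A, a i)) z : ℝ) + q A * ‖z‖ ^ 2) := by
          refine Finset.sum_congr rfl fun A _ => ?_
          rw [norm_sub_sq_real, real_inner_smul_left]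
          ring
      _ = (∑ A : Finset (Fin n), q A * ‖∑ i ∈ A, a i‖ ^ 2)
            - 2 * (inner ℝ (∑ A : Finset (Fin n), q A • (∑ i ∈ A, a i)) z : ℝ)
            + (∑ A : Finset (Fin n), q A) * ‖z‖ ^ 2 := by
          rw [Finset.sum_add_distrib, Finset.sum_sub_distrib, sum_inner, Finset.mul_sum,
            ← Finset.sum_mul]
      _ = (∑ i, ∑ j, P i j * (inner ℝ (a i) (a j) : ℝ)) - ‖z‖ ^ 2 := by
          rw [h1, h2, hq1, one_mul, real_inner_self_eq_norm_sq]
          ring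
      _ = ∑ i, ∑ j, (P i j - p i * p j) * (inner ℝ (a i) (a j) : ℝ) := by
          rw [h3, ← Finset.sum_sub_distrib]
          refine Finset.sum_congr rfl fun i _ => ?_
          rw [← Finset.sum_sub_distrib]
          refine Finset.sum_congr rfl fun j _ => ?_
          ring
  rw [key]
  have coord : ∀ i j : Fin n, (inner ℝ (a i) (a j) : ℝ) = ∑ c, a i c * a j c := by
    intro i j
    rw [PiLp.inner_apply]
    simp [RCLike.inner_apply]
    exact Finset.sum_congr rfl fun c _ => mul_comm _ _
  calc ∑ i, ∑ j, (P i j - p i * p j) * (inner ℝ (a i) (a j) : ℝ)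
      = ∑ i, ∑ j, ∑ c, (P i j - p i * p j) * a i c * a j c := by
        refine Finset.sum_congr rfl fun i _ => Finset.sum_congr rfl fun j _ => ?_
        rw [coord, Finset.mul_sum]
        exact Finset.sum_congr rfl fun c _ => by ring
    _ = ∑ i, ∑ c, ∑ j, (P i j - p i * p j) * a i c * a j c :=
        Finset.sum_congr rfl fun i _ => Finset.sum_comm
    _ = ∑ c, ∑ i, ∑ j, (P i j - p i * p j) * a i c * a j c := Finset.sum_comm
    _ ≤ ∑ c, ∑ i, p i * v i * a i c ^ 2 := Finset.sum_le_sum fun c _ => hsamp _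
    _ = ∑ i, p i * v i * ‖a i‖ ^ 2 := by
        rw [Finset.sum_comm]
        refine Finset.sum_congr rfl fun i _ => ?_
        rw [← real_inner_self_eq_norm_sq, coord, Finset.mul_sum]
        exact Finset.sum_congr rfl fun c _ => by ring
    _ = ∑ i, v i * ‖w i‖ ^ 2 / (p i * (n : ℝ) ^ 2) := by
        refine Finset.sum_congr rfl fun i _ => ?_
        have hpi := (hppos i).ne'
        have hnorm : ‖a i‖ = (1 / ((n : ℝ) * p i)) * ‖w i‖ := by
          have hnpos : (0:ℝ) < (n:ℝ) := by exact_mod_cast hn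
          rw [ha, norm_smul, Real.norm_eq_abs, abs_of_pos]
          exact div_pos one_pos (mul_pos hnpos (hppos i))
        rw [hnorm]
        field_simp

lemma spider_v_nonneg {n : ℕ}
    (q : Finset (Fin n) → ℝ) (hq0 : ∀ A, 0 ≤ q A) (hq1 : ∑ A : Finset (Fin n), q A = 1)
    (p : Fin n → ℝ) (hppos : ∀ i, 0 < p i)
    (hpq : ∀ i, p i = ∑ A ∈ Finset.univ.filter (fun A : Finset (Fin n) => i ∈ A), q A)
    (P : Fin n → Fin n → ℝ)
    (hPq : ∀ i j, P i j =
      ∑ A ∈ Finset.univ.filter (fun A : Finset (Fin n) => i ∈ A ∧ j ∈ A), q A)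
    (v : Fin n → ℝ)
    (hsamp : ∀ u : Fin n → ℝ,
      ∑ i, ∑ j, (P i j - p i * p j) * u i * u j ≤ ∑ i, p i * v i * u i ^ 2)
    (i : Fin n) : 0 ≤ v i := by
  have hPii : P i i = p i := by
    rw [hPq, hpq]
    congr 1
    · exact Finset.filter_congr fun A _ => by simp
  have hp1 : p i ≤ 1 := by
    rw [hpq, ← hq1]
    exact Finset.sum_le_sum_of_subset_of_nonneg (Finset.filter_subset _ _)
      (fun A _ _ => hq0 A)
  have h := hsamp (fun k => if k = i then 1 else 0)
  have hL : ∑ k, ∑ j, (P k j - p k * p j) * (if k = i then (1:ℝ) else 0) *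
      (if j = i then (1:ℝ) else 0) = P i i - p i * p i := by
    rw [Finset.sum_eq_single i]
    · rw [Finset.sum_eq_single i]
      · simp
      · intro j _ hj; simp [hj]
      · simp
    · intro k _ hk; simp [hk]
    · simp
  have hR : ∑ k, p k * v k * (if k = i then (1:ℝ) else 0) ^ 2 = p i * v i := by
    rw [Finset.sum_eq_single i]
    · simp
    · intro k _ hk; simp [hk]
    · simp
  rw [hL, hR, hPii] at h
  nlinarith [hppos i]

lemma spider_gradient_avg {d n : ℕ}
    (f : Fin n → EuclideanSpace ℝ (Fin d) → ℝ)
    (hdiff : ∀ i, Differentiable ℝ (f i)) (x : EuclideanSpace ℝ (Fin d)) :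
    gradient (fun y => (1 / (n : ℝ)) * ∑ i, f i y) x
      = (1 / (n : ℝ)) • ∑ i, gradient (f i) x := by
  have h1 : HasFDerivAt (fun y => ∑ i, f i y)
      (∑ i, (InnerProductSpace.toDual ℝ (EuclideanSpace ℝ (Fin d))) (gradient (f i) x)) x :=
    HasFDerivAt.fun_sum fun i _ => ((hdiff i x).hasGradientAt).hasFDerivAt
  have h2 := h1.const_mul (1 / (n : ℝ))
  have hg : HasGradientAt (fun y => (1 / (n : ℝ)) * ∑ i, f i y)
      ((1 / (n : ℝ)) • ∑ i, gradient (f i) x) x := by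
    rw [hasGradientAt_iff_hasFDerivAt, _root_.map_smul, map_sum]
    exact h2
  exact ((hg.differentiableAt).hasGradientAt.unique hg)

lemma spider_pullout {Ω : Type*} (𝓖 : MeasurableSpace Ω) [m0 : MeasurableSpace Ω]
    (μ : Measure Ω) [IsProbabilityMeasure μ] (h𝓖 : 𝓖 ≤ m0)
    (T : Set Ω) (hT : MeasurableSet[m0] T) (c : ℝ)
    (hlaw : μ[T.indicator (fun _ => (1 : ℝ)) | 𝓖] =ᵐ[μ] fun _ => c)
    (H : Ω → ℝ) (hH : StronglyMeasurable[𝓖] H) (hHi : Integrable H μ) :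
    ∫ ω, T.indicator H ω ∂μ = c * ∫ ω, H ω ∂μ := by
  haveI : SigmaFinite (μ.trim h𝓖) := by
    have : IsFiniteMeasure (μ.trim h𝓖) := isFiniteMeasure_trim h𝓖
    infer_instance
  have hind : Integrable (T.indicator (fun _ => (1 : ℝ))) μ :=
    (integrable_const (1 : ℝ)).indicator hT
  have hmul : (fun ω => H ω * T.indicator (fun _ => (1 : ℝ)) ω) = T.indicator H := by
    funext ω
    by_cases hω : ω ∈ T
    · simp [Set.indicator_of_mem hω]
    · simp [Set.indicator_of_notMem hω]
  have hint : Integrable (H * T.indicator fun _ => (1 : ℝ)) μ := by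
    have := hHi.indicator hT
    rwa [show (H * T.indicator fun _ => (1 : ℝ)) = T.indicator H from hmul]
  have hce := condExp_mul_of_stronglyMeasurable_left hH hint hind
  have h1 : ∫ ω, (H * T.indicator fun _ => (1 : ℝ)) ω ∂μ
      = ∫ ω, (μ[(H * T.indicator fun _ => (1 : ℝ)) | 𝓖]) ω ∂μ :=
    (integral_condExp h𝓖).symm
  have h2 : ∫ ω, (μ[(H * T.indicator fun _ => (1 : ℝ)) | 𝓖]) ω ∂μ
      = ∫ ω, H ω * c ∂μ := by
    refine integral_congr_ae (hce.trans ?_)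
    filter_upwards [hlaw] with ω hω
    simp only [Pi.mul_apply, hω]
  calc ∫ ω, T.indicator H ω ∂μ = ∫ ω, (H * T.indicator fun _ => (1 : ℝ)) ω ∂μ :=
        integral_congr_ae (Eventually.of_forall fun ω => (congrFun hmul ω).symm)
    _ = ∫ ω, H ω * c ∂μ := h1.trans h2
    _ = c * ∫ ω, H ω ∂μ := by rw [integral_mul_const]; ring

lemma spider_decompose {n : ℕ} {Ω : Type*} (𝓖 : MeasurableSpace Ω)
    [m0 : MeasurableSpace Ω] (μ : Measure Ω) [IsProbabilityMeasure μ] (h𝓖 : 𝓖 ≤ m0)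
    (S : Ω → Finset (Fin n)) (hSmeas : ∀ A, MeasurableSet[m0] {ω | S ω = A})
    (q : Finset (Fin n) → ℝ)
    (hlaw : ∀ A : Finset (Fin n),
      μ[({ω | S ω = A}).indicator (fun _ => (1 : ℝ)) | 𝓖] =ᵐ[μ] fun _ => q A)
    (F : Finset (Fin n) → Ω → ℝ)
    (hFmeas : ∀ A, StronglyMeasurable[𝓖] (F A)) (hFi : ∀ A, Integrable (F A) μ) :
    ∫ ω, F (S ω) ω ∂μ = ∑ A : Finset (Fin n), q A * ∫ ω, F A ω ∂μ := by
  have hpt : ∀ ω, F (S ω) ω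
      = ∑ A : Finset (Fin n), ({ω' | S ω' = A}).indicator (F A) ω := by
    intro ω
    rw [Finset.sum_eq_single (S ω)]
    · rw [Set.indicator_of_mem (by simp : ω ∈ {ω' | S ω' = S ω})]
    · intro A _ hA
      exact Set.indicator_of_notMem (by simpa using fun h => hA h.symm) _
    · simp
  calc ∫ ω, F (S ω) ω ∂μ
      = ∫ ω, ∑ A : Finset (Fin n), ({ω' | S ω' = A}).indicator (F A) ω ∂μ := by
        exact integral_congr_ae (Eventually.of_forall fun ω => hpt ω)
    _ = ∑ A : Finset (Fin n), ∫ ω, ({ω' | S ω' = A}).indicator (F A) ω ∂μ :=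
        integral_finset_sum _ fun A _ => (hFi A).indicator (hSmeas A)
    _ = ∑ A : Finset (Fin n), q A * ∫ ω, F A ω ∂μ :=
        Finset.sum_congr rfl fun A _ =>
          spider_pullout 𝓖 μ h𝓖 _ (hSmeas A) (q A) (hlaw A) (F A) (hFmeas A) (hFi A)

set_option maxHeartbeats 2000000 in
/-- variance bound for the SPIDER estimator. Under the ProxSPIDER-AS
process — with the epoch's initial estimator `V₀⁽ʲ⁾ = ∑_{i∈S⁽ʲ⁾}(1/(n p'ᵢ))∇fᵢ(x₀⁽ʲ⁾)`,
where `S⁽ʲ⁾` has law `q'` with inclusion probabilities `p'ᵢ > 0` and pairwise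
probabilities `P'` satisfying `P' − p'p'ᵀ ⪯ Diag(p'∘v')`, and inner recursion
`Vₜ⁽ʲ⁾ = ∑_{i∈Sₜ⁽ʲ⁾}(1/(n pᵢ))(∇fᵢ(xₜ⁽ʲ⁾) − ∇fᵢ(x_{t−1}⁽ʲ⁾)) + V_{t−1}⁽ʲ⁾`, where
`Sₜ⁽ʲ⁾` is drawn independently of the past with law `q` satisfying
`P − ppᵀ ⪯ Diag(p∘v)`; each `fᵢ` differentiable with `Lᵢ`-Lipschitz gradient and
`‖∇fᵢ(x)‖ ≤ Gᵢ` — for every `1 ≤ t ≤ m` and every epoch `j`,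
`E[‖Vₜ⁽ʲ⁾ − ∇f(xₜ⁽ʲ⁾)‖²] ≤ Q ∑_{k=1}^t E[‖xₖ⁽ʲ⁾ − x_{k−1}⁽ʲ⁾‖²] + Q'`, where
`Q = ∑ᵢ vᵢLᵢ²/(pᵢn²)` and `Q' = ∑ᵢ v'ᵢGᵢ²/(p'ᵢn²)`. -/
theorem spider_estimator_variance_bound {d n : ℕ} (hn : 0 < n)
    {Ω : Type*} [m0 : MeasurableSpace Ω] (μ : Measure Ω) [IsProbabilityMeasure μ]
    (f : Fin n → EuclideanSpace ℝ (Fin d) → ℝ) (L : Fin n → ℝ)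
    (hdiff : ∀ i, Differentiable ℝ (f i))
    (hlip : ∀ i, ∀ x₁ x₂ : EuclideanSpace ℝ (Fin d),
      ‖gradient (f i) x₁ - gradient (f i) x₂‖ ≤ L i * ‖x₁ - x₂‖)
    (G : Fin n → ℝ)
    (hbound : ∀ i, ∀ x : EuclideanSpace ℝ (Fin d), ‖gradient (f i) x‖ ≤ G i)
    (favg : EuclideanSpace ℝ (Fin d) → ℝ)
    (hfavg : favg = fun x => (1 / (n : ℝ)) * ∑ i, f i x)
    -- inner-loop sampling scheme
    (q : Finset (Fin n) → ℝ) (hq0 : ∀ A, 0 ≤ q A) (hq1 : ∑ A : Finset (Fin n), q A = 1)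
    (p : Fin n → ℝ) (hppos : ∀ i, 0 < p i)
    (hpq : ∀ i, p i = ∑ A ∈ Finset.univ.filter (fun A : Finset (Fin n) => i ∈ A), q A)
    (P : Fin n → Fin n → ℝ)
    (hPq : ∀ i j, P i j =
      ∑ A ∈ Finset.univ.filter (fun A : Finset (Fin n) => i ∈ A ∧ j ∈ A), q A)
    (v : Fin n → ℝ)
    (hsamp : ∀ u : Fin n → ℝ,
      ∑ i, ∑ j, (P i j - p i * p j) * u i * u j ≤ ∑ i, p i * v i * u i ^ 2)
    -- outer-loop sampling scheme
    (q' : Finset (Fin n) → ℝ) (hq'0 : ∀ A, 0 ≤ q' A)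
    (hq'1 : ∑ A : Finset (Fin n), q' A = 1)
    (p' : Fin n → ℝ) (hp'pos : ∀ i, 0 < p' i)
    (hp'q : ∀ i, p' i = ∑ A ∈ Finset.univ.filter (fun A : Finset (Fin n) => i ∈ A), q' A)
    (P' : Fin n → Fin n → ℝ)
    (hP'q : ∀ i j, P' i j =
      ∑ A ∈ Finset.univ.filter (fun A : Finset (Fin n) => i ∈ A ∧ j ∈ A), q' A)
    (v' : Fin n → ℝ)
    (hsamp' : ∀ u : Fin n → ℝ,
      ∑ i, ∑ j, (P' i j - p' i * p' j) * u i * u j ≤ ∑ i, p' i * v' i * u i ^ 2)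
    -- the process
    (J m : ℕ) (hJ : 0 < J) (hm : 0 < m)
    (x V : ℕ → ℕ → Ω → EuclideanSpace ℝ (Fin d))
    (S : ℕ → ℕ → Ω → Finset (Fin n)) (S' : ℕ → Ω → Finset (Fin n))
    (hx10 : ∀ j ∈ Finset.Icc 1 J, ∀ ω, x j 1 ω = x j 0 ω)
    (hV0 : ∀ j ∈ Finset.Icc 1 J, ∀ ω,
      V j 0 ω = ∑ i ∈ S' j ω, (1 / ((n : ℝ) * p' i)) • gradient (f i) (x j 0 ω))
    (𝓖 : ℕ → ℕ → MeasurableSpace Ω) (h𝓖 : ∀ j t, 𝓖 j t ≤ m0)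
    (𝓖' : ℕ → MeasurableSpace Ω) (h𝓖' : ∀ j, 𝓖' j ≤ m0)
    (hmeas : ∀ j ∈ Finset.Icc 1 J, ∀ t ∈ Finset.Icc 1 m,
      StronglyMeasurable[𝓖 j t] (x j t) ∧ StronglyMeasurable[𝓖 j t] (x j (t - 1)) ∧
        StronglyMeasurable[𝓖 j t] (V j (t - 1)))
    (hmeas' : ∀ j ∈ Finset.Icc 1 J, StronglyMeasurable[𝓖' j] (x j 0))
    (hSmeas : ∀ j ∈ Finset.Icc 1 J, ∀ t ∈ Finset.Icc 1 m, ∀ A : Finset (Fin n),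
      MeasurableSet {ω | S j t ω = A})
    (hS'meas : ∀ j ∈ Finset.Icc 1 J, ∀ A : Finset (Fin n),
      MeasurableSet {ω | S' j ω = A})
    (hSlaw : ∀ j ∈ Finset.Icc 1 J, ∀ t ∈ Finset.Icc 1 m, ∀ A : Finset (Fin n),
      μ[({ω | S j t ω = A}).indicator (fun _ => (1 : ℝ)) | 𝓖 j t] =ᵐ[μ] fun _ => q A)
    (hS'law : ∀ j ∈ Finset.Icc 1 J, ∀ A : Finset (Fin n),
      μ[({ω | S' j ω = A}).indicator (fun _ => (1 : ℝ)) | 𝓖' j] =ᵐ[μ] fun _ => q' A)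
    (hVrec : ∀ j ∈ Finset.Icc 1 J, ∀ t ∈ Finset.Icc 1 m, ∀ ω,
      V j t ω = (∑ i ∈ S j t ω, (1 / ((n : ℝ) * p i)) •
          (gradient (f i) (x j t ω) - gradient (f i) (x j (t - 1) ω))) + V j (t - 1) ω)
    (hL2 : ∀ j ∈ Finset.Icc 1 J, ∀ t ∈ Finset.Icc 0 m,
      MemLp (x j t) 2 μ ∧ MemLp (V j t) 2 μ)
    (Q Q' : ℝ) (hQ : Q = ∑ i, v i * L i ^ 2 / (p i * (n : ℝ) ^ 2))
    (hQ' : Q' = ∑ i, v' i * G i ^ 2 / (p' i * (n : ℝ) ^ 2)) :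
    ∀ j ∈ Finset.Icc 1 J, ∀ t ∈ Finset.Icc 1 m,
      ∫ ω, ‖V j t ω - gradient favg (x j t ω)‖ ^ 2 ∂μ
        ≤ Q * (∑ k ∈ Finset.Icc 1 t, ∫ ω, ‖x j k ω - x j (k - 1) ω‖ ^ 2 ∂μ) + Q' := by
  subst hfavg hQ hQ'
  intro j hj
  have hnR : (0 : ℝ) < (n : ℝ) := by exact_mod_cast hn
  have hgrad : ∀ y, gradient (fun x => (1 / (n : ℝ)) * ∑ i, f i x) y
      = (1 / (n : ℝ)) • ∑ i, gradient (f i) y := spider_gradient_avg f hdiff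
  have hgcont : ∀ i, Continuous (gradient (f i)) := by
    intro i
    refine (LipschitzWith.of_dist_le_mul (K := Real.toNNReal (L i)) ?_).continuous
    intro a b
    rw [dist_eq_norm, dist_eq_norm]
    calc ‖gradient (f i) a - gradient (f i) b‖ ≤ L i * ‖a - b‖ := hlip i a b
      _ ≤ Real.toNNReal (L i) * ‖a - b‖ := by
          refine mul_le_mul_of_nonneg_right ?_ (norm_nonneg _)
          rw [Real.coe_toNNReal']
          exact le_max_left _ _
  have hGnn : ∀ i, 0 ≤ G i := fun i => le_trans (norm_nonneg _) (hbound i 0)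
  have hvnn : ∀ i, 0 ≤ v i := spider_v_nonneg q hq0 hq1 p hppos hpq P hPq v hsamp
  have hv'nn : ∀ i, 0 ≤ v' i :=
    spider_v_nonneg q' hq'0 hq'1 p' hp'pos hp'q P' hP'q v' hsamp'
  have hgfb : ∀ y, ‖gradient (fun x => (1 / (n : ℝ)) * ∑ i, f i x) y‖
      ≤ (1 / (n : ℝ)) * ∑ i, G i := by
    intro y
    rw [hgrad, norm_smul, Real.norm_eq_abs, abs_of_pos (by positivity : (0:ℝ) < 1 / (n:ℝ))]
    refine mul_le_mul_of_nonneg_left ?_ (by positivity)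
    exact le_trans (norm_sum_le _ _) (Finset.sum_le_sum fun i _ => hbound i _)
  have hgfcont : Continuous (fun y => gradient (fun x => (1 / (n : ℝ)) * ∑ i, f i x) y) := by
    have heq : (fun y => gradient (fun x => (1 / (n : ℝ)) * ∑ i, f i x) y)
        = fun y => (1 / (n : ℝ)) • ∑ i, gradient (f i) y := funext hgrad
    rw [heq]
    exact (continuous_finset_sum _ fun i _ => hgcont i).const_smul (1 / (n : ℝ))
  have hxaem : ∀ t ∈ Finset.Icc 0 m, AEStronglyMeasurable (x j t) μ := by
    intro t htm
    rcases Nat.eq_zero_or_pos t with ht0 | ht1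
    · subst ht0
      exact ((hmeas' j hj).mono (h𝓖' j)).aestronglyMeasurable
    · exact (((hmeas j hj t (Finset.mem_Icc.2 ⟨ht1, (Finset.mem_Icc.1 htm).2⟩)).1).mono
        (h𝓖 j t)).aestronglyMeasurable
  have hDmem : ∀ t ∈ Finset.Icc 0 m,
      MemLp (fun ω => V j t ω - gradient (fun x => (1 / (n : ℝ)) * ∑ i, f i x) (x j t ω)) 2 μ :=
    fun t htm => ((hL2 j hj t htm).2).sub
      (MemLp.of_bound (hgfcont.comp_aestronglyMeasurable (hxaem t htm)) _
        (Eventually.of_forall fun ω => hgfb _))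
  -- base case
  have hbase : ∫ ω, ‖V j 0 ω - gradient (fun x => (1 / (n : ℝ)) * ∑ i, f i x) (x j 0 ω)‖ ^ 2 ∂μ
      ≤ ∑ i, v' i * G i ^ 2 / (p' i * (n : ℝ) ^ 2) := by
    set F : Finset (Fin n) → Ω → ℝ := fun A ω =>
      ‖(∑ i ∈ A, (1 / ((n : ℝ) * p' i)) • gradient (f i) (x j 0 ω))
        - (1 / (n : ℝ)) • ∑ i, gradient (f i) (x j 0 ω)‖ ^ 2 with hF
    have hpt : ∀ ω, ‖V j 0 ω - gradient (fun x => (1 / (n : ℝ)) * ∑ i, f i x) (x j 0 ω)‖ ^ 2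
        = F (S' j ω) ω := by
      intro ω
      rw [hV0 j hj ω, hgrad]
    have hx0meas : StronglyMeasurable[𝓖' j] (x j 0) := hmeas' j hj
    have hgi : ∀ i, StronglyMeasurable[𝓖' j] (fun ω => gradient (f i) (x j 0 ω)) :=
      fun i => (hgcont i).comp_stronglyMeasurable hx0meas
    have hFmeas : ∀ A, StronglyMeasurable[𝓖' j] (F A) := by
      intro A
      exact (((Finset.stronglyMeasurable_fun_sum (f := fun i ω => (1 / ((n : ℝ) * p' i)) • gradient (f i) (x j 0 ω)) A fun i _ => (hgi i).const_smul (1 / ((n : ℝ) * p' i))).sub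
        ((Finset.stronglyMeasurable_fun_sum (f := fun i ω => gradient (f i) (x j 0 ω)) Finset.univ fun i _ => hgi i).const_smul (1 / (n : ℝ)))).norm).pow _
    set C1 : ℝ := ∑ i, (1 / ((n : ℝ) * p' i)) * G i with hC1
    set C2 : ℝ := (1 / (n : ℝ)) * ∑ i, G i with hC2
    have hFb : ∀ A ω, F A ω ≤ (C1 + C2) ^ 2 := by
      intro A ω
      rw [hF]
      refine pow_le_pow_left₀ (norm_nonneg _) (le_trans (norm_sub_le _ _) (add_le_add ?_ ?_)) 2
      · refine le_trans (norm_sum_le _ _) ?_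
        refine le_trans (Finset.sum_le_sum (f := fun i => ‖(1 / ((n : ℝ) * p' i)) • gradient (f i) (x j 0 ω)‖) (g := fun i => (1 / ((n : ℝ) * p' i)) * G i) fun i _ => ?_) ?_
        · show ‖(1 / ((n : ℝ) * p' i)) • gradient (f i) (x j 0 ω)‖ ≤ 1 / ((n : ℝ) * p' i) * G i
          rw [norm_smul, Real.norm_eq_abs,
            abs_of_pos (div_pos one_pos (mul_pos hnR (hp'pos i)))]
          exact mul_le_mul_of_nonneg_left (hbound i _)
            (le_of_lt (div_pos one_pos (mul_pos hnR (hp'pos i))))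
        · exact Finset.sum_le_sum_of_subset_of_nonneg (Finset.subset_univ A)
            fun i _ _ => mul_nonneg (le_of_lt (div_pos one_pos (mul_pos hnR (hp'pos i)))) (hGnn i)
      · rw [norm_smul, Real.norm_eq_abs, abs_of_pos (by positivity : (0:ℝ) < 1 / (n : ℝ))]
        exact mul_le_mul_of_nonneg_left
          (le_trans (norm_sum_le _ _) (Finset.sum_le_sum fun i _ => hbound i _))
          (by positivity)
    have hFnn : ∀ A ω, 0 ≤ F A ω := fun A ω => by rw [hF]; positivity
    have hFi : ∀ A, Integrable (F A) μ := by
      intro A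
      refine Integrable.mono' (integrable_const ((C1 + C2) ^ 2))
        ((hFmeas A).mono (h𝓖' j)).aestronglyMeasurable
        (Eventually.of_forall fun ω => ?_)
      rw [Real.norm_eq_abs, abs_of_nonneg (hFnn A ω)]
      exact hFb A ω
    have hptsum : ∀ ω, ∑ A : Finset (Fin n), q' A * F A ω
        ≤ ∑ i, v' i * G i ^ 2 / (p' i * (n : ℝ) ^ 2) := by
      intro ω
      refine le_trans (spider_samp_var hn q' hq'1 p' hp'pos hp'q P' hP'q v' hsamp'
        (fun i => gradient (f i) (x j 0 ω))) ?_
      refine Finset.sum_le_sum fun i _ => ?_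
      have hnum : v' i * ‖gradient (f i) (x j 0 ω)‖ ^ 2 ≤ v' i * G i ^ 2 :=
        mul_le_mul_of_nonneg_left (pow_le_pow_left₀ (norm_nonneg _) (hbound i _) 2) (hv'nn i)
      exact div_le_div_of_nonneg_right hnum (mul_pos (hp'pos i) (pow_pos hnR 2)).le
    calc ∫ ω, ‖V j 0 ω - gradient (fun x => (1 / (n : ℝ)) * ∑ i, f i x) (x j 0 ω)‖ ^ 2 ∂μ
        = ∫ ω, F (S' j ω) ω ∂μ := integral_congr_ae (Eventually.of_forall hpt)
      _ = ∑ A : Finset (Fin n), q' A * ∫ ω, F A ω ∂μ :=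
          spider_decompose (𝓖' j) μ (h𝓖' j) (S' j) (hS'meas j hj) q' (hS'law j hj) F hFmeas hFi
      _ = ∫ ω, ∑ A : Finset (Fin n), q' A * F A ω ∂μ := by
          rw [integral_finset_sum _ fun A _ => (hFi A).const_mul (q' A)]
          exact Finset.sum_congr rfl fun A _ => (integral_const_mul _ _).symm
      _ ≤ ∫ _ω, (∑ i, v' i * G i ^ 2 / (p' i * (n : ℝ) ^ 2)) ∂μ :=
          integral_mono (integrable_finset_sum _ fun A _ => (hFi A).const_mul (q' A))
            (integrable_const _) hptsum
      _ = ∑ i, v' i * G i ^ 2 / (p' i * (n : ℝ) ^ 2) := by simp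
  -- recursion step
  have hstep : ∀ t ∈ Finset.Icc 1 m,
      ∫ ω, ‖V j t ω - gradient (fun x => (1 / (n : ℝ)) * ∑ i, f i x) (x j t ω)‖ ^ 2 ∂μ
        ≤ ∫ ω, ‖V j (t-1) ω - gradient (fun x => (1 / (n : ℝ)) * ∑ i, f i x) (x j (t-1) ω)‖ ^ 2 ∂μ
          + (∑ i, v i * L i ^ 2 / (p i * (n : ℝ) ^ 2)) * ∫ ω, ‖x j t ω - x j (t-1) ω‖ ^ 2 ∂μ := by
    intro t ht
    obtain ⟨hxtmeas, hxpmeas, hVpmeas⟩ := hmeas j hj t ht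
    have htm := (Finset.mem_Icc.1 ht).2
    have htpm : t - 1 ∈ Finset.Icc 0 m :=
      Finset.mem_Icc.2 ⟨Nat.zero_le _, le_trans (Nat.sub_le t 1) htm⟩
    have htm0 : t ∈ Finset.Icc 0 m := Finset.mem_Icc.2 ⟨Nat.zero_le _, htm⟩
    set Dp : Ω → EuclideanSpace ℝ (Fin d) :=
      fun ω => V j (t-1) ω - gradient (fun x => (1 / (n : ℝ)) * ∑ i, f i x) (x j (t-1) ω)
      with hDp
    set W : Finset (Fin n) → Ω → EuclideanSpace ℝ (Fin d) := fun A ω =>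
      (∑ i ∈ A, (1 / ((n : ℝ) * p i)) •
          (gradient (f i) (x j t ω) - gradient (f i) (x j (t-1) ω)))
        - (1 / (n : ℝ)) • ∑ i, (gradient (f i) (x j t ω) - gradient (f i) (x j (t-1) ω))
      with hW
    set F : Finset (Fin n) → Ω → ℝ := fun A ω => ‖W A ω + Dp ω‖ ^ 2 with hF
    have hpt : ∀ ω, ‖V j t ω - gradient (fun x => (1 / (n : ℝ)) * ∑ i, f i x) (x j t ω)‖ ^ 2
        = F (S j t ω) ω := by
      intro ω
      have hvec : V j t ω - gradient (fun x => (1 / (n : ℝ)) * ∑ i, f i x) (x j t ω)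
          = W (S j t ω) ω + Dp ω := by
        rw [hVrec j hj t ht ω]
        simp only [hW, hDp]
        rw [hgrad, hgrad]
        simp only [smul_sub, Finset.sum_sub_distrib]
        abel
      rw [hF, hvec]
    have hgti : ∀ i, StronglyMeasurable[𝓖 j t] (fun ω => gradient (f i) (x j t ω)) :=
      fun i => (hgcont i).comp_stronglyMeasurable hxtmeas
    have hgpi : ∀ i, StronglyMeasurable[𝓖 j t] (fun ω => gradient (f i) (x j (t-1) ω)) :=
      fun i => (hgcont i).comp_stronglyMeasurable hxpmeas
    have hWmeas : ∀ A, StronglyMeasurable[𝓖 j t] (W A) := by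
      intro A
      exact (Finset.stronglyMeasurable_fun_sum (f := fun i ω => (1 / ((n : ℝ) * p i)) •
            (gradient (f i) (x j t ω) - gradient (f i) (x j (t-1) ω))) A fun i _ =>
          ((hgti i).sub (hgpi i)).const_smul (1 / ((n : ℝ) * p i))).sub
        ((Finset.stronglyMeasurable_fun_sum (f := fun i ω =>
            gradient (f i) (x j t ω) - gradient (f i) (x j (t-1) ω)) Finset.univ fun i _ =>
          (hgti i).sub (hgpi i)).const_smul (1 / (n : ℝ)))
    have hDpmeas : StronglyMeasurable[𝓖 j t] Dp :=
      hVpmeas.sub (hgfcont.comp_stronglyMeasurable hxpmeas)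
    have hFmeas : ∀ A, StronglyMeasurable[𝓖 j t] (F A) :=
      fun A => (((hWmeas A).add hDpmeas).norm).pow _
    set B : ℝ := (∑ i, (1 / ((n : ℝ) * p i)) * (2 * G i)) + (1 / (n : ℝ)) * ∑ i, (2 * G i)
      with hB
    have hgsub : ∀ i ω', ‖gradient (f i) (x j t ω') - gradient (f i) (x j (t-1) ω')‖
        ≤ 2 * G i := by
      intro i ω'
      calc ‖gradient (f i) (x j t ω') - gradient (f i) (x j (t-1) ω')‖
          ≤ ‖gradient (f i) (x j t ω')‖ + ‖gradient (f i) (x j (t-1) ω')‖ := norm_sub_le _ _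
        _ ≤ 2 * G i := by
            have := hbound i (x j t ω')
            have := hbound i (x j (t-1) ω')
            linarith
    have hWb : ∀ A ω, ‖W A ω‖ ≤ B := by
      intro A ω
      rw [hW, hB]
      refine le_trans (norm_sub_le _ _) (add_le_add ?_ ?_)
      · refine le_trans (norm_sum_le _ _) ?_
        refine le_trans (Finset.sum_le_sum
          (g := fun i => (1 / ((n : ℝ) * p i)) * (2 * G i)) fun i _ => ?_) ?_
        · show ‖(1 / ((n : ℝ) * p i)) •
              (gradient (f i) (x j t ω) - gradient (f i) (x j (t-1) ω))‖
            ≤ 1 / ((n : ℝ) * p i) * (2 * G i)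
          rw [norm_smul, Real.norm_eq_abs,
            abs_of_pos (div_pos one_pos (mul_pos hnR (hppos i)))]
          exact mul_le_mul_of_nonneg_left (hgsub i ω)
            (le_of_lt (div_pos one_pos (mul_pos hnR (hppos i))))
        · refine Finset.sum_le_sum_of_subset_of_nonneg (Finset.subset_univ A)
            fun i _ _ => mul_nonneg (le_of_lt (div_pos one_pos (mul_pos hnR (hppos i))))
              (by linarith [hGnn i])
      · rw [norm_smul, Real.norm_eq_abs, abs_of_pos (by positivity : (0:ℝ) < 1 / (n : ℝ))]
        refine mul_le_mul_of_nonneg_left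
          (le_trans (norm_sum_le _ _) (Finset.sum_le_sum fun i _ => hgsub i _))
          (by positivity)
    have hDpL2 : MemLp Dp 2 μ := hDmem (t-1) htpm
    have hDp2 : Integrable (fun ω => ‖Dp ω‖ ^ 2) μ := (hDpL2.norm).integrable_sq
    have hxL2 : MemLp (fun ω => x j t ω - x j (t-1) ω) 2 μ :=
      ((hL2 j hj t htm0).1).sub ((hL2 j hj (t-1) htpm).1)
    have hD2 : Integrable (fun ω => ‖x j t ω - x j (t-1) ω‖ ^ 2) μ := (hxL2.norm).integrable_sq
    have hFi : ∀ A, Integrable (F A) μ := by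
      intro A
      have hbd : Integrable (fun ω => 2 * B ^ 2 + 2 * ‖Dp ω‖ ^ 2) μ :=
        (integrable_const _).add (hDp2.const_mul 2)
      refine Integrable.mono' hbd ((hFmeas A).mono (h𝓖 j t)).aestronglyMeasurable
        (Eventually.of_forall fun ω => ?_)
      rw [Real.norm_eq_abs, abs_of_nonneg (by rw [hF]; positivity)]
      have h1 : ‖W A ω + Dp ω‖ ≤ B + ‖Dp ω‖ :=
        le_trans (norm_add_le _ _) (add_le_add_left (hWb A ω) _)
      calc F A ω ≤ (B + ‖Dp ω‖) ^ 2 := pow_le_pow_left₀ (norm_nonneg _) h1 2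
        _ ≤ 2 * B ^ 2 + 2 * ‖Dp ω‖ ^ 2 := by nlinarith [sq_nonneg (B - ‖Dp ω‖)]
    have hptsum : ∀ ω, ∑ A : Finset (Fin n), q A * F A ω
        ≤ (∑ i, v i * L i ^ 2 / (p i * (n : ℝ) ^ 2)) * ‖x j t ω - x j (t-1) ω‖ ^ 2
          + ‖Dp ω‖ ^ 2 := by
      intro ω
      have hWzero : ∑ A : Finset (Fin n), q A • W A ω = 0 := by
        have hmean := spider_samp_mean hn q p hppos hpq
          (fun i => gradient (f i) (x j t ω) - gradient (f i) (x j (t-1) ω))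
        calc ∑ A : Finset (Fin n), q A • W A ω
            = (∑ A : Finset (Fin n), q A • (∑ i ∈ A, (1 / ((n : ℝ) * p i)) •
                  (gradient (f i) (x j t ω) - gradient (f i) (x j (t-1) ω))))
              - (∑ A : Finset (Fin n), q A) • ((1 / (n : ℝ)) •
                  ∑ i, (gradient (f i) (x j t ω) - gradient (f i) (x j (t-1) ω))) := by
              rw [Finset.sum_smul, ← Finset.sum_sub_distrib]
              refine Finset.sum_congr rfl fun A _ => ?_
              simp only [hW]
              exact smul_sub _ _ _
          _ = 0 := by rw [hmean, hq1, one_smul, sub_self]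
      have hexp : ∑ A : Finset (Fin n), q A * F A ω
          = (∑ A : Finset (Fin n), q A * ‖W A ω‖ ^ 2)
            + 2 * (inner ℝ (∑ A : Finset (Fin n), q A • W A ω) (Dp ω) : ℝ)
            + (∑ A : Finset (Fin n), q A) * ‖Dp ω‖ ^ 2 := by
        rw [Finset.sum_congr rfl (fun A _ => show q A * F A ω
            = q A * ‖W A ω‖ ^ 2 + 2 * (inner ℝ (q A • W A ω) (Dp ω) : ℝ) + q A * ‖Dp ω‖ ^ 2 by
          rw [hF]
          show q A * ‖W A ω + Dp ω‖ ^ 2 = _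
          rw [norm_add_sq_real, real_inner_smul_left]
          ring)]
        rw [Finset.sum_add_distrib, Finset.sum_add_distrib, sum_inner, ← Finset.mul_sum,
          ← Finset.sum_mul]
      rw [hexp, hWzero, inner_zero_left, hq1]
      have hvar : ∑ A : Finset (Fin n), q A * ‖W A ω‖ ^ 2
          ≤ (∑ i, v i * L i ^ 2 / (p i * (n : ℝ) ^ 2)) * ‖x j t ω - x j (t-1) ω‖ ^ 2 := by
        calc ∑ A : Finset (Fin n), q A * ‖W A ω‖ ^ 2
            ≤ ∑ i, v i * ‖gradient (f i) (x j t ω) - gradient (f i) (x j (t-1) ω)‖ ^ 2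
                / (p i * (n : ℝ) ^ 2) := by
              simpa [hW] using spider_samp_var hn q hq1 p hppos hpq P hPq v hsamp
                (fun i => gradient (f i) (x j t ω) - gradient (f i) (x j (t-1) ω))
          _ ≤ ∑ i, v i * (L i * ‖x j t ω - x j (t-1) ω‖) ^ 2 / (p i * (n : ℝ) ^ 2) := by
              refine Finset.sum_le_sum fun i _ => ?_
              refine div_le_div_of_nonneg_right
                (mul_le_mul_of_nonneg_left
                  (pow_le_pow_left₀ (norm_nonneg _) (hlip i _ _) 2) (hvnn i))
                (mul_pos (hppos i) (pow_pos hnR 2)).le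
          _ = (∑ i, v i * L i ^ 2 / (p i * (n : ℝ) ^ 2)) * ‖x j t ω - x j (t-1) ω‖ ^ 2 := by
              rw [Finset.sum_mul]
              refine Finset.sum_congr rfl fun i _ => ?_
              rw [mul_pow]
              ring
      linarith [hvar]
    calc ∫ ω, ‖V j t ω - gradient (fun x => (1 / (n : ℝ)) * ∑ i, f i x) (x j t ω)‖ ^ 2 ∂μ
        = ∫ ω, F (S j t ω) ω ∂μ := integral_congr_ae (Eventually.of_forall hpt)
      _ = ∑ A : Finset (Fin n), q A * ∫ ω, F A ω ∂μ :=
          spider_decompose (𝓖 j t) μ (h𝓖 j t) (S j t) (hSmeas j hj t ht) q (hSlaw j hj t ht)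
            F hFmeas hFi
      _ = ∫ ω, ∑ A : Finset (Fin n), q A * F A ω ∂μ := by
          rw [integral_finset_sum _ fun A _ => (hFi A).const_mul (q A)]
          exact Finset.sum_congr rfl fun A _ => (integral_const_mul _ _).symm
      _ ≤ ∫ ω, ((∑ i, v i * L i ^ 2 / (p i * (n : ℝ) ^ 2)) * ‖x j t ω - x j (t-1) ω‖ ^ 2
            + ‖Dp ω‖ ^ 2) ∂μ :=
          integral_mono (integrable_finset_sum _ fun A _ => (hFi A).const_mul (q A))
            ((hD2.const_mul _).add hDp2) hptsum
      _ = ∫ ω, ‖Dp ω‖ ^ 2 ∂μ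
            + (∑ i, v i * L i ^ 2 / (p i * (n : ℝ) ^ 2))
              * ∫ ω, ‖x j t ω - x j (t-1) ω‖ ^ 2 ∂μ := by
          rw [integral_add (hD2.const_mul _) hDp2, integral_const_mul]
          ring
  -- induction
  intro t ht
  obtain ⟨ht1, htm⟩ := Finset.mem_Icc.1 ht
  clear ht
  induction t, ht1 using Nat.le_induction with
  | base =>
      have h1 := hstep 1 (Finset.mem_Icc.2 ⟨le_refl 1, htm⟩)
      simp only [Nat.sub_self] at h1
      rw [Finset.Icc_self, Finset.sum_singleton]
      simp only [Nat.sub_self]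
      linarith [hbase]
  | succ t ht1 IH =>
      have htm' : t ≤ m := le_trans (Nat.le_succ t) htm
      have h1 := hstep (t + 1) (Finset.mem_Icc.2 ⟨Nat.le_add_left 1 t, htm⟩)
      simp only [Nat.add_sub_cancel] at h1
      have h2 := IH htm'
      rw [Finset.sum_Icc_succ_top (Nat.le_add_left 1 t)]
      simp only [Nat.add_sub_cancel]
      linarith
end

section
/- (Lemma D.1, variance bound) Let ξ_1, …, ξ_n ∈ ℝ^d, let S be a proper random subset of {1,…,n} with p_i = Prob(i ∈ S) > 0 and pairwise probabilities P_{ij} = Prob({i,j} ⊆ S), and suppose v ∈ ℝ^n satisfies the sampling condition P − ppᵀ ⪯ Diag(p∘v), i.e. ∑_{i,j}(P_{ij} − p_i p_j) u_i u_j ≤ ∑_i p_i v_i u_i² for all u ∈ ℝ^n. Then E[‖∑_{i∈S} ξ_i/(n p_i) − ξ̄‖²] ≤ (1/n²)∑_{i=1}^n (v_i/p_i)‖ξ_i‖², where ξ̄ = (1/n)∑_{i=1}^n ξ_i. -/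
open MeasureTheory Finset

private def ind {n : ℕ} (i : Fin n) (A : Finset (Fin n)) : ℝ := if i ∈ A then 1 else 0

private lemma integral_comp_finset {Ω : Type*} [MeasurableSpace Ω]
    (μ : Measure Ω) [IsProbabilityMeasure μ] {n : ℕ}
    (S : Ω → Finset (Fin n)) (hS : ∀ A, MeasurableSet {ω | S ω = A})
    (g : Finset (Fin n) → ℝ) :
    ∫ ω, g (S ω) ∂μ = ∑ A, (μ {ω | S ω = A}).toReal * g A := by
  have heq : ∀ ω, g (S ω) = ∑ A, Set.indicator {ω' | S ω' = A} (fun _ => g A) ω := by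
    intro ω
    rw [Finset.sum_eq_single (S ω)]
    · simp [Set.indicator]
    · intro A _ hne
      simp only [Set.indicator, Set.mem_setOf_eq]
      rw [if_neg]
      intro h; exact hne h.symm
    · simp
  calc ∫ ω, g (S ω) ∂μ = ∫ ω, ∑ A, Set.indicator {ω' | S ω' = A} (fun _ => g A) ω ∂μ := by
        exact integral_congr_ae (Filter.Eventually.of_forall heq)
    _ = ∑ A, ∫ ω, Set.indicator {ω' | S ω' = A} (fun _ => g A) ω ∂μ := by
        apply integral_finset_sum
        intro A _
        exact (integrable_const (g A)).indicator (hS A)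
    _ = ∑ A, (μ {ω | S ω = A}).toReal * g A := by
        apply Finset.sum_congr rfl
        intro A _
        rw [integral_indicator_const _ (hS A)]
        simp [mul_comm, Measure.real]

private lemma scalar_lemma {n : ℕ} (w : Finset (Fin n) → ℝ) (p : Fin n → ℝ)
    (P : Fin n → Fin n → ℝ)
    (hw1 : ∑ A, w A = 1)
    (hwp : ∀ i, p i = ∑ A, w A * ind i A)
    (hwP : ∀ i j, P i j = ∑ A, w A * (ind i A * ind j A))
    (x : Fin n → ℝ) :
    ∑ A, w A * (∑ i ∈ A, x i - ∑ i, p i * x i) ^ 2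
      = ∑ i, ∑ j, (P i j - p i * p j) * x i * x j := by
  have hmem : ∀ A : Finset (Fin n), ∑ i ∈ A, x i = ∑ i, ind i A * x i := by
    intro A
    simp [ind, ite_mul, Finset.sum_ite_mem]
  have hcov : ∀ i j, ∑ A, w A * ((ind i A - p i) * (ind j A - p j)) = P i j - p i * p j := by
    intro i j
    have expand : ∀ A, w A * ((ind i A - p i) * (ind j A - p j)) =
        w A * (ind i A * ind j A) - p j * (w A * ind i A) - p i * (w A * ind j A)
          + (p i * p j) * w A := by
      intro A; ring
    rw [Finset.sum_congr rfl (fun A _ => expand A)]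
    rw [Finset.sum_add_distrib, Finset.sum_sub_distrib, Finset.sum_sub_distrib,
      ← Finset.mul_sum, ← Finset.mul_sum, ← Finset.mul_sum, ← hwp, ← hwp, ← hwP, hw1]
    ring
  calc ∑ A, w A * (∑ i ∈ A, x i - ∑ i, p i * x i) ^ 2
      = ∑ A, w A * (∑ i, (ind i A - p i) * x i) ^ 2 := by
        apply Finset.sum_congr rfl; intro A _
        rw [hmem A, ← Finset.sum_sub_distrib]
        congr 1; congr 1
        apply Finset.sum_congr rfl; intro i _; ring
    _ = ∑ A, ∑ i, ∑ j, w A * (((ind i A - p i) * x i) * ((ind j A - p j) * x j)) := by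
        apply Finset.sum_congr rfl; intro A _
        rw [sq, Finset.sum_mul_sum, Finset.mul_sum]
        apply Finset.sum_congr rfl; intro i _
        rw [Finset.mul_sum]
    _ = ∑ i, ∑ j, ∑ A, w A * (((ind i A - p i) * x i) * ((ind j A - p j) * x j)) := by
        rw [Finset.sum_comm]
        apply Finset.sum_congr rfl; intro i _
        rw [Finset.sum_comm]
    _ = ∑ i, ∑ j, (P i j - p i * p j) * x i * x j := by
        apply Finset.sum_congr rfl; intro i _
        apply Finset.sum_congr rfl; intro j _
        rw [← hcov i j, Finset.sum_mul, Finset.sum_mul]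
        apply Finset.sum_congr rfl; intro A _; ring

/-- Lemma D.1, variance bound. Let `ξ₁,…,ξₙ ∈ ℝ^d`, let `S` be a proper
random subset of `{1,…,n}` with inclusion probabilities `pᵢ = Prob(i ∈ S) > 0` and pairwise
probabilities `Pᵢⱼ = Prob({i,j} ⊆ S)`, and suppose `v ∈ ℝⁿ` satisfies the sampling condition
`P − ppᵀ ⪯ Diag(p∘v)`, i.e. `∑ᵢⱼ (Pᵢⱼ − pᵢpⱼ) uᵢ uⱼ ≤ ∑ᵢ pᵢ vᵢ uᵢ²` for all `u`. Then
`E[‖∑_{i∈S} ξᵢ/(n pᵢ) − ξ̄‖²] ≤ (1/n²)∑ᵢ (vᵢ/pᵢ)‖ξᵢ‖²`. -/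
theorem arbitrary_sampling_variance_bound {Ω : Type*} [m0 : MeasurableSpace Ω]
    (μ : Measure Ω) [IsProbabilityMeasure μ]
    {d n : ℕ} (hn : 0 < n) (ξ : Fin n → EuclideanSpace ℝ (Fin d))
    (S : Ω → Finset (Fin n))
    (hSmeas : ∀ A : Finset (Fin n), MeasurableSet {ω | S ω = A})
    (p : Fin n → ℝ) (hp : ∀ i, p i = (μ {ω | i ∈ S ω}).toReal)
    (hproper : ∀ i, 0 < p i)
    (P : Fin n → Fin n → ℝ)
    (hP : ∀ i j, P i j = (μ {ω | i ∈ S ω ∧ j ∈ S ω}).toReal)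
    (v : Fin n → ℝ)
    (hsamp : ∀ u : Fin n → ℝ,
      ∑ i, ∑ j, (P i j - p i * p j) * u i * u j ≤ ∑ i, p i * v i * u i ^ 2) :
    ∫ ω, ‖(∑ i ∈ S ω, (1 / ((n : ℝ) * p i)) • ξ i) - (1 / (n : ℝ)) • ∑ i, ξ i‖ ^ 2 ∂μ
      ≤ (1 / (n : ℝ) ^ 2) * ∑ i, (v i / p i) * ‖ξ i‖ ^ 2 := by
  have hn' : (n : ℝ) ≠ 0 := Nat.cast_ne_zero.mpr hn.ne'
  have hp' : ∀ i, p i ≠ 0 := fun i => (hproper i).ne'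
  set w : Finset (Fin n) → ℝ := fun A => (μ {ω | S ω = A}).toReal with hw
  -- measurability of event sets
  have hmeasi : ∀ i : Fin n, MeasurableSet {ω | i ∈ S ω} := by
    intro i
    have : {ω | i ∈ S ω} = ⋃ A ∈ Finset.univ.filter (fun A : Finset (Fin n) => i ∈ A),
        {ω | S ω = A} := by
      ext ω
      simp only [Set.mem_setOf_eq, Set.mem_iUnion, Finset.mem_filter, Finset.mem_univ, true_and]
      exact ⟨fun h => ⟨S ω, h, rfl⟩, fun ⟨A, hA, hEq⟩ => hEq ▸ hA⟩
    rw [this]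
    exact (Finset.univ.filter _).measurableSet_biUnion (fun A _ => hSmeas A)
  have hmeasij : ∀ i j : Fin n, MeasurableSet {ω | i ∈ S ω ∧ j ∈ S ω} := by
    intro i j
    exact (hmeasi i).inter (hmeasi j)
  -- w sums to 1
  have hw1 : ∑ A, w A = 1 := by
    have h := integral_comp_finset μ S hSmeas (fun _ => (1 : ℝ))
    simpa using h.symm
  -- p in terms of w
  have hwp : ∀ i, p i = ∑ A, w A * ind i A := by
    intro i
    have h1 : (fun ω => ind i (S ω)) = Set.indicator {ω | i ∈ S ω} (fun _ => (1:ℝ)) := by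
      funext ω
      simp [ind, Set.indicator]
    have h2 := integral_comp_finset μ S hSmeas (ind i)
    rw [h1] at h2
    rw [integral_indicator_const _ (hmeasi i)] at h2
    rw [hp i, ← h2]
    simp [Measure.real]
  -- P in terms of w
  have hwP : ∀ i j, P i j = ∑ A, w A * (ind i A * ind j A) := by
    intro i j
    have h1 : (fun ω => ind i (S ω) * ind j (S ω))
        = Set.indicator {ω | i ∈ S ω ∧ j ∈ S ω} (fun _ => (1:ℝ)) := by
      funext ω
      by_cases hi : i ∈ S ω <;> by_cases hj : j ∈ S ω <;>
        simp [ind, Set.indicator, hi, hj]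
    have h2 := integral_comp_finset μ S hSmeas (fun A => ind i A * ind j A)
    rw [show (fun ω => (fun A => ind i A * ind j A) (S ω))
        = (fun ω => ind i (S ω) * ind j (S ω)) from rfl, h1] at h2
    rw [integral_indicator_const _ (hmeasij i j)] at h2
    rw [hP i j, ← h2]
    simp [Measure.real]
  -- norm squared as sum of squares of coordinates
  have hns : ∀ y : EuclideanSpace ℝ (Fin d), ‖y‖ ^ 2 = ∑ k, y k ^ 2 := by
    intro y
    rw [EuclideanSpace.norm_eq, Real.sq_sqrt (by positivity)]
    simp [sq_abs]
  -- the coordinates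
  set x : Fin d → Fin n → ℝ := fun k i => (1 / ((n : ℝ) * p i)) * ξ i k with hx
  have hcomp : ∀ A : Finset (Fin n),
      ‖(∑ i ∈ A, (1 / ((n : ℝ) * p i)) • ξ i) - (1 / (n : ℝ)) • ∑ i, ξ i‖ ^ 2
        = ∑ k, (∑ i ∈ A, x k i - ∑ i, p i * x k i) ^ 2 := by
    intro A
    have hsA : ∀ (B : Finset (Fin n)) (f : Fin n → EuclideanSpace ℝ (Fin d)) (k : Fin d),
        (∑ i ∈ B, f i) k = ∑ i ∈ B, f i k := fun B f k => by rw [WithLp.ofLp_sum, Finset.sum_apply]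
    rw [hns]
    apply Finset.sum_congr rfl
    intro k _
    congr 1
    have h1 : ((∑ i ∈ A, (1 / ((n : ℝ) * p i)) • ξ i) - (1 / (n : ℝ)) • ∑ i, ξ i) k
        = (∑ i ∈ A, (1 / ((n : ℝ) * p i)) * ξ i k) - (1 / (n : ℝ)) * (∑ i, ξ i) k := by
      simp [hsA]
    rw [h1]
    congr 1
    rw [hsA univ ξ k, Finset.mul_sum]
    apply Finset.sum_congr rfl
    intro i _
    rw [hx]
    field_simp [hp' i, hn']
  -- main computation
  rw [integral_comp_finset μ S hSmeas
    (fun A => ‖(∑ i ∈ A, (1 / ((n : ℝ) * p i)) • ξ i) - (1 / (n : ℝ)) • ∑ i, ξ i‖ ^ 2)]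
  calc ∑ A, w A * ‖(∑ i ∈ A, (1 / ((n : ℝ) * p i)) • ξ i) - (1 / (n : ℝ)) • ∑ i, ξ i‖ ^ 2
      = ∑ A, ∑ k, w A * (∑ i ∈ A, x k i - ∑ i, p i * x k i) ^ 2 := by
        apply Finset.sum_congr rfl; intro A _
        rw [hcomp A, Finset.mul_sum]
    _ = ∑ k, ∑ A, w A * (∑ i ∈ A, x k i - ∑ i, p i * x k i) ^ 2 := Finset.sum_comm
    _ = ∑ k, ∑ i, ∑ j, (P i j - p i * p j) * x k i * x k j := by
        apply Finset.sum_congr rfl; intro k _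
        exact scalar_lemma w p P hw1 hwp hwP (x k)
    _ ≤ ∑ k, ∑ i, p i * v i * x k i ^ 2 := by
        apply Finset.sum_le_sum
        intro k _
        exact hsamp (x k)
    _ = ∑ i, p i * v i * (1 / ((n : ℝ) * p i)) ^ 2 * ∑ k, ξ i k ^ 2 := by
        rw [Finset.sum_comm]
        apply Finset.sum_congr rfl; intro i _
        rw [Finset.mul_sum]
        apply Finset.sum_congr rfl; intro k _
        rw [hx]; ring
    _ = (1 / (n : ℝ) ^ 2) * ∑ i, (v i / p i) * ‖ξ i‖ ^ 2 := by
        rw [Finset.mul_sum]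
        apply Finset.sum_congr rfl; intro i _
        rw [hns (ξ i)]
        have : p i * v i * (1 / ((n : ℝ) * p i)) ^ 2 = 1 / (n : ℝ) ^ 2 * (v i / p i) := by
          field_simp [hp' i, hn']
        rw [this]
        ring
end

section
/- (Uniform sampling admits v_i = (n−b)/(n−1)) Let n ≥ 2 and 1 ≤ b ≤ n, and let P be the n×n matrix with diagonal entries P_{ii} = b/n and off-diagonal entries P_{ij} = b(b−1)/(n(n−1)) (the probability matrix of a uniformly random size-b subset of {1,…,n}), and let p = (b/n, …, b/n). Then P − ppᵀ ⪯ Diag(p∘v) with v_i = (n−b)/(n−1) for all i; explicitly, for every u ∈ ℝ^n, ∑_{i,j}(P_{ij} − p_i p_j) u_i u_j ≤ (b(n−b)/(n(n−1)))·∑_{i=1}^n u_i². -/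
open Finset

/-- uniform sampling admits `vᵢ = (n−b)/(n−1)`. For the probability matrix
of a uniformly random size-`b` subset of `{1,…,n}` (`Pᵢᵢ = b/n`, `Pᵢⱼ = b(b−1)/(n(n−1))` for
`i ≠ j`) and `p = (b/n,…,b/n)`, one has `P − ppᵀ ⪯ Diag(p∘v)` with `vᵢ = (n−b)/(n−1)`:
explicitly, `∑ᵢⱼ (Pᵢⱼ − pᵢpⱼ) uᵢ uⱼ ≤ (b(n−b)/(n(n−1))) ∑ᵢ uᵢ²` for every `u ∈ ℝⁿ`. -/
theorem uniform_sampling_condition (n b : ℕ) (hn : 2 ≤ n) (hb1 : 1 ≤ b) (hbn : b ≤ n)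
    (P : Fin n → Fin n → ℝ)
    (hP : ∀ i j : Fin n, P i j =
      if i = j then (b : ℝ) / n else (b : ℝ) * ((b : ℝ) - 1) / ((n : ℝ) * ((n : ℝ) - 1)))
    (p : Fin n → ℝ) (hp : ∀ i, p i = (b : ℝ) / n)
    (u : Fin n → ℝ) :
    ∑ i, ∑ j, (P i j - p i * p j) * u i * u j
      ≤ ((b : ℝ) * ((n : ℝ) - (b : ℝ)) / ((n : ℝ) * ((n : ℝ) - 1))) * ∑ i, u i ^ 2 := by
  have hn0 : (n : ℝ) ≠ 0 := by positivity
  have hn2 : (2 : ℝ) ≤ (n : ℝ) := by exact_mod_cast hn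
  have hn1 : (n : ℝ) - 1 ≠ 0 := by nlinarith
  have key : ∀ i j : Fin n, (P i j - p i * p j) * u i * u j
      = (if i = j then ((b : ℝ) * ((n : ℝ) - (b : ℝ)) / ((n : ℝ) * ((n : ℝ) - 1))) * u i ^ 2
          else 0)
        - ((b : ℝ) * ((n : ℝ) - (b : ℝ)) / ((n : ℝ) ^ 2 * ((n : ℝ) - 1))) * (u i * u j) := by
    intro i j
    rw [hP, hp, hp]
    by_cases h : i = j
    · subst h
      rw [if_pos rfl, if_pos rfl]
      field_simp
    · simp only [if_neg h]
      field_simp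
      ring
  have hsum : ∑ i, ∑ j, (P i j - p i * p j) * u i * u j
      = ((b : ℝ) * ((n : ℝ) - (b : ℝ)) / ((n : ℝ) * ((n : ℝ) - 1))) * ∑ i, u i ^ 2
        - ((b : ℝ) * ((n : ℝ) - (b : ℝ)) / ((n : ℝ) ^ 2 * ((n : ℝ) - 1)))
          * ((∑ i, u i) * (∑ j, u j)) := by
    simp only [key, Finset.sum_sub_distrib]
    congr 1
    · rw [Finset.mul_sum]
      refine Finset.sum_congr rfl fun i _ => ?_
      simp [Finset.sum_ite_eq]
    · rw [Finset.sum_mul_sum, Finset.mul_sum]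
      exact Finset.sum_congr rfl fun i _ => by rw [Finset.mul_sum]
  rw [hsum]
  have hβ0 : 0 ≤ ((b : ℝ) * ((n : ℝ) - (b : ℝ)) / ((n : ℝ) ^ 2 * ((n : ℝ) - 1))) := by
    apply div_nonneg
    · have h1 : (b : ℝ) ≤ (n : ℝ) := by exact_mod_cast hbn
      nlinarith [Nat.cast_nonneg (α := ℝ) b]
    · nlinarith
  nlinarith [mul_nonneg hβ0 (sq_nonneg (∑ i, u i)), sq_nonneg (∑ i, u i)]
end

section
/- (Optimal independent-sampling probabilities, similar-G case) Let G_1, …, G_n > 0, let b be a real number with 1 ≤ b ≤ n, and assume b·max_i G_i ≤ ∑_{j=1}^n G_j. Define p_i = b·G_i/∑_{j=1}^n G_j. Then p ∈ (0,1]^n with ∑_{i=1}^n p_i = b, and p minimizes the objective (1/n²)∑_{i=1}^n G_i²/q_i over all q ∈ (0,1]^n with ∑_{i=1}^n q_i = b; that is, for every such q, (1/n²)∑_{i=1}^n G_i²/p_i = (1/(n²b))·(∑_{i=1}^n G_i)² ≤ (1/n²)∑_{i=1}^n G_i²/q_i. -/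
open Finset

/-- optimal independent-sampling probabilities, similar-`G` case.
Let `G₁,…,Gₙ > 0`, `1 ≤ b ≤ n` real, with `b·maxᵢ Gᵢ ≤ ∑ⱼ Gⱼ`, and `pᵢ = b·Gᵢ/∑ⱼ Gⱼ`.
Then `p ∈ (0,1]ⁿ`, `∑ᵢ pᵢ = b`, the objective value at `p` is
`(1/n²)∑ᵢ Gᵢ²/pᵢ = (1/(n²b))(∑ᵢ Gᵢ)²`, and `p` minimizes `(1/n²)∑ᵢ Gᵢ²/qᵢ` over all
`q ∈ (0,1]ⁿ` with `∑ᵢ qᵢ = b`. -/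
theorem optimal_independent_sampling {n : ℕ} (hn : 0 < n)
    (G : Fin n → ℝ) (hG : ∀ i, 0 < G i)
    (b : ℝ) (hb1 : 1 ≤ b) (hbn : b ≤ n)
    (hsim : ∀ i, b * G i ≤ ∑ j, G j)
    (p : Fin n → ℝ) (hp : ∀ i, p i = b * G i / ∑ j, G j) :
    (∀ i, p i ∈ Set.Ioc (0 : ℝ) 1) ∧
    (∑ i, p i = b) ∧
    ((1 / (n : ℝ) ^ 2) * ∑ i, G i ^ 2 / p i
        = (1 / ((n : ℝ) ^ 2 * b)) * (∑ i, G i) ^ 2) ∧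
    (∀ q : Fin n → ℝ, (∀ i, q i ∈ Set.Ioc (0 : ℝ) 1) → (∑ i, q i = b) →
      (1 / (n : ℝ) ^ 2) * ∑ i, G i ^ 2 / p i
        ≤ (1 / (n : ℝ) ^ 2) * ∑ i, G i ^ 2 / q i) := by
  have hS : 0 < ∑ j, G j := Finset.sum_pos (fun i _ => hG i) (univ_nonempty_iff.2 ⟨⟨0, hn⟩⟩)
  have hb0 : (0:ℝ) < b := lt_of_lt_of_le one_pos hb1
  have hmem : ∀ i, p i ∈ Set.Ioc (0 : ℝ) 1 := by
    intro i
    rw [hp i]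
    constructor
    · exact div_pos (mul_pos hb0 (hG i)) hS
    · rw [div_le_one hS]; simpa using hsim i
  have hsum : ∑ i, p i = b := by
    simp_rw [hp, div_eq_mul_inv, ← Finset.sum_mul, ← Finset.mul_sum]
    field_simp
  have hval : ∑ i, G i ^ 2 / p i = (∑ i, G i) ^ 2 / b := by
    have : ∀ i, G i ^ 2 / p i = G i * ((∑ j, G j) / b) := by
      intro i
      rw [hp i]
      have hGi := (hG i).ne'
      field_simp
    rw [Finset.sum_congr rfl (fun i _ => this i), ← Finset.sum_mul]
    field_simp
  refine ⟨hmem, hsum, ?_, ?_⟩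
  · rw [hval]; field_simp
  · intro q hq hqsum
    have key : (∑ i, G i) ^ 2 / b ≤ ∑ i, G i ^ 2 / q i := by
      rw [← hqsum]
      exact sq_sum_div_le_sum_sq_div _ _ (fun i _ => (hq i).1)
    rw [hval]
    have hn2 : (0:ℝ) < (n:ℝ)^2 := by positivity
    apply mul_le_mul_of_nonneg_left key (by positivity)
end
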